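/- arXiv:math/0207018 — 12 statements merged into one kernel-verified Lean document; each statement's English description precedes it below -/
import Mathlib

section
/- For any integer a ≥ 2, the sum over all nontrivial a-th roots of unity ξ of 1/((ξ-1)(ξ̄-1)) equals (a²-1)/12. -/
open Finset Polynomial

private lemma sum_j_mul_pow (x : ℂ) (n : ℕ) :
    (x - 1) ^ 2 * ∑ j ∈ range n, (j : ℂ) * x ^ j
      = ((n : ℂ) - 1) * x ^ (n + 1) - (n : ℂ) * x ^ n + x := by
  induction n with
  | zero => simp
  | succ n ih =>
    rw [sum_range_succ, mul_add, ih]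
    push_cast
    ring

private lemma sum_j_sq_mul_pow (x : ℂ) (n : ℕ) :
    (x - 1) ^ 3 * ∑ j ∈ range n, (j : ℂ) ^ 2 * x ^ j
      = ((n : ℂ) - 1) ^ 2 * x ^ (n + 2) - (2 * (n : ℂ) ^ 2 - 2 * n - 1) * x ^ (n + 1)
        + (n : ℂ) ^ 2 * x ^ n - x ^ 2 - x := by
  induction n with
  | zero => simp
  | succ n ih =>
    rw [sum_range_succ, mul_add, ih]
    push_cast
    ring

private lemma sum_range_cast (n : ℕ) :
    ∑ j ∈ range n, (j : ℂ) = (n : ℂ) * ((n : ℂ) - 1) / 2 := by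
  induction n with
  | zero => simp
  | succ n ih => rw [sum_range_succ, ih]; push_cast; ring

private lemma sum_range_sq_cast (n : ℕ) :
    ∑ j ∈ range n, (j : ℂ) ^ 2 = (n : ℂ) * ((n : ℂ) - 1) * (2 * (n : ℂ) - 1) / 6 := by
  induction n with
  | zero => simp
  | succ n ih => rw [sum_range_succ, ih]; push_cast; ring

private lemma pointwise_eq (a : ℕ) (ha : 2 ≤ a) (ξ : ℂ) (hξa : ξ ^ a = 1) (hξ1 : ξ ≠ 1) :
    1 / ((ξ - 1) * ((starRingEnd ℂ) ξ - 1))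
      = ∑ j ∈ range a, (-(j : ℂ) / 2 + (j : ℂ) ^ 2 / (2 * a)) * ξ ^ j := by
  have ha0 : (a : ℂ) ≠ 0 := Nat.cast_ne_zero.mpr (by omega)
  have hξ0 : ξ ≠ 0 := by
    intro h; rw [h, zero_pow (by omega)] at hξa; exact zero_ne_one hξa
  have hw : ξ - 1 ≠ 0 := sub_ne_zero.mpr hξ1
  have hnorm : ‖ξ‖ = 1 := Complex.norm_eq_one_of_pow_eq_one hξa (by omega)
  have hconj : (starRingEnd ℂ) ξ = ξ⁻¹ := (Complex.inv_eq_conj hnorm).symm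
  have hinv1 : ξ⁻¹ - 1 ≠ 0 :=
    sub_ne_zero.mpr fun h => hξ1 (by rw [← inv_inv ξ, h, inv_one])
  -- closed forms for the two power sums
  have e1 := sum_j_mul_pow ξ a
  have e2 := sum_j_sq_mul_pow ξ a
  rw [pow_succ ξ a, hξa, one_mul] at e1
  rw [pow_add ξ a 2, pow_add ξ a 1, hξa, one_mul, one_mul, pow_one] at e2
  set S1 := ∑ j ∈ range a, (j : ℂ) * ξ ^ j with hS1def
  set S2 := ∑ j ∈ range a, (j : ℂ) ^ 2 * ξ ^ j with hS2def
  have hS1 : S1 * (ξ - 1) = (a : ℂ) := by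
    apply mul_left_cancel₀ hw
    linear_combination e1
  have hS2 : S2 * (ξ - 1) ^ 2 = (a : ℂ) * ((a : ℂ) - 2) * ξ - (a : ℂ) ^ 2 := by
    apply mul_left_cancel₀ hw
    linear_combination e2
  have hsplit : ∑ j ∈ range a, (-(j : ℂ) / 2 + (j : ℂ) ^ 2 / (2 * a)) * ξ ^ j
      = -(1 / 2) * S1 + (1 / (2 * a)) * S2 := by
    rw [hS1def, hS2def, mul_sum, mul_sum, ← sum_add_distrib]
    exact sum_congr rfl fun j _ => by field_simp <;> ring
  have hden : (ξ - 1) * (ξ⁻¹ - 1) = -(ξ - 1) ^ 2 / ξ := by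
    field_simp
    ring
  rw [hconj, hsplit, hden, one_div_div, div_eq_iff (neg_ne_zero.mpr (pow_ne_zero 2 hw))]
  have haa : (a : ℂ) * (a : ℂ)⁻¹ = 1 := mul_inv_cancel₀ ha0
  linear_combination (-(ξ - 1) / 2) * hS1 + (1 / (2 * (a : ℂ))) * hS2
    + (-ξ + ξ * (a : ℂ) / 2 - (a : ℂ) / 2) * haa

private lemma sum_pow_roots_eq_zero (a j : ℕ) (hj0 : 0 < j) (hja : j < a) :
    ∑ ξ ∈ nthRootsFinset a (1 : ℂ), ξ ^ j = 0 := by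
  have ha0 : a ≠ 0 := by omega
  haveI : NeZero a := ⟨ha0⟩
  set ζ := Complex.exp (2 * Real.pi * Complex.I / a) with hζdef
  have hζ : IsPrimitiveRoot ζ a := Complex.isPrimitiveRoot_exp a ha0
  have himg : nthRootsFinset a (1 : ℂ) = (range a).image (ζ ^ ·) := by
    ext x
    simp only [mem_image, mem_range, Polynomial.mem_nthRootsFinset (Nat.pos_of_ne_zero ha0)]
    constructor
    · intro hx
      obtain ⟨i, hi, hix⟩ := hζ.eq_pow_of_pow_eq_one hx
      exact ⟨i, hi, hix⟩
    · rintro ⟨i, hi, rfl⟩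
      show (ζ ^ i) ^ a = 1
      rw [← pow_mul, mul_comm, pow_mul, hζ.pow_eq_one, one_pow]
  rw [himg, sum_image (fun x hx y hy h => hζ.pow_inj (mem_range.1 hx) (mem_range.1 hy) h)]
  have : ∀ k ∈ range a, (ζ ^ k) ^ j = (ζ ^ j) ^ k := fun k _ => by
    rw [← pow_mul, ← pow_mul, mul_comm]
  rw [sum_congr rfl this, geom_sum_eq (hζ.pow_ne_one_of_pos_of_lt hj0.ne' hja)]
  rw [← pow_mul, mul_comm, pow_mul, hζ.pow_eq_one, one_pow, sub_self, zero_div]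

theorem sum_inv_roots_of_unity_sq (a : ℕ) (ha : 2 ≤ a) :
    ∑ ξ ∈ (Polynomial.nthRootsFinset a (1 : ℂ)).erase 1,
      1 / ((ξ - 1) * ((starRingEnd ℂ) ξ - 1)) = ((a : ℂ) ^ 2 - 1) / 12 := by
  have ha0 : 0 < a := by omega
  have haC : (a : ℂ) ≠ 0 := Nat.cast_ne_zero.mpr (by omega)
  have h1 : ∀ ξ ∈ (nthRootsFinset a (1 : ℂ)).erase 1,
      1 / ((ξ - 1) * ((starRingEnd ℂ) ξ - 1))
        = ∑ j ∈ range a, (-(j : ℂ) / 2 + (j : ℂ) ^ 2 / (2 * a)) * ξ ^ j := by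
    intro ξ hξ
    rw [Finset.mem_erase, Polynomial.mem_nthRootsFinset ha0] at hξ
    exact pointwise_eq a ha ξ hξ.2 hξ.1
  rw [Finset.sum_congr rfl h1, Finset.sum_comm]
  have h2 : ∀ j ∈ range a,
      ∑ ξ ∈ (nthRootsFinset a (1 : ℂ)).erase 1, (-(j : ℂ) / 2 + (j : ℂ) ^ 2 / (2 * a)) * ξ ^ j
        = -(-(j : ℂ) / 2 + (j : ℂ) ^ 2 / (2 * a)) := by
    intro j hj
    rw [← Finset.mul_sum, Finset.sum_erase_eq_sub (Polynomial.one_mem_nthRootsFinset ha0),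
      one_pow]
    rcases Nat.eq_zero_or_pos j with h0 | h0
    · subst h0; simp
    · rw [sum_pow_roots_eq_zero a j h0 (mem_range.1 hj)]; ring
  rw [Finset.sum_congr rfl h2, Finset.sum_neg_distrib]
  have h3 : ∑ j ∈ range a, (-(j : ℂ) / 2 + (j : ℂ) ^ 2 / (2 * a))
      = -(1 / 2) * (∑ j ∈ range a, (j : ℂ)) + (1 / (2 * a)) * ∑ j ∈ range a, (j : ℂ) ^ 2 := by
    rw [mul_sum, mul_sum, ← sum_add_distrib]
    exact sum_congr rfl fun j _ => by field_simp <;> ring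
  rw [h3, sum_range_cast, sum_range_sq_cast]
  field_simp
  ring
end

section
/- If (c_1, …, c_r) is an alternating set of integers, then D(c_1,…,c_r) := Σ_{i,j=1}^r c_i c_j min(i,j) − Σ_{i=1}^r i·c_i equals 0. -/
/-- `D(c_1,…,c_r) = Σ_{i,j} c_i c_j min(i,j) − Σ_i i c_i` vanishes for alternating sets. -/
theorem D_eq_zero_of_alternating (r : ℕ) (c : ℕ → ℤ)
    (h1 : ∀ i ∈ Finset.Icc 1 r, c i ∈ ({-1, 0, 1} : Set ℤ))
    (h2 : ∀ i ∈ Finset.Icc 1 r, c i ≠ 0 →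
      c i = (-1) ^ (((Finset.Icc 1 r).filter (fun j => i < j ∧ c j ≠ 0)).card)) :
    (∑ i ∈ Finset.Icc 1 r, ∑ j ∈ Finset.Icc 1 r, c i * c j * (min i j : ℤ)) -
      (∑ i ∈ Finset.Icc 1 r, (i : ℤ) * c i) = 0 := by
  classical
  -- key: tail sums are 0 or 1, determined by parity of the number of nonzero tail entries
  have key : ∀ k t, 1 ≤ t → r + 1 - t ≤ k →
      (∑ i ∈ Finset.Icc t r, c i) =
        (if Even (((Finset.Icc t r).filter fun j => c j ≠ 0).card) then 0 else 1) := by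
    intro k
    induction k with
    | zero =>
      intro t ht hk
      have : r < t := by omega
      simp [Finset.Icc_eq_empty_of_lt this]
    | succ k ih =>
      intro t ht hk
      by_cases hlt : r < t
      · simp [Finset.Icc_eq_empty_of_lt hlt]
      push_neg at hlt
      have hins : Finset.Icc t r = insert t (Finset.Icc (t + 1) r) := by
        rw [Finset.Icc_add_one_left_eq_Ioc, Finset.Ioc_insert_left hlt]
      have hnm : t ∉ Finset.Icc (t + 1) r := by simp
      have ihs := ih (t + 1) (by omega) (by omega)
      by_cases hc : c t = 0
      · rw [hins, Finset.sum_insert hnm, Finset.filter_insert, hc]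
        simp only [ne_eq, not_true_eq_false, if_false, zero_add]
        exact ihs
      · have hfe : (Finset.Icc 1 r).filter (fun j => t < j ∧ c j ≠ 0) =
            (Finset.Icc (t + 1) r).filter (fun j => c j ≠ 0) := by
          ext j
          simp only [Finset.mem_filter, Finset.mem_Icc]
          constructor
          · rintro ⟨⟨h1', h2'⟩, h3', h4'⟩; exact ⟨⟨by omega, h2'⟩, h4'⟩
          · rintro ⟨⟨h1', h2'⟩, h3'⟩; exact ⟨⟨by omega, h2'⟩, by omega, h3'⟩
        have hct : c t = (-1) ^ (((Finset.Icc (t + 1) r).filter fun j => c j ≠ 0).card) := by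
          rw [← hfe]; exact h2 t (Finset.mem_Icc.mpr ⟨ht, hlt⟩) hc
        rw [hins, Finset.sum_insert hnm, Finset.filter_insert, if_pos hc,
          Finset.card_insert_of_notMem (fun h => hnm (Finset.mem_of_mem_filter t h)),
          ihs, hct]
        set N := ((Finset.Icc (t + 1) r).filter fun j => c j ≠ 0).card with hN
        by_cases hE : Even N
        · rw [if_pos hE, Even.neg_one_pow hE, if_neg (by simp [Nat.even_add_one, hE])]
          ring
        · rw [if_neg hE, Odd.neg_one_pow (Nat.not_even_iff_odd.mp hE),
            if_pos (by simp [Nat.even_add_one, hE])]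
          ring
  have key' : ∀ t ∈ Finset.Icc 1 r,
      (∑ i ∈ Finset.Icc t r, c i) = 0 ∨ (∑ i ∈ Finset.Icc t r, c i) = 1 := by
    intro t ht
    rw [key (r + 1 - t) t (Finset.mem_Icc.mp ht).1 le_rfl]
    split <;> simp
  -- tail sum as a sum over Icc 1 r with indicator
  have hTfilter : ∀ t ∈ Finset.Icc 1 r,
      (∑ i ∈ Finset.Icc t r, c i) = ∑ i ∈ Finset.Icc 1 r, (if t ≤ i then c i else 0) := by
    intro t ht
    rw [← Finset.sum_filter]
    congr 1
    ext i
    simp only [Finset.mem_filter, Finset.mem_Icc]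
    have := (Finset.mem_Icc.mp ht).1
    omega
  -- linear part
  have e2 : (∑ i ∈ Finset.Icc 1 r, (i : ℤ) * c i)
      = ∑ t ∈ Finset.Icc 1 r, ∑ i ∈ Finset.Icc t r, c i := by
    rw [Finset.sum_congr rfl hTfilter, Finset.sum_comm]
    refine Finset.sum_congr rfl fun i hi => ?_
    rw [Finset.sum_ite, Finset.sum_const, Finset.sum_const_zero, add_zero]
    have hfi : (Finset.Icc 1 r).filter (fun t => t ≤ i) = Finset.Icc 1 i := by
      ext t
      simp only [Finset.mem_filter, Finset.mem_Icc]
      have := (Finset.mem_Icc.mp hi).2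
      omega
    rw [hfi, Nat.card_Icc]
    simp [nsmul_eq_mul]
  -- quadratic part
  have e1 : (∑ i ∈ Finset.Icc 1 r, ∑ j ∈ Finset.Icc 1 r, c i * c j * (min i j : ℤ))
      = ∑ t ∈ Finset.Icc 1 r,
          (∑ i ∈ Finset.Icc t r, c i) * (∑ j ∈ Finset.Icc t r, c j) := by
    have step1 : ∀ t ∈ Finset.Icc 1 r,
        (∑ i ∈ Finset.Icc t r, c i) * (∑ j ∈ Finset.Icc t r, c j)
          = ∑ i ∈ Finset.Icc 1 r, ∑ j ∈ Finset.Icc 1 r,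
              (if t ≤ i then c i else 0) * (if t ≤ j then c j else 0) := by
      intro t ht
      rw [hTfilter t ht, Finset.sum_mul_sum]
    symm
    calc ∑ t ∈ Finset.Icc 1 r,
            (∑ i ∈ Finset.Icc t r, c i) * (∑ j ∈ Finset.Icc t r, c j)
        = ∑ t ∈ Finset.Icc 1 r, ∑ i ∈ Finset.Icc 1 r, ∑ j ∈ Finset.Icc 1 r,
            (if t ≤ i then c i else 0) * (if t ≤ j then c j else 0) :=
          Finset.sum_congr rfl step1
      _ = ∑ i ∈ Finset.Icc 1 r, ∑ t ∈ Finset.Icc 1 r, ∑ j ∈ Finset.Icc 1 r,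
            (if t ≤ i then c i else 0) * (if t ≤ j then c j else 0) := Finset.sum_comm
      _ = ∑ i ∈ Finset.Icc 1 r, ∑ j ∈ Finset.Icc 1 r, ∑ t ∈ Finset.Icc 1 r,
            (if t ≤ i then c i else 0) * (if t ≤ j then c j else 0) :=
          Finset.sum_congr rfl fun i _ => Finset.sum_comm
      _ = ∑ i ∈ Finset.Icc 1 r, ∑ j ∈ Finset.Icc 1 r, c i * c j * (min i j : ℤ) := by
          refine Finset.sum_congr rfl fun i hi => Finset.sum_congr rfl fun j hj => ?_
          have step2 : ∀ t, (if t ≤ i then c i else 0) * (if t ≤ j then c j else 0)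
              = (if t ≤ min i j then c i * c j else 0) := by
            intro t
            by_cases hti : t ≤ i <;> by_cases htj : t ≤ j <;>
              simp [hti, htj, le_min_iff, mul_comm]
          rw [Finset.sum_congr rfl fun t _ => step2 t,
            Finset.sum_ite, Finset.sum_const, Finset.sum_const_zero, add_zero]
          have hfm : (Finset.Icc 1 r).filter (fun t => t ≤ min i j)
              = Finset.Icc 1 (min i j) := by
            ext t
            simp only [Finset.mem_filter, Finset.mem_Icc, le_min_iff]
            have h1' := (Finset.mem_Icc.mp hi).2
            have h2' := (Finset.mem_Icc.mp hj).2
            omega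
          rw [hfm, Nat.card_Icc]
          simp [nsmul_eq_mul, Nat.cast_min]
          ring
  rw [e1, e2, ← Finset.sum_sub_distrib]
  refine Finset.sum_eq_zero fun t ht => ?_
  rcases key' t ht with h | h <;> rw [h] <;> ring
end

section
/- Let Δ(t) ∈ ℤ[t] be a polynomial with alternating coefficients satisfying Δ(1) = 1, let a ≥ deg Δ be a positive integer, and let A be a complex number with A^a t^a ≠ 1, t^a ≠ 1, A t² ≠ 1 (t a complex variable). Then (1/a) Σ_{ξ^a=1} Δ(ξt)Δ(ξ̄At) / ((1-ξt)(1-ξ̄At)) = (1-A^a t^{2a}) Δ(At²) / ((1-t^a)(1-A^a t^a)(1-At²)). -/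
open Polynomial Finset

/-- A polynomial has alternating coefficients: each coefficient lies in {-1,0,1} and
a nonzero coefficient equals `(-1)^(number of nonzero coefficients above it)`. -/
def AlternatingCoeffs (Δ : Polynomial ℤ) : Prop :=
  ∀ i : ℕ, Δ.coeff i ∈ ({-1, 0, 1} : Set ℤ) ∧
    (Δ.coeff i ≠ 0 → Δ.coeff i = (-1) ^ ((Δ.support.filter (fun j => i < j)).card))

/-- Sum of k-th powers of a-th roots of unity. -/
lemma sum_pow_nthRoots (a : ℕ) (ha : 0 < a) (k : ℕ) :
    ∑ ξ ∈ Polynomial.nthRootsFinset a (1 : ℂ), ξ ^ k = if a ∣ k then (a : ℂ) else 0 := by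
  have hprim := Complex.isPrimitiveRoot_exp a ha.ne'
  set η := Complex.exp (2 * Real.pi * Complex.I / a) with hη
  by_cases hdvd : a ∣ k
  · rw [if_pos hdvd]
    obtain ⟨c, rfl⟩ := hdvd
    rw [Finset.sum_congr rfl (fun ξ hξ => ?_), Finset.sum_const,
      hprim.card_nthRootsFinset, nsmul_eq_mul, mul_one]
    rw [pow_mul, (Polynomial.mem_nthRootsFinset ha (1 : ℂ)).1 hξ, one_pow]
  · rw [if_neg hdvd]
    have hηk : η ^ k ≠ 1 := fun h => hdvd ((hprim.pow_eq_one_iff_dvd k).1 h)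
    have hkey : η ^ k * ∑ ξ ∈ Polynomial.nthRootsFinset a (1 : ℂ), ξ ^ k
        = ∑ ξ ∈ Polynomial.nthRootsFinset a (1 : ℂ), ξ ^ k := by
      have hη0 : η ≠ 0 := hprim.ne_zero ha.ne'
      rw [Finset.mul_sum]
      refine Finset.sum_nbij' (fun ξ => η * ξ) (fun ξ => η⁻¹ * ξ) ?_ ?_ ?_ ?_ ?_
      · intro ξ hξ
        rw [← mul_one (1 : ℂ)]
        exact Polynomial.mul_mem_nthRootsFinset (hprim.mem_nthRootsFinset ha) hξ
      · intro ξ hξ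
        rw [← mul_one (1 : ℂ)]
        refine Polynomial.mul_mem_nthRootsFinset ?_ hξ
        rw [Polynomial.mem_nthRootsFinset ha, inv_pow, hprim.pow_eq_one, inv_one]
      · intro ξ _
        field_simp
      · intro ξ _
        field_simp
      · intro ξ _
        rw [mul_pow]
    have := sub_eq_zero.2 hkey
    rw [← sub_one_mul] at this
    rcases mul_eq_zero.1 this with h | h
    · exact absurd (by linear_combination h) hηk
    · exact h

/-- Alternating sums over a finset of naturals. -/
lemma tail_sum_lemma (S : Finset ℕ) :
    ∑ i ∈ S, (-1 : ℤ) ^ ((S.filter (fun j => i < j)).card) = ((S.card % 2 : ℕ) : ℤ) := by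
  induction S using Finset.strongInduction with
  | _ S ih =>
    rcases S.eq_empty_or_nonempty with rfl | hS
    · simp
    · obtain ⟨M, hM, hmax⟩ := S.exists_max_image id hS
      have hsub : S.erase M ⊂ S := Finset.erase_ssubset hM
      have hstep : ∀ i ∈ S.erase M,
          (-1 : ℤ) ^ ((S.filter (fun j => i < j)).card)
          = -(-1 : ℤ) ^ (((S.erase M).filter (fun j => i < j)).card) := by
        intro i hi
        have hiM : i < M := lt_of_le_of_ne (hmax i (Finset.mem_of_mem_erase hi))
          (Finset.ne_of_mem_erase hi)
        have : S.filter (fun j => i < j) = insert M ((S.erase M).filter (fun j => i < j)) := by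
          ext j
          simp only [Finset.mem_filter, Finset.mem_insert, Finset.mem_erase]
          constructor
          · rintro ⟨hj, hij⟩
            by_cases hjM : j = M
            · exact Or.inl hjM
            · exact Or.inr ⟨⟨hjM, hj⟩, hij⟩
          · rintro (rfl | ⟨⟨_, hj⟩, hij⟩)
            · exact ⟨hM, hiM⟩
            · exact ⟨hj, hij⟩
        rw [this, Finset.card_insert_of_notMem (by simp), pow_succ]
        ring
      have hMterm : (S.filter (fun j => M < j)) = ∅ := by
        rw [Finset.filter_eq_empty_iff]
        intro j hj
        exact not_lt.2 (hmax j hj)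
      rw [← Finset.insert_erase hM, Finset.sum_insert (Finset.notMem_erase M S),
        Finset.insert_erase hM]
      rw [hMterm, Finset.card_empty, pow_zero,
        Finset.sum_congr rfl hstep, Finset.sum_neg_distrib,
        ih (S.erase M) hsub, Finset.card_erase_of_mem hM]
      have hpos : 1 ≤ S.card := Finset.card_pos.2 hS
      omega

/-- Partial sums of the coefficients of Δ. -/
def psum (Δ : Polynomial ℤ) (m : ℕ) : ℤ := ∑ i ∈ Finset.range (m + 1), Δ.coeff i

lemma psum_top (Δ : Polynomial ℤ) (h1 : Δ.eval 1 = 1) {m : ℕ} (hm : Δ.natDegree ≤ m) :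
    psum Δ m = 1 := by
  have := Polynomial.eval_eq_sum_range' (Nat.lt_succ_of_le hm) (1 : ℤ)
  rw [h1] at this
  simpa [psum] using this.symm

lemma psum_mem (Δ : Polynomial ℤ) (hΔ : AlternatingCoeffs Δ) (h1 : Δ.eval 1 = 1) (m : ℕ) :
    psum Δ m = 0 ∨ psum Δ m = 1 := by
  set N := max m Δ.natDegree with hN
  have h1' : psum Δ N = 1 := psum_top Δ h1 (le_max_right _ _)
  set S := Δ.support.filter (fun j => m < j) with hS
  have hsplit : psum Δ N = psum Δ m + ∑ i ∈ Finset.Ico (m + 1) (N + 1), Δ.coeff i := by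
    rw [psum, psum, Finset.range_eq_Ico, Finset.range_eq_Ico]
    exact (Finset.sum_Ico_consecutive (fun i => Δ.coeff i) (m := 0) (n := m + 1) (k := N + 1) (by omega) (by omega)).symm
  have htail : ∑ i ∈ Finset.Ico (m + 1) (N + 1), Δ.coeff i = ∑ i ∈ S, Δ.coeff i := by
    refine (Finset.sum_subset ?_ ?_).symm
    · intro i hi
      rw [hS, Finset.mem_filter] at hi
      have := Polynomial.le_natDegree_of_mem_supp i hi.1
      rw [Finset.mem_Ico]
      omega
    · intro i hi hni
      rw [Finset.mem_Ico] at hi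
      rw [hS, Finset.mem_filter] at hni
      by_contra hc
      exact hni ⟨Polynomial.mem_support_iff.2 hc, by omega⟩
  have hterm : ∀ i ∈ S, Δ.coeff i = (-1 : ℤ) ^ ((S.filter (fun j => i < j)).card) := by
    intro i hi
    rw [hS, Finset.mem_filter] at hi
    have hne : Δ.coeff i ≠ 0 := Polynomial.mem_support_iff.1 hi.1
    rw [(hΔ i).2 hne]
    congr 1
    rw [hS, Finset.filter_filter]
    refine (congrArg Finset.card (Finset.filter_congr fun j _ => ?_)).symm
    constructor
    · exact fun h => h.2
    · exact fun h => ⟨by omega, h⟩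
  have := tail_sum_lemma S
  rw [← Finset.sum_congr rfl hterm] at this
  have key : psum Δ m + ((S.card % 2 : ℕ) : ℤ) = 1 := by
    rw [← this, ← htail, ← hsplit, h1']
  rcases Nat.mod_two_eq_zero_or_one S.card with h | h <;> rw [h] at key
  · right
    simpa using key
  · left
    have : ((1 : ℕ) : ℤ) = 1 := by norm_num
    omega

/-- The coefficients of Δ(X)·(1+X+...+X^(a-1)). -/
noncomputable def qc (Δ : Polynomial ℤ) (a m : ℕ) : ℂ :=
  if m < a then ((psum Δ m : ℤ) : ℂ) else 1 - ((psum Δ (m - a) : ℤ) : ℂ)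

lemma qc_sq (Δ : Polynomial ℤ) (hΔ : AlternatingCoeffs Δ) (h1 : Δ.eval 1 = 1) (a m : ℕ) :
    qc Δ a m * qc Δ a m = qc Δ a m := by
  unfold qc
  split
  · rcases psum_mem Δ hΔ h1 m with h | h <;> rw [h] <;> norm_num
  · rcases psum_mem Δ hΔ h1 (m - a) with h | h <;> rw [h] <;> norm_num

lemma qc_cross (Δ : Polynomial ℤ) (hΔ : AlternatingCoeffs Δ) (h1 : Δ.eval 1 = 1)
    (a m : ℕ) (hm : m < a) : qc Δ a m * qc Δ a (m + a) = 0 := by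
  unfold qc
  rw [if_pos hm, if_neg (by omega), Nat.add_sub_cancel]
  rcases psum_mem Δ hΔ h1 m with h | h <;> rw [h] <;> norm_num

lemma sum_range_double (a : ℕ) (f : ℕ → ℂ) :
    ∑ m ∈ Finset.range (2 * a), f m
      = ∑ i ∈ Finset.range a, f i + ∑ i ∈ Finset.range a, f (a + i) := by
  rw [two_mul, Finset.sum_range_add]

/-- Key evaluation identity: Δ(x)·(1+x+...+x^(a-1)) = ∑_{m<2a} q_m x^m. -/
lemma eval_identity (Δ : Polynomial ℤ) (h1 : Δ.eval 1 = 1) (a : ℕ) (ha : 0 < a)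
    (hdeg : Δ.natDegree ≤ a) (x : ℂ) :
    (Polynomial.aeval x Δ) * (∑ k ∈ Finset.range a, x ^ k)
      = ∑ m ∈ Finset.range (2 * a), qc Δ a m * x ^ m := by
  -- telescoping identity
  have hT : ∀ n : ℕ, ∑ j ∈ Finset.range n, ((psum Δ j : ℤ) : ℂ) * x ^ j
      - ∑ j ∈ Finset.range n, ((psum Δ j : ℤ) : ℂ) * x ^ (j + 1)
      = ∑ j ∈ Finset.range (n + 1), ((Δ.coeff j : ℤ) : ℂ) * x ^ j
        - ((psum Δ n : ℤ) : ℂ) * x ^ n := by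
    intro n
    induction n with
    | zero => simp [psum]
    | succ n ihn =>
      rw [Finset.sum_range_succ (fun j => ((psum Δ j : ℤ) : ℂ) * x ^ j),
        Finset.sum_range_succ (fun j => ((psum Δ j : ℤ) : ℂ) * x ^ (j + 1)),
        Finset.sum_range_succ (fun j => ((Δ.coeff j : ℤ) : ℂ) * x ^ j)]
      have hs : ((psum Δ (n + 1) : ℤ) : ℂ)
          = ((psum Δ n : ℤ) : ℂ) + ((Δ.coeff (n + 1) : ℤ) : ℂ) := by
        rw [psum, psum, Finset.sum_range_succ]
        push_cast
        ring
      linear_combination ihn + x ^ (n + 1) * hs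
  have hGx : (1 - x) * ∑ i ∈ Finset.range a, x ^ i = 1 - x ^ a := by
    have := geom_sum_mul x a
    linear_combination (-1 : ℂ) * this
  have haΔ : Polynomial.aeval x Δ = ∑ j ∈ Finset.range (a + 1), ((Δ.coeff j : ℤ) : ℂ) * x ^ j := by
    rw [Polynomial.aeval_eq_sum_range' (Nat.lt_succ_of_le hdeg)]
    exact Finset.sum_congr rfl fun i _ => by simp [zsmul_eq_mul]
  have hsac : ((psum Δ a : ℤ) : ℂ) = 1 := by
    rw [psum_top Δ h1 hdeg]; norm_num
  have hxS : ∑ j ∈ Finset.range a, ((psum Δ j : ℤ) : ℂ) * x ^ (j + 1)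
      = x * ∑ j ∈ Finset.range a, ((psum Δ j : ℤ) : ℂ) * x ^ j := by
    rw [Finset.mul_sum]
    exact Finset.sum_congr rfl fun i _ => by ring
  have hF : Polynomial.aeval x Δ
      = 1 - (∑ j ∈ Finset.range a, (1 - ((psum Δ j : ℤ) : ℂ)) * x ^ j) * (1 - x) := by
    have hsplit2 : ∑ j ∈ Finset.range a, (1 - ((psum Δ j : ℤ) : ℂ)) * x ^ j
        = (∑ j ∈ Finset.range a, x ^ j)
          - ∑ j ∈ Finset.range a, ((psum Δ j : ℤ) : ℂ) * x ^ j := by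
      rw [← Finset.sum_sub_distrib]
      exact Finset.sum_congr rfl fun i _ => by ring
    rw [haΔ]
    linear_combination (1 - x) * hsplit2 + hGx - hT a - hxS + x ^ a * hsac
  -- now the main identity
  rw [sum_range_double, hF]
  have hq1 : ∀ i ∈ Finset.range a, qc Δ a i * x ^ i = ((psum Δ i : ℤ) : ℂ) * x ^ i := by
    intro i hi
    rw [Finset.mem_range] at hi
    rw [qc, if_pos hi]
  have hq2 : ∀ i ∈ Finset.range a, qc Δ a (a + i) * x ^ (a + i)
      = x ^ a * ((1 - ((psum Δ i : ℤ) : ℂ)) * x ^ i) := by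
    intro i hi
    rw [qc, if_neg (by omega), show a + i - a = i by omega, pow_add]
    ring
  rw [Finset.sum_congr rfl hq1, Finset.sum_congr rfl hq2, ← Finset.mul_sum]
  have hsplit2 : ∑ j ∈ Finset.range a, (1 - ((psum Δ j : ℤ) : ℂ)) * x ^ j
      = (∑ j ∈ Finset.range a, x ^ j)
        - ∑ j ∈ Finset.range a, ((psum Δ j : ℤ) : ℂ) * x ^ j := by
    rw [← Finset.sum_sub_distrib]
    exact Finset.sum_congr rfl fun i _ => by ring
  linear_combination (-1 : ℂ) * hsplit2
    - (∑ j ∈ Finset.range a, (1 - ((psum Δ j : ℤ) : ℂ)) * x ^ j) * hGx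

lemma sum_root_pair (a : ℕ) (ha : 0 < a) {i j : ℕ} (hi : i < a) (hj : j < a) :
    ∑ ξ ∈ Polynomial.nthRootsFinset a (1 : ℂ), ξ ^ i * (ξ⁻¹) ^ j
      = if i = j then (a : ℂ) else 0 := by
  have hterm : ∀ ξ ∈ Polynomial.nthRootsFinset a (1 : ℂ), ξ ^ i * (ξ⁻¹) ^ j = ξ ^ (i + (a - j)) := by
    intro ξ hξ
    have hξa : ξ ^ a = 1 := (Polynomial.mem_nthRootsFinset ha (1 : ℂ)).1 hξ
    have h2 : ξ ^ j * ξ ^ (a - j) = 1 := by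
      rw [← pow_add, show j + (a - j) = a by omega, hξa]
    rw [inv_pow, inv_eq_of_mul_eq_one_right h2, ← pow_add]
  rw [Finset.sum_congr rfl hterm, sum_pow_nthRoots a ha]
  by_cases h : i = j
  · subst h
    rw [show i + (a - i) = a by omega, if_pos (dvd_refl a), if_pos rfl]
  · rw [if_neg h, if_neg ?_]
    rintro ⟨c, hc⟩
    have hc1 : c = 1 := by
      have h1c : 1 ≤ i + (a - j) := by omega
      have h2c : i + (a - j) < 2 * a := by omega
      by_contra hcn
      rcases Nat.lt_or_ge c 2 with h' | h'
      · interval_cases c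
        · omega
        · omega
      · have h3 : a * 2 ≤ a * c := Nat.mul_le_mul_left a h'
        linarith
    subst hc1
    omega

lemma orthogonal_sum (a : ℕ) (ha : 0 < a) (u v : ℕ → ℂ) :
    ∑ ξ ∈ Polynomial.nthRootsFinset a (1 : ℂ),
      (∑ i ∈ Finset.range a, ξ ^ i * u i) * (∑ j ∈ Finset.range a, (ξ⁻¹) ^ j * v j)
    = (a : ℂ) * ∑ i ∈ Finset.range a, u i * v i := by
  have step1 : ∀ ξ ∈ Polynomial.nthRootsFinset a (1 : ℂ),
      (∑ i ∈ Finset.range a, ξ ^ i * u i) * (∑ j ∈ Finset.range a, (ξ⁻¹) ^ j * v j)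
      = ∑ i ∈ Finset.range a, ∑ j ∈ Finset.range a,
          (ξ ^ i * (ξ⁻¹) ^ j) * (u i * v j) := by
    intro ξ _
    rw [Finset.sum_mul_sum]
    exact Finset.sum_congr rfl fun i _ => Finset.sum_congr rfl fun j _ => by ring
  calc ∑ ξ ∈ Polynomial.nthRootsFinset a (1 : ℂ),
      (∑ i ∈ Finset.range a, ξ ^ i * u i) * (∑ j ∈ Finset.range a, (ξ⁻¹) ^ j * v j)
      = ∑ ξ ∈ Polynomial.nthRootsFinset a (1 : ℂ), ∑ i ∈ Finset.range a, ∑ j ∈ Finset.range a,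
          (ξ ^ i * (ξ⁻¹) ^ j) * (u i * v j) := Finset.sum_congr rfl step1
    _ = ∑ i ∈ Finset.range a, ∑ ξ ∈ Polynomial.nthRootsFinset a (1 : ℂ), ∑ j ∈ Finset.range a,
          (ξ ^ i * (ξ⁻¹) ^ j) * (u i * v j) := Finset.sum_comm
    _ = ∑ i ∈ Finset.range a, ∑ j ∈ Finset.range a, ∑ ξ ∈ Polynomial.nthRootsFinset a (1 : ℂ),
          (ξ ^ i * (ξ⁻¹) ^ j) * (u i * v j) :=
        Finset.sum_congr rfl fun i _ => Finset.sum_comm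
    _ = ∑ i ∈ Finset.range a, ∑ j ∈ Finset.range a,
          (∑ ξ ∈ Polynomial.nthRootsFinset a (1 : ℂ), ξ ^ i * (ξ⁻¹) ^ j) * (u i * v j) :=
        Finset.sum_congr rfl fun i _ => Finset.sum_congr rfl fun j _ =>
          (Finset.sum_mul _ _ _).symm
    _ = ∑ i ∈ Finset.range a, ∑ j ∈ Finset.range a,
          (if i = j then (a : ℂ) else 0) * (u i * v j) := by
        refine Finset.sum_congr rfl fun i hi => Finset.sum_congr rfl fun j hj => ?_
        rw [Finset.mem_range] at hi hj
        rw [sum_root_pair a ha hi hj]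
    _ = ∑ i ∈ Finset.range a, (a : ℂ) * (u i * v i) := by
        refine Finset.sum_congr rfl fun i hi => ?_
        simp only [ite_mul, zero_mul]
        rw [Finset.sum_ite_eq, if_pos hi]
    _ = (a : ℂ) * ∑ i ∈ Finset.range a, u i * v i := (Finset.mul_sum _ _ _).symm

/-- Algebraic Lemma (a). -/
theorem algebraic_lemma_a (Δ : Polynomial ℤ) (hΔ : AlternatingCoeffs Δ)
    (h1 : Δ.eval 1 = 1) (a : ℕ) (ha : 0 < a) (hdeg : Δ.natDegree ≤ a)
    (t A : ℂ) (ht : t ^ a ≠ 1) (hAt : A ^ a * t ^ a ≠ 1) (hAt2 : A * t ^ 2 ≠ 1) :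
    (1 / (a : ℂ)) * ∑ ξ ∈ Polynomial.nthRootsFinset a (1 : ℂ),
        (Polynomial.aeval (ξ * t) Δ) * (Polynomial.aeval (ξ⁻¹ * A * t) Δ) /
          ((1 - ξ * t) * (1 - ξ⁻¹ * A * t))
      = (1 - A ^ a * t ^ (2 * a)) * (Polynomial.aeval (A * t ^ 2) Δ) /
          ((1 - t ^ a) * (1 - A ^ a * t ^ a) * (1 - A * t ^ 2)) := by
  have ha' : (a : ℂ) ≠ 0 := Nat.cast_ne_zero.2 ha.ne'
  have hB1 : (1 : ℂ) - t ^ a ≠ 0 := sub_ne_zero.2 (Ne.symm ht)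
  have hB2 : (1 : ℂ) - A ^ a * t ^ a ≠ 0 := sub_ne_zero.2 (Ne.symm hAt)
  have hB3 : (1 : ℂ) - A * t ^ 2 ≠ 0 := sub_ne_zero.2 (Ne.symm hAt2)
  have hsummand : ∀ ξ ∈ Polynomial.nthRootsFinset a (1 : ℂ),
      (Polynomial.aeval (ξ * t) Δ) * (Polynomial.aeval (ξ⁻¹ * A * t) Δ) /
          ((1 - ξ * t) * (1 - ξ⁻¹ * A * t))
      = (∑ i ∈ Finset.range a, ξ ^ i * (qc Δ a i * t ^ i + qc Δ a (a + i) * t ^ (a + i)))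
        * (∑ j ∈ Finset.range a,
            (ξ⁻¹) ^ j * (qc Δ a j * (A * t) ^ j + qc Δ a (a + j) * (A * t) ^ (a + j)))
        / ((1 - t ^ a) * (1 - A ^ a * t ^ a)) := by
    intro ξ hξ
    have hξa : ξ ^ a = 1 := (Polynomial.mem_nthRootsFinset ha (1 : ℂ)).1 hξ
    have hξia : (ξ⁻¹) ^ a = 1 := by rw [inv_pow, hξa, inv_one]
    have hx1 : (1 : ℂ) - ξ * t ≠ 0 := by
      rw [sub_ne_zero]
      intro h
      apply ht
      have h2 : (ξ * t) ^ a = 1 := by rw [← h, one_pow]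
      rwa [mul_pow, hξa, one_mul] at h2
    have hx2 : (1 : ℂ) - ξ⁻¹ * A * t ≠ 0 := by
      rw [sub_ne_zero]
      intro h
      apply hAt
      have h2 : (ξ⁻¹ * A * t) ^ a = 1 := by rw [← h, one_pow]
      rwa [mul_pow, mul_pow, hξia, one_mul] at h2
    have hG1 : (1 - ξ * t) * (∑ k ∈ Finset.range a, (ξ * t) ^ k) = 1 - t ^ a := by
      have h := geom_sum_mul (ξ * t) a
      rw [mul_pow, hξa, one_mul] at h
      linear_combination (-1 : ℂ) * h
    have hG2 : (1 - ξ⁻¹ * A * t) * (∑ k ∈ Finset.range a, (ξ⁻¹ * A * t) ^ k)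
        = 1 - A ^ a * t ^ a := by
      have h := geom_sum_mul (ξ⁻¹ * A * t) a
      rw [mul_pow, mul_pow, hξia, one_mul] at h
      linear_combination (-1 : ℂ) * h
    have hE1 : (Polynomial.aeval (ξ * t) Δ) * (∑ k ∈ Finset.range a, (ξ * t) ^ k)
        = ∑ i ∈ Finset.range a,
            ξ ^ i * (qc Δ a i * t ^ i + qc Δ a (a + i) * t ^ (a + i)) := by
      rw [eval_identity Δ h1 a ha hdeg (ξ * t), sum_range_double, ← Finset.sum_add_distrib]
      refine Finset.sum_congr rfl fun i _ => ?_
      rw [mul_pow ξ t i, mul_pow ξ t (a + i), pow_add ξ a i, hξa, one_mul]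
      ring
    have hE2 : (Polynomial.aeval (ξ⁻¹ * A * t) Δ)
          * (∑ k ∈ Finset.range a, (ξ⁻¹ * A * t) ^ k)
        = ∑ j ∈ Finset.range a,
            (ξ⁻¹) ^ j * (qc Δ a j * (A * t) ^ j + qc Δ a (a + j) * (A * t) ^ (a + j)) := by
      rw [eval_identity Δ h1 a ha hdeg (ξ⁻¹ * A * t), sum_range_double,
        ← Finset.sum_add_distrib]
      refine Finset.sum_congr rfl fun j _ => ?_
      rw [show ξ⁻¹ * A * t = ξ⁻¹ * (A * t) by ring, mul_pow (ξ⁻¹) (A * t) j,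
        mul_pow (ξ⁻¹) (A * t) (a + j), pow_add (ξ⁻¹) a j, hξia, one_mul]
      ring
    rw [div_eq_div_iff (mul_ne_zero hx1 hx2) (mul_ne_zero hB1 hB2)]
    rw [← hG1, ← hG2, ← hE1, ← hE2]
    ring
  rw [Finset.sum_congr rfl hsummand, ← Finset.sum_div]
  have hmain := orthogonal_sum a ha
    (fun i => qc Δ a i * t ^ i + qc Δ a (a + i) * t ^ (a + i))
    (fun j => qc Δ a j * (A * t) ^ j + qc Δ a (a + j) * (A * t) ^ (a + j))
  rw [hmain]
  have hfin : ∑ i ∈ Finset.range a,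
      (qc Δ a i * t ^ i + qc Δ a (a + i) * t ^ (a + i))
        * (qc Δ a i * (A * t) ^ i + qc Δ a (a + i) * (A * t) ^ (a + i))
      = ∑ m ∈ Finset.range (2 * a), qc Δ a m * (A * t ^ 2) ^ m := by
    rw [sum_range_double, ← Finset.sum_add_distrib]
    refine Finset.sum_congr rfl fun i hi => ?_
    rw [Finset.mem_range] at hi
    have h2 := qc_sq Δ hΔ h1 a
    have h3 : qc Δ a i * qc Δ a (a + i) = 0 := by
      rw [add_comm]
      exact qc_cross Δ hΔ h1 a i hi
    have e1 : (A * t ^ 2) ^ i = t ^ i * (A * t) ^ i := by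
      rw [show A * t ^ 2 = t * (A * t) by ring, mul_pow]
    have e2 : (A * t ^ 2) ^ (a + i) = t ^ (a + i) * (A * t) ^ (a + i) := by
      rw [show A * t ^ 2 = t * (A * t) by ring, mul_pow]
    rw [e1, e2]
    linear_combination (t ^ i * (A * t) ^ i) * h2 i
      + (t ^ (a + i) * (A * t) ^ (a + i)) * h2 (a + i)
      + (t ^ i * (A * t) ^ (a + i) + t ^ (a + i) * (A * t) ^ i) * h3
  rw [hfin, ← eval_identity Δ h1 a ha hdeg (A * t ^ 2)]
  have hGA : (1 - A * t ^ 2) * (∑ k ∈ Finset.range a, (A * t ^ 2) ^ k)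
      = 1 - A ^ a * t ^ (2 * a) := by
    have h := geom_sum_mul (A * t ^ 2) a
    rw [mul_pow, ← pow_mul] at h
    linear_combination (-1 : ℂ) * h
  have hcancel : ∀ Y B : ℂ, (1 / (a : ℂ)) * (((a : ℂ) * Y) / B) = Y / B := by
    intro Y B
    rw [div_mul_div_comm, one_mul, mul_div_mul_left Y B ha']
  rw [hcancel]
  rw [div_eq_div_iff (mul_ne_zero hB1 hB2) (mul_ne_zero (mul_ne_zero hB1 hB2) hB3)]
  linear_combination ((Polynomial.aeval (A * t ^ 2) Δ) * ((1 - t ^ a) * (1 - A ^ a * t ^ a))) * hGA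
end

section
/- Let Δ(t) ∈ ℤ[t] with alternating coefficients, Δ(1)=1, and integers a ≥ deg Δ, d ≥ 2, k ≥ 1. Then (1/a^{d-1}) Σ over d-tuples (ξ_1,…,ξ_d) of a-th roots of unity with ξ_1⋯ξ_d = 1 of [∏_{i=1}^{d-1} Δ(ξ_i t)/(1-ξ_i t)] · Δ(ξ_d t^k)/(1-ξ_d t^k) equals (1-t^{a(d+k-1)}) Δ(t^{d+k-1}) / ((1-t^a)^{d-1}(1-t^{ak})(1-t^{d+k-1})), as rational functions in t. -/
/- ### Auxiliary development -/

open Polynomial Finset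

private lemma abel_sum (u : ℕ → ℂ) (x : ℂ) (N : ℕ) :
    ∑ n ∈ Finset.range (N+1), u n * x^n
      = (1-x) * ∑ n ∈ Finset.range N, (∑ i ∈ Finset.range (n+1), u i) * x^n
        + (∑ i ∈ Finset.range (N+1), u i) * x^N := by
  induction N with
  | zero => simp
  | succ N ih =>
    rw [Finset.sum_range_succ (fun n => u n * x^n), ih,
      Finset.sum_range_succ (fun n => (∑ i ∈ Finset.range (n+1), u i) * x^n),
      Finset.sum_range_succ u (N+1)]
    ring

private lemma support_tail_sum (Δ : Polynomial ℤ) (hΔ : AlternatingCoeffs Δ) :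
    ∀ m n : ℕ, Δ.natDegree ≤ n + m →
      ∑ j ∈ Δ.support.filter (fun j => n < j), Δ.coeff j
        = if (Δ.support.filter (fun j => n < j)).card % 2 = 1 then 1 else 0 := by
  intro m
  induction m with
  | zero =>
    intro n hn
    have he : Δ.support.filter (fun j => n < j) = ∅ := by
      rw [Finset.filter_eq_empty_iff]
      intro j hj
      have hle : j ≤ Δ.natDegree := Polynomial.le_natDegree_of_mem_supp j hj
      omega
    simp [he]
  | succ m ih =>
    intro n hn
    have hsplit : Δ.support.filter (fun j => n < j)
        = Δ.support.filter (fun j => n + 1 < j) ∪ Δ.support.filter (fun j => j = n + 1) := by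
      rw [← Finset.filter_or]
      apply Finset.filter_congr
      intro j _
      constructor
      · intro hj; omega
      · intro hj; omega
    have hdisj : Disjoint (Δ.support.filter (fun j => n + 1 < j))
        (Δ.support.filter (fun j => j = n + 1)) := by
      rw [Finset.disjoint_left]
      intro j hj1 hj2
      simp only [Finset.mem_filter] at hj1 hj2
      omega
    have ihn := ih (n+1) (by omega)
    by_cases hc : Δ.coeff (n+1) = 0
    · have hfe : Δ.support.filter (fun j => j = n + 1) = ∅ := by
        rw [Finset.filter_eq_empty_iff]
        intro j hj hj2
        rw [hj2] at hj
        exact (Polynomial.mem_support_iff.mp hj) hc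
      rw [hsplit, hfe, Finset.union_empty]
      exact ihn
    · have hmem : (n+1) ∈ Δ.support := Polynomial.mem_support_iff.mpr hc
      have hfe : Δ.support.filter (fun j => j = n + 1) = {n+1} := by
        ext j
        simp only [Finset.mem_filter, Finset.mem_singleton]
        constructor
        · exact fun h => h.2
        · rintro rfl; exact ⟨hmem, rfl⟩
      have hsign := (hΔ (n+1)).2 hc
      rw [hsplit, Finset.sum_union hdisj, Finset.card_union_of_disjoint hdisj, ihn, hfe,
        Finset.sum_singleton, Finset.card_singleton, hsign]
      rcases Nat.even_or_odd ((Δ.support.filter (fun j => n + 1 < j)).card) with hpar | hpar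
      · have h2 := Nat.even_iff.mp hpar
        rw [Even.neg_one_pow hpar, if_neg (by omega), if_pos (by omega)]
        norm_num
      · have h2 := Nat.odd_iff.mp hpar
        rw [Odd.neg_one_pow hpar, if_pos (by omega), if_neg (by omega)]
        norm_num

private lemma sum_coeff_split (Δ : Polynomial ℤ) (n : ℕ) :
    (∑ i ∈ Finset.range (n+1), Δ.coeff i)
      + ∑ j ∈ Δ.support.filter (fun j => n < j), Δ.coeff j = Δ.eval 1 := by
  have h0 : Δ.eval 1 = ∑ j ∈ Δ.support, Δ.coeff j := by
    rw [Polynomial.eval_eq_sum, Polynomial.sum_def]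
    simp
  have h1 : ∑ i ∈ Finset.range (n+1), Δ.coeff i
      = ∑ j ∈ Δ.support.filter (fun j => j ≤ n), Δ.coeff j := by
    rw [← Finset.sum_filter_of_ne (p := fun i => i ∈ Δ.support)
      (fun x _ hx => Polynomial.mem_support_iff.mpr hx)]
    congr 1
    ext j
    simp only [Finset.mem_filter, Finset.mem_range, Nat.lt_succ_iff]
    tauto
  have h2 := Finset.sum_filter_add_sum_filter_not Δ.support (fun j => j ≤ n) Δ.coeff
  have h3 : Δ.support.filter (fun j => ¬ j ≤ n) = Δ.support.filter (fun j => n < j) := by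
    apply Finset.filter_congr
    intro j _
    simp
  rw [h0, h1, ← h3]
  exact h2

private lemma partial_sum_spec (Δ : Polynomial ℤ) (hΔ : AlternatingCoeffs Δ)
    (h1 : Δ.eval 1 = 1) (n : ℕ) :
    ∑ i ∈ Finset.range (n+1), Δ.coeff i = 0 ∨ ∑ i ∈ Finset.range (n+1), Δ.coeff i = 1 := by
  have hs := support_tail_sum Δ hΔ Δ.natDegree n (by omega)
  have hsp := sum_coeff_split Δ n
  rw [h1] at hsp
  by_cases hp : (Δ.support.filter (fun j => n < j)).card % 2 = 1
  · left; rw [if_pos hp] at hs; omega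
  · right; rw [if_neg hp] at hs; omega

private lemma partial_sum_one (Δ : Polynomial ℤ) (h1 : Δ.eval 1 = 1) (n : ℕ)
    (hn : Δ.natDegree ≤ n) :
    ∑ i ∈ Finset.range (n+1), Δ.coeff i = 1 := by
  have hsp := sum_coeff_split Δ n
  have he : Δ.support.filter (fun j => n < j) = ∅ := by
    rw [Finset.filter_eq_empty_iff]
    intro j hj
    have := Polynomial.le_natDegree_of_mem_supp j hj
    omega
  rw [he, h1] at hsp
  simpa using hsp

/-- The complex partial-sum coefficients. -/
private noncomputable def cc (Δ : Polynomial ℤ) (r : ℕ) : ℂ :=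
  ((∑ i ∈ Finset.range (r+1), Δ.coeff i : ℤ) : ℂ)

private lemma cc01 (Δ : Polynomial ℤ) (hΔ : AlternatingCoeffs Δ) (h1 : Δ.eval 1 = 1) (r : ℕ) :
    cc Δ r = 0 ∨ cc Δ r = 1 := by
  rcases partial_sum_spec Δ hΔ h1 r with h | h
  · left; simp [cc, h]
  · right; simp [cc, h]

private lemma key_poly (Δ : Polynomial ℤ) (h1 : Δ.eval 1 = 1) (a : ℕ)
    (hdeg : Δ.natDegree ≤ a) (x : ℂ) :
    Polynomial.aeval x Δ = (1-x) * ∑ r ∈ Finset.range a, cc Δ r * x^r + x^a := by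
  rw [Polynomial.aeval_eq_sum_range' (Nat.lt_succ_of_le hdeg) x]
  simp only [zsmul_eq_mul]
  rw [abel_sum (fun i => ((Δ.coeff i : ℂ))) x a]
  have hlast : ∑ i ∈ Finset.range (a+1), ((Δ.coeff i : ℂ)) = 1 := by
    have h := partial_sum_one Δ h1 a hdeg
    have := congrArg (fun z : ℤ => (z : ℂ)) h
    push_cast at this
    exact this
  rw [hlast, one_mul]
  congr 1
  congr 1
  refine Finset.sum_congr rfl fun r _ => ?_
  congr 1
  simp [cc]

private lemma root_sum (a : ℕ) (ha : 0 < a) (m : ℕ) :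
    ∑ ξ ∈ Polynomial.nthRootsFinset a (1 : ℂ), ξ^m = if a ∣ m then (a:ℂ) else 0 := by
  obtain ⟨ζ, hζ⟩ : ∃ ζ : ℂ, IsPrimitiveRoot ζ a := ⟨_, Complex.isPrimitiveRoot_exp a ha.ne'⟩
  by_cases hdvd : a ∣ m
  · rw [if_pos hdvd]
    obtain ⟨c, rfl⟩ := hdvd
    have hone : ∀ ξ ∈ Polynomial.nthRootsFinset a (1 : ℂ), ξ^(a*c) = (1:ℂ) := by
      intro ξ hξ
      rw [pow_mul, (Polynomial.mem_nthRootsFinset ha (1 : ℂ)).mp hξ, one_pow]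
    rw [Finset.sum_congr rfl hone, Finset.sum_const, hζ.card_nthRootsFinset]
    simp
  · rw [if_neg hdvd]
    have hζm : ζ^m ≠ 1 := fun h => hdvd ((hζ.pow_eq_one_iff_dvd m).mp h)
    have hζ0 : ζ ≠ 0 := hζ.ne_zero ha.ne'
    have hζmem : ζ ∈ Polynomial.nthRootsFinset a (1 : ℂ) :=
      (Polynomial.mem_nthRootsFinset ha (1 : ℂ)).mpr hζ.pow_eq_one
    have hζinv : ζ⁻¹ ∈ Polynomial.nthRootsFinset a (1 : ℂ) := by
      rw [Polynomial.mem_nthRootsFinset ha (1 : ℂ), inv_pow, hζ.pow_eq_one, inv_one]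
    have hre : ∑ ξ ∈ Polynomial.nthRootsFinset a (1 : ℂ), (ζ*ξ)^m
        = ∑ ξ ∈ Polynomial.nthRootsFinset a (1 : ℂ), ξ^m := by
      refine Finset.sum_nbij' (fun ξ => ζ * ξ) (fun ξ => ζ⁻¹ * ξ) ?_ ?_ ?_ ?_ ?_
      · intro x hx; have := Polynomial.mul_mem_nthRootsFinset hζmem hx; rwa [one_mul] at this
      · intro x hx; have := Polynomial.mul_mem_nthRootsFinset hζinv hx; rwa [one_mul] at this
      · intro x _
        show ζ⁻¹ * (ζ * x) = x
        rw [← mul_assoc, inv_mul_cancel₀ hζ0, one_mul]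
      · intro x _
        show ζ * (ζ⁻¹ * x) = x
        rw [← mul_assoc, mul_inv_cancel₀ hζ0, one_mul]
      · intro x _; rfl
    have h2 : ∑ ξ ∈ Polynomial.nthRootsFinset a (1 : ℂ), (ζ*ξ)^m
        = ζ^m * ∑ ξ ∈ Polynomial.nthRootsFinset a (1 : ℂ), ξ^m := by
      rw [Finset.mul_sum]
      exact Finset.sum_congr rfl fun ξ _ => by rw [mul_pow]
    rw [h2] at hre
    have hfac : (ζ^m - 1) * ∑ ξ ∈ Polynomial.nthRootsFinset a (1 : ℂ), ξ^m = 0 := by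
      linear_combination hre
    rcases mul_eq_zero.mp hfac with h | h
    · exact absurd (sub_eq_zero.mp h) hζm
    · exact h

/-- The building-block function `g`. -/
private noncomputable def gg (Δ : Polynomial ℤ) (a : ℕ) (y : ℂ) (r : ℕ) : ℂ :=
  (y^r * (cc Δ r * (1-y^a) + y^a)) / (1-y^a)

private lemma term_expand (Δ : Polynomial ℤ) (h1 : Δ.eval 1 = 1) (a : ℕ) (ha : 0 < a)
    (hdeg : Δ.natDegree ≤ a) (y : ℂ) (hy : y^a ≠ 1)
    (x : ℂ) (hx : x ∈ Polynomial.nthRootsFinset a (1 : ℂ)) :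
    Polynomial.aeval (x*y) Δ / (1 - x*y) = ∑ r ∈ Finset.range a, x^r * gg Δ a y r := by
  have hxa : x^a = 1 := (Polynomial.mem_nthRootsFinset ha (1 : ℂ)).mp hx
  have hpow : (x*y)^a = y^a := by rw [mul_pow, hxa, one_mul]
  have hden : (1:ℂ) - y^a ≠ 0 := sub_ne_zero.mpr (Ne.symm hy)
  have hxy1 : (1:ℂ) - x*y ≠ 0 := by
    intro h
    apply hy
    have h1' : (1:ℂ) = x*y := sub_eq_zero.mp h
    rw [← hpow, ← h1', one_pow]
  have hgeo : (1 - x*y) * (∑ r ∈ Finset.range a, (x*y)^r) = 1 - y^a := by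
    have h := geom_sum_mul (x*y) a
    linear_combination (-1 : ℂ) * h - hpow
  have hcomb : ∑ r ∈ Finset.range a, x^r * gg Δ a y r
      = (∑ r ∈ Finset.range a, (x*y)^r * (cc Δ r * (1-y^a) + y^a)) / (1-y^a) := by
    rw [Finset.sum_div]
    refine Finset.sum_congr rfl fun r _ => ?_
    simp only [gg]
    rw [mul_pow]
    ring
  rw [hcomb, div_eq_div_iff hxy1 hden, key_poly Δ h1 a hdeg (x*y), hpow]
  have hsplit : ∑ r ∈ Finset.range a, (x*y)^r * (cc Δ r * (1-y^a) + y^a)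
      = (1-y^a) * (∑ r ∈ Finset.range a, cc Δ r * (x*y)^r)
        + y^a * (∑ r ∈ Finset.range a, (x*y)^r) := by
    rw [Finset.mul_sum, Finset.mul_sum, ← Finset.sum_add_distrib]
    exact Finset.sum_congr rfl fun r _ => by ring
  rw [hsplit]
  linear_combination (-(y^a)) * hgeo

private lemma dvd_aux (a s : ℕ) (ha : 0 < a) (hs : s < a) : a ∣ s + (a - s) % a := by
  by_cases hs0 : s = 0
  · subst hs0
    simp [Nat.mod_self]
  · rw [Nat.mod_eq_of_lt (by omega)]
    exact ⟨1, by omega⟩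

private lemma not_dvd_aux (a s r : ℕ) (ha : 0 < a) (hs : s < a) (hr : r < a)
    (hne : r ≠ (a - s) % a) : ¬ a ∣ s + r := by
  intro hdvd
  obtain ⟨c, hc⟩ := hdvd
  have hb1 : c < 2 := by
    by_contra hcon
    push_neg at hcon
    have h2 : a * 2 ≤ a * c := Nat.mul_le_mul_left a hcon
    omega
  by_cases hs0 : s = 0
  · subst hs0
    simp only [Nat.sub_zero, Nat.mod_self] at hne
    interval_cases c <;> omega
  · have hm : (a - s) % a = a - s := Nat.mod_eq_of_lt (by omega)
    rw [hm] at hne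
    interval_cases c <;> omega

private lemma sum_over_roots (Δ : Polynomial ℤ) (h1 : Δ.eval 1 = 1) (a : ℕ) (ha : 0 < a)
    (hdeg : Δ.natDegree ≤ a) (y : ℂ) (hy : y^a ≠ 1) (s : ℕ) (hs : s < a) :
    ∑ x ∈ Polynomial.nthRootsFinset a (1 : ℂ), x^s * (Polynomial.aeval (x*y) Δ / (1 - x*y))
      = (a:ℂ) * gg Δ a y ((a - s) % a) := by
  rw [Finset.sum_congr rfl (fun x hx => by rw [term_expand Δ h1 a ha hdeg y hy x hx])]
  have h2 : ∀ x ∈ Polynomial.nthRootsFinset a (1 : ℂ),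
      x^s * ∑ r ∈ Finset.range a, x^r * gg Δ a y r
        = ∑ r ∈ Finset.range a, x^(s+r) * gg Δ a y r := by
    intro x _
    rw [Finset.mul_sum]
    exact Finset.sum_congr rfl fun r _ => by rw [pow_add]; ring
  rw [Finset.sum_congr rfl h2, Finset.sum_comm]
  have h3 : ∀ r ∈ Finset.range a, ∑ x ∈ Polynomial.nthRootsFinset a (1 : ℂ), x^(s+r) * gg Δ a y r
      = (if a ∣ s + r then (a:ℂ) else 0) * gg Δ a y r := by
    intro r _
    rw [← Finset.sum_mul, root_sum a ha (s+r)]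
  rw [Finset.sum_congr rfl h3, Finset.sum_eq_single ((a - s) % a)]
  · rw [if_pos (dvd_aux a s ha hs)]
  · intro r hr hne
    rw [if_neg (not_dvd_aux a s r ha hs (Finset.mem_range.mp hr) hne), zero_mul]
  · intro hnot
    exact absurd (Finset.mem_range.mpr (Nat.mod_lt _ ha)) hnot

private lemma mod_invol (a : ℕ) (ha : 0 < a) {s : ℕ} (hs : s < a) :
    (a - (a - s) % a) % a = s := by
  rcases Nat.eq_zero_or_pos s with rfl | hpos
  · simp [Nat.mod_self]
  · rw [Nat.mod_eq_of_lt (by omega : a - s < a), Nat.sub_sub_self (le_of_lt hs),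
      Nat.mod_eq_of_lt hs]

private lemma char_filter {d : ℕ} (a : ℕ) (ha : 0 < a) (F : (Fin d → ℂ) → ℂ)
    [DecidablePred (fun ξ : Fin d → ℂ => ∏ i, ξ i = 1)] :
    ∑ ξ ∈ (Fintype.piFinset fun _ : Fin d => Polynomial.nthRootsFinset a (1 : ℂ)).filter
        (fun ξ => ∏ i, ξ i = 1), F ξ
      = (1/(a:ℂ)) * ∑ s ∈ Finset.range a,
          ∑ ξ ∈ Fintype.piFinset (fun _ : Fin d => Polynomial.nthRootsFinset a (1 : ℂ)),
            (∏ i, ξ i)^s * F ξ := by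
  have haC : (a:ℂ) ≠ 0 := Nat.cast_ne_zero.mpr ha.ne'
  rw [Finset.sum_comm]
  have hz : ∀ ξ ∈ Fintype.piFinset (fun _ : Fin d => Polynomial.nthRootsFinset a (1 : ℂ)),
      ∑ s ∈ Finset.range a, (∏ i, ξ i)^s * F ξ
        = (if (∏ i, ξ i) = 1 then (a:ℂ) else 0) * F ξ := by
    intro ξ hξ
    rw [← Finset.sum_mul]
    congr 1
    have hξa : (∏ i, ξ i)^a = 1 := by
      rw [← Finset.prod_pow]
      rw [Finset.prod_congr rfl
        (fun i _ => (Polynomial.mem_nthRootsFinset ha (1 : ℂ)).mp (Fintype.mem_piFinset.mp hξ i))]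
      exact Finset.prod_const_one
    by_cases hone : (∏ i, ξ i) = 1
    · rw [if_pos hone, hone]
      simp
    · rw [if_neg hone, geom_sum_eq hone a, hξa]
      simp
  rw [Finset.sum_congr rfl hz, Finset.mul_sum, Finset.sum_filter]
  refine Finset.sum_congr rfl fun ξ _ => ?_
  by_cases hone : (∏ i, ξ i) = 1
  · rw [if_pos hone, if_pos hone]
    field_simp
  · rw [if_neg hone, if_neg hone]
    simp

private lemma sum_pi_prod {d : ℕ} (μ : Finset ℂ) (w : Fin d → ℂ → ℂ) (s : ℕ) :
    ∑ ξ ∈ Fintype.piFinset (fun _ : Fin d => μ), (∏ i, ξ i)^s * ∏ i, w i (ξ i)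
      = ∏ i, ∑ x ∈ μ, x^s * w i x := by
  classical
  rw [Finset.prod_univ_sum]
  refine Finset.sum_congr rfl fun ξ _ => ?_
  rw [Finset.prod_mul_distrib, Finset.prod_pow]

private lemma prod_if_const {d : ℕ} (m : ℕ) (hm : m + 1 = d) (G H : ℂ) :
    (∏ i : Fin d, if (i:ℕ) < m then G else H) = G^m * H := by
  classical
  rw [← Finset.prod_filter_mul_prod_filter_not Finset.univ (fun i : Fin d => (i:ℕ) < m)]
  have h2 : Finset.univ.filter (fun i : Fin d => ¬ (i:ℕ) < m) = {(⟨m, by omega⟩ : Fin d)} := by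
    ext i
    simp only [Finset.mem_filter, Finset.mem_univ, true_and, Finset.mem_singleton, Fin.ext_iff]
    have := i.isLt
    omega
  have h1c : (Finset.univ.filter (fun i : Fin d => (i:ℕ) < m)).card = m := by
    have htot := Finset.card_filter_add_card_filter_not
      (s := (Finset.univ : Finset (Fin d))) (p := fun i : Fin d => (i:ℕ) < m)
    rw [h2] at htot
    simp only [Finset.card_singleton, Finset.card_univ, Fintype.card_fin] at htot
    omega
  have hA : ∏ i ∈ Finset.univ.filter (fun i : Fin d => (i:ℕ) < m),
      (if (i:ℕ) < m then G else H) = G^m := by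
    rw [Finset.prod_congr rfl (fun i hi => by rw [if_pos (Finset.mem_filter.mp hi).2]),
      Finset.prod_const, h1c]
  have hB : ∏ i ∈ Finset.univ.filter (fun i : Fin d => ¬ (i:ℕ) < m),
      (if (i:ℕ) < m then G else H) = H := by
    rw [h2, Finset.prod_singleton, if_neg (by simp)]
  rw [hA, hB]

/-- The per-factor function. -/
private noncomputable def hfun {d : ℕ} (Δ : Polynomial ℤ) (m k : ℕ) (t : ℂ) (i : Fin d)
    (x : ℂ) : ℂ :=
  if (i:ℕ) < m then Polynomial.aeval (x * t) Δ / (1 - x * t)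
  else Polynomial.aeval (x * t^k) Δ / (1 - x * t^k)

open Classical in
/-- Algebraic Lemma (b). -/
theorem algebraic_lemma_b (Δ : Polynomial ℤ) (hΔ : AlternatingCoeffs Δ)
    (h1 : Δ.eval 1 = 1) (a d k : ℕ) (ha : 0 < a) (hdeg : Δ.natDegree ≤ a)
    (hd : 2 ≤ d) (hk : 1 ≤ k)
    (t : ℂ) (ht : t ^ a ≠ 1) (htk : t ^ (a * k) ≠ 1) (htd : t ^ (d + k - 1) ≠ 1) :
    (1 / (a : ℂ) ^ (d - 1)) *
      ∑ ξ ∈ (Fintype.piFinset fun _ : Fin d => Polynomial.nthRootsFinset a (1 : ℂ)).filter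
          (fun ξ => ∏ i, ξ i = 1),
        (∏ i ∈ Finset.univ.filter (fun i : Fin d => (i : ℕ) < d - 1),
            Polynomial.aeval (ξ i * t) Δ / (1 - ξ i * t)) *
          (Polynomial.aeval (ξ ⟨d - 1, by omega⟩ * t ^ k) Δ /
            (1 - ξ ⟨d - 1, by omega⟩ * t ^ k))
      = (1 - t ^ (a * (d + k - 1))) * Polynomial.aeval (t ^ (d + k - 1)) Δ /
          ((1 - t ^ a) ^ (d - 1) * (1 - t ^ (a * k)) * (1 - t ^ (d + k - 1))) := by
  classical
  obtain ⟨e, he1, he2⟩ : ∃ e, d - 1 = e ∧ d + k - 1 = e + k := ⟨d - 1, rfl, by omega⟩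
  have hme : e + 1 = d := by omega
  simp only [he1, he2]
  have haC : (a:ℂ) ≠ 0 := Nat.cast_ne_zero.mpr ha.ne'
  have hD1 : (1:ℂ) - t^a ≠ 0 := sub_ne_zero.mpr (Ne.symm ht)
  have hDk : (1:ℂ) - t^(a*k) ≠ 0 := sub_ne_zero.mpr (Ne.symm htk)
  have hDu : (1:ℂ) - t^(e+k) ≠ 0 := by
    rw [← he2]; exact sub_ne_zero.mpr (Ne.symm htd)
  have hka : (t^k)^a = t^(a*k) := by rw [← pow_mul, mul_comm]
  have htka : (t^k)^a ≠ 1 := by rw [hka]; exact htk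
  -- Step 1 : rewrite the summand using `hfun`
  have hstep1 : ∀ ξ : Fin d → ℂ,
      (∏ i ∈ Finset.univ.filter (fun i : Fin d => (i : ℕ) < e),
          Polynomial.aeval (ξ i * t) Δ / (1 - ξ i * t)) *
        (Polynomial.aeval (ξ ⟨e, by omega⟩ * t ^ k) Δ /
          (1 - ξ ⟨e, by omega⟩ * t ^ k))
      = ∏ i, hfun Δ e k t i (ξ i) := by
    intro ξ
    rw [← Finset.prod_filter_mul_prod_filter_not Finset.univ (fun i : Fin d => (i:ℕ) < e)
      (fun i => hfun Δ e k t i (ξ i))]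
    congr 1
    · refine Finset.prod_congr rfl fun i hi => ?_
      simp only [hfun]
      rw [if_pos (Finset.mem_filter.mp hi).2]
    · have h2 : Finset.univ.filter (fun i : Fin d => ¬ (i:ℕ) < e)
          = {(⟨e, by omega⟩ : Fin d)} := by
        ext i
        simp only [Finset.mem_filter, Finset.mem_univ, true_and, Finset.mem_singleton,
          Fin.ext_iff]
        have := i.isLt
        omega
      rw [h2, Finset.prod_singleton]
      simp only [hfun]
      rw [if_neg (by simp)]
  rw [Finset.sum_congr rfl (fun ξ _ => hstep1 ξ), char_filter a ha]
  -- Step 2 : evaluate the inner sums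
  have hstep3 : ∀ s ∈ Finset.range a,
      ∑ ξ ∈ Fintype.piFinset (fun _ : Fin d => Polynomial.nthRootsFinset a (1 : ℂ)),
          (∏ i, ξ i)^s * ∏ i, hfun Δ e k t i (ξ i)
        = (a:ℂ)^d * ((gg Δ a t ((a-s)%a))^e * gg Δ a (t^k) ((a-s)%a)) := by
    intro s hs
    rw [sum_pi_prod]
    have hsum_i : ∀ i : Fin d, ∑ x ∈ Polynomial.nthRootsFinset a (1 : ℂ), x^s * hfun Δ e k t i x
        = (a:ℂ) * (if (i:ℕ) < e then gg Δ a t ((a-s)%a) else gg Δ a (t^k) ((a-s)%a)) := by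
      intro i
      by_cases hi : (i:ℕ) < e
      · simp only [hfun, hi, if_true]
        exact sum_over_roots Δ h1 a ha hdeg t ht s (Finset.mem_range.mp hs)
      · simp only [hfun, hi, if_false]
        exact sum_over_roots Δ h1 a ha hdeg (t^k) htka s (Finset.mem_range.mp hs)
    rw [Finset.prod_congr rfl (fun i _ => hsum_i i), Finset.prod_mul_distrib,
      prod_if_const e hme, Finset.prod_const, Finset.card_univ, Fintype.card_fin]
  rw [Finset.sum_congr rfl hstep3, ← Finset.mul_sum]
  -- Step 3 : reindex the sum
  have hreindex : ∑ s ∈ Finset.range a, (gg Δ a t ((a-s)%a))^e * gg Δ a (t^k) ((a-s)%a)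
      = ∑ r ∈ Finset.range a, (gg Δ a t r)^e * gg Δ a (t^k) r := by
    refine Finset.sum_nbij' (fun s => (a-s)%a) (fun r => (a-r)%a) ?_ ?_ ?_ ?_ ?_
    · intro s _; exact Finset.mem_range.mpr (Nat.mod_lt _ ha)
    · intro r _; exact Finset.mem_range.mpr (Nat.mod_lt _ ha)
    · intro s hs; exact mod_invol a ha (Finset.mem_range.mp hs)
    · intro r hr; exact mod_invol a ha (Finset.mem_range.mp hr)
    · intro s _; rfl
  rw [hreindex]
  -- Step 4 : the final algebraic identity
  have hgg1 : ∀ r ∈ Finset.range a, (gg Δ a t r)^e * gg Δ a (t^k) r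
      = ((t^(e+k))^r * (cc Δ r + (1 - cc Δ r) * (t^(e+k))^a))
          / ((1-t^a)^e * (1-t^(a*k))) := by
    intro r _
    have hne : (1-t^a)^e * (1-t^(a*k)) ≠ 0 := mul_ne_zero (pow_ne_zero _ hD1) hDk
    rcases cc01 Δ hΔ h1 r with hc | hc <;>
    · simp only [gg, hka, hc]
      rw [div_pow, div_mul_div_comm, div_eq_div_iff hne hne]
      ring
  have hfinal : ∑ r ∈ Finset.range a, (gg Δ a t r)^e * gg Δ a (t^k) r
      = (1 - t ^ (a * (e + k))) * Polynomial.aeval (t ^ (e+k)) Δ /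
          ((1 - t ^ a) ^ e * (1 - t ^ (a * k)) * (1 - t ^ (e+k))) := by
    have hne1 : (1-t^a)^e * (1-t^(a*k)) ≠ 0 := mul_ne_zero (pow_ne_zero _ hD1) hDk
    have hne2 : (1-t^a)^e * (1-t^(a*k)) * (1-t^(e+k)) ≠ 0 := mul_ne_zero hne1 hDu
    have hua : t^(a*(e+k)) = (t^(e+k))^a := by rw [← pow_mul, mul_comm]
    rw [Finset.sum_congr rfl hgg1, ← Finset.sum_div, hua,
      key_poly Δ h1 a hdeg (t^(e+k)), div_eq_div_iff hne1 hne2]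
    have hν : ∑ r ∈ Finset.range a, (t^(e+k))^r * (cc Δ r + (1 - cc Δ r) * (t^(e+k))^a)
        = (∑ r ∈ Finset.range a, cc Δ r * (t^(e+k))^r)
          + (t^(e+k))^a * (∑ r ∈ Finset.range a, (t^(e+k))^r)
          - (t^(e+k))^a * (∑ r ∈ Finset.range a, cc Δ r * (t^(e+k))^r) := by
      rw [Finset.mul_sum, Finset.mul_sum, ← Finset.sum_add_distrib, ← Finset.sum_sub_distrib]
      exact Finset.sum_congr rfl fun r _ => by ring
    have hgeoU : (1 - t^(e+k)) * (∑ r ∈ Finset.range a, (t^(e+k))^r)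
        = 1 - (t^(e+k))^a := by
      linear_combination (-1:ℂ) * geom_sum_mul (t^(e+k)) a
    rw [hν]
    linear_combination ((1-t^a)^e * (1-t^(a*k)) * (t^(e+k))^a) * hgeoU
  rw [hfinal]
  have had : (a:ℂ)^d = (a:ℂ)^e * (a:ℂ) := by rw [← hme, pow_succ]
  have harith : ∀ X : ℂ, (1/(a:ℂ)^e) * ((1/(a:ℂ)) * (((a:ℂ)^e * (a:ℂ)) * X)) = X := by
    intro X
    field_simp
  rw [had]
  exact harith _
end

section
/- Let a and k be integers with 1 ≤ k < a, and A, t complex numbers with t^a ≠ 1. Then (1/a) Σ_{ξ^a=1} (ξ̄ A t)^k/(1-ξt) = A^k t^{2k}/(1-t^a). -/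
open Polynomial Finset in
lemma sum_nthRootsFinset_pow (a : ℕ) (ha : 0 < a) (m : ℕ) :
    ∑ ξ ∈ nthRootsFinset a (1 : ℂ), ξ ^ m = if a ∣ m then (a : ℂ) else 0 := by
  have : NeZero a := ⟨ha.ne'⟩
  obtain ⟨ζ, hζ⟩ : ∃ ζ : ℂ, IsPrimitiveRoot ζ a :=
    ⟨_, Complex.isPrimitiveRoot_exp a ha.ne'⟩
  have himg : nthRootsFinset a (1 : ℂ) = (Finset.range a).image (ζ ^ ·) := by
    ext x
    simp only [Finset.mem_image, Finset.mem_range, Polynomial.mem_nthRootsFinset ha]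
    constructor
    · intro hx
      obtain ⟨i, hi, rfl⟩ := hζ.eq_pow_of_pow_eq_one hx
      exact ⟨i, hi, rfl⟩
    · rintro ⟨i, _, rfl⟩
      rw [← pow_mul, mul_comm, pow_mul, hζ.pow_eq_one, one_pow]
  rw [himg, Finset.sum_image (fun i hi j hj hij =>
    hζ.pow_inj (Finset.mem_range.1 hi) (Finset.mem_range.1 hj) hij)]
  simp_rw [← pow_mul, mul_comm, pow_mul]
  by_cases hd : a ∣ m
  · obtain ⟨c, rfl⟩ := hd
    simp [pow_mul, hζ.pow_eq_one]
  · have hne : ζ ^ m ≠ 1 := fun h => hd (hζ.dvd_of_pow_eq_one m h)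
    rw [geom_sum_eq hne, ← pow_mul, mul_comm, pow_mul, hζ.pow_eq_one, one_pow,
      sub_self, zero_div, if_neg hd]

theorem avg_monomial_over_roots (a k : ℕ) (hk : 1 ≤ k) (hka : k < a)
    (A t : ℂ) (ht : t ^ a ≠ 1) :
    (1 / (a : ℂ)) * ∑ ξ ∈ Polynomial.nthRootsFinset a (1 : ℂ), (ξ⁻¹ * A * t) ^ k / (1 - ξ * t)
      = A ^ k * t ^ (2 * k) / (1 - t ^ a) := by
  have ha : 0 < a := by omega
  have hta : (1 : ℂ) - t ^ a ≠ 0 := sub_ne_zero.mpr (Ne.symm ht)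
  have haC : (a : ℂ) ≠ 0 := Nat.cast_ne_zero.mpr ha.ne'
  have key : ∀ ξ ∈ Polynomial.nthRootsFinset a (1 : ℂ),
      (ξ⁻¹ * A * t) ^ k / (1 - ξ * t)
        = (A ^ k * t ^ k / (1 - t ^ a)) * ∑ j ∈ Finset.range a, ξ ^ (a - k + j) * t ^ j := by
    intro ξ hξ
    have hξa : ξ ^ a = 1 := (Polynomial.mem_nthRootsFinset ha (1 : ℂ)).1 hξ
    have hξ0 : ξ ≠ 0 := by
      intro h
      rw [h, zero_pow ha.ne'] at hξa
      exact zero_ne_one hξa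
    have hgeom : (1 - ξ * t) * ∑ j ∈ Finset.range a, (ξ * t) ^ j = 1 - t ^ a := by
      have h := geom_sum_mul (ξ * t) a
      have h2 : (ξ * t) ^ a = t ^ a := by rw [mul_pow, hξa, one_mul]
      calc (1 - ξ * t) * ∑ j ∈ Finset.range a, (ξ * t) ^ j
          = -((∑ j ∈ Finset.range a, (ξ * t) ^ j) * (ξ * t - 1)) := by ring
        _ = -((ξ * t) ^ a - 1) := by rw [h]
        _ = 1 - t ^ a := by rw [h2]; ring
    have h1 : (1 - ξ * t) ≠ 0 := by
      intro h
      rw [h, zero_mul] at hgeom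
      exact hta hgeom.symm
    have hinv : (ξ⁻¹) ^ k = ξ ^ (a - k) := by
      have : ξ ^ (a - k) * ξ ^ k = 1 := by
        rw [← pow_add, Nat.sub_add_cancel hka.le, hξa]
      field_simp
      rw [one_div, inv_pow]; exact (eq_inv_of_mul_eq_one_left this).symm
    have hmain : (ξ⁻¹ * A * t) ^ k * ∑ j ∈ Finset.range a, (ξ * t) ^ j
        = A ^ k * t ^ k * ∑ j ∈ Finset.range a, ξ ^ (a - k + j) * t ^ j := by
      rw [Finset.mul_sum, Finset.mul_sum]
      refine Finset.sum_congr rfl fun j _ => ?_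
      rw [mul_pow, mul_pow, hinv, pow_add, mul_pow]
      ring
    rw [div_eq_iff h1, div_mul_eq_mul_div, div_mul_eq_mul_div, eq_div_iff hta, ← hgeom]
    linear_combination (1 - ξ * t) * hmain
  rw [Finset.sum_congr rfl key, ← Finset.mul_sum, Finset.sum_comm]
  have inner : ∀ j ∈ Finset.range a,
      ∑ ξ ∈ Polynomial.nthRootsFinset a (1 : ℂ), ξ ^ (a - k + j) * t ^ j
        = (if j = k then (a : ℂ) * t ^ k else 0) := by
    intro j hj
    rw [← Finset.sum_mul, sum_nthRootsFinset_pow a ha]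
    have hiff : a ∣ (a - k + j) ↔ j = k := by
      constructor
      · intro hd
        have h1 : a - k + j = a := by
          have hle : a ≤ a - k + j := Nat.le_of_dvd (by omega) hd
          have hlt : a - k + j < 2 * a := by
            have := Finset.mem_range.1 hj
            omega
          obtain ⟨c, hc⟩ := hd
          rcases c with _ | _ | c
          · omega
          · omega
          · exfalso
            have : 2 * a ≤ a * (c + 1 + 1) := by nlinarith
            omega
        omega
      · rintro rfl
        exact ⟨1, by omega⟩
    rw [if_congr hiff rfl rfl]
    split_ifs with h
    · rw [h]
    · rw [zero_mul]
  rw [Finset.sum_congr rfl inner, Finset.sum_ite_eq' (Finset.range a) k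
    (fun _ => (a : ℂ) * t ^ k), if_pos (Finset.mem_range.2 hka)]
  field_simp
  ring
end

section
/- Let Δ(t) be a polynomial with alternating coefficients, Δ(1) = 1, and let a ≥ deg Δ. Then Σ over nontrivial a-th roots of unity ξ of Δ(ξ)Δ(ξ̄)/((1-ξ)(1-ξ̄)) = (a²-1)/12 + Δ'(1) − Δ'(1)² + Δ''(1). -/
lemma signSum (t : Finset ℕ) :
    (∑ j ∈ t, (-1:ℤ) ^ ((t.filter (fun x => j < x)).card)) = if Even t.card then 0 else 1 := by
  induction t using Finset.induction_on_max with
  | empty => simp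
  | insert m s hms ih =>
    have hm : m ∉ s := fun h => lt_irrefl m (hms m h)
    rw [Finset.sum_insert hm]
    have h1 : ((insert m s).filter (fun x => m < x)).card = 0 := by
      rw [Finset.card_eq_zero, Finset.filter_eq_empty_iff]
      intro x hx
      rcases Finset.mem_insert.1 hx with rfl | hx
      · simp
      · exact not_lt.2 (hms x hx).le
    have h2 : ∀ j ∈ s, ((insert m s).filter (fun x => j < x)).card
        = (s.filter (fun x => j < x)).card + 1 := by
      intro j hj
      rw [Finset.filter_insert, if_pos (hms j hj)]
      rw [Finset.card_insert_of_notMem (fun h => hm (Finset.mem_of_mem_filter m h))]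
    rw [h1, Finset.sum_congr rfl (fun j hj => by rw [h2 j hj])]
    simp only [pow_succ, pow_zero]
    rw [← Finset.sum_mul, ih]
    rw [Finset.card_insert_of_notMem hm]
    rcases Nat.even_or_odd s.card with h | h
    · simp [h, Nat.even_add_one, h]
    · simp [Nat.not_even_iff_odd.2 h, Nat.even_add_one, Nat.not_even_iff_odd.2 h]

lemma sumIdMul2 {R : Type*} [CommRing R] (n : ℕ) :
    (∑ k ∈ Finset.range n, (k:R)) * 2 = n * (n-1) := by
  induction n with
  | zero => simp
  | succ n ih => rw [Finset.sum_range_succ]; push_cast; push_cast at ih; linear_combination ih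

lemma sumSqMul6 {R : Type*} [CommRing R] (n : ℕ) :
    (∑ k ∈ Finset.range n, (k:R)^2) * 6 = n * (n-1) * (2*n-1) := by
  induction n with
  | zero => simp
  | succ n ih => rw [Finset.sum_range_succ]; push_cast; push_cast at ih; linear_combination ih

lemma sumKPow (x : ℂ) (n : ℕ) :
    (∑ k ∈ Finset.range n, (k:ℂ) * x^k) * (1-x)
      = (∑ k ∈ Finset.range n, x^k) - 1 - ((n:ℂ)-1) * x^n := by
  induction n with
  | zero => simp
  | succ n ih =>
    rw [Finset.sum_range_succ, Finset.sum_range_succ, add_mul, ih]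
    push_cast
    ring

lemma swapSum {M : Type*} [AddCommMonoid M] (a : ℕ) (f : ℕ → ℕ → M) :
    ∑ k ∈ Finset.range a, ∑ j ∈ Finset.Ioc k a, f k j
      = ∑ j ∈ Finset.range (a+1), ∑ k ∈ Finset.range j, f k j := by
  have h1 : ∀ k, Finset.Ioc k a = (Finset.range (a+1)).filter (fun j => k < j) := by
    intro k; ext j; simp only [Finset.mem_Ioc, Finset.mem_filter, Finset.mem_range]; omega
  calc ∑ k ∈ Finset.range a, ∑ j ∈ Finset.Ioc k a, f k j
      = ∑ k ∈ Finset.range a, ∑ j ∈ Finset.range (a+1), if k < j then f k j else 0 := by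
        refine Finset.sum_congr rfl fun k _ => ?_
        rw [h1 k, Finset.sum_filter]
    _ = ∑ j ∈ Finset.range (a+1), ∑ k ∈ Finset.range a, if k < j then f k j else 0 :=
        Finset.sum_comm
    _ = ∑ j ∈ Finset.range (a+1), ∑ k ∈ Finset.range j, f k j := by
        refine Finset.sum_congr rfl fun j hj => ?_
        rw [← Finset.sum_filter]
        congr 1
        ext k
        simp only [Finset.mem_filter, Finset.mem_range] at *
        omega

lemma invSum (a : ℕ) (f : ℂ → ℂ) :
    ∑ ξ ∈ Polynomial.nthRootsFinset a (1 : ℂ), f ξ⁻¹ = ∑ ξ ∈ Polynomial.nthRootsFinset a (1 : ℂ), f ξ := by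
  rcases Nat.eq_zero_or_pos a with rfl | ha
  · simp [Polynomial.nthRootsFinset_zero]
  refine Finset.sum_nbij' (fun ξ => ξ⁻¹) (fun ξ => ξ⁻¹) ?_ ?_ ?_ ?_ ?_
  · intro ξ hξ
    rw [Polynomial.mem_nthRootsFinset ha] at hξ ⊢
    rw [inv_pow, hξ, inv_one]
  · intro ξ hξ
    rw [Polynomial.mem_nthRootsFinset ha] at hξ ⊢
    rw [inv_pow, hξ, inv_one]
  · intro ξ hξ; simp
  · intro ξ hξ; simp
  · intro ξ hξ; simp

lemma rootSum (a : ℕ) (m : ℕ) (hm : 0 < m) (hma : m < a) :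
    ∑ ξ ∈ Polynomial.nthRootsFinset a (1 : ℂ), ξ^m = 0 := by
  have ha : 0 < a := lt_trans hm hma
  obtain ⟨ζ, h⟩ : ∃ ζ : ℂ, IsPrimitiveRoot ζ a :=
    ⟨_, Complex.isPrimitiveRoot_exp a ha.ne'⟩
  have hζmem : ζ ∈ Polynomial.nthRootsFinset a (1 : ℂ) := h.mem_nthRootsFinset ha
  have hζinv : ζ⁻¹ ∈ Polynomial.nthRootsFinset a (1 : ℂ) := by
    rw [Polynomial.mem_nthRootsFinset ha, inv_pow, h.pow_eq_one, inv_one]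
  have key : ∑ ξ ∈ Polynomial.nthRootsFinset a (1 : ℂ), (ζ * ξ)^m
      = ∑ ξ ∈ Polynomial.nthRootsFinset a (1 : ℂ), ξ^m := by
    refine Finset.sum_nbij' (fun ξ => ζ * ξ) (fun ξ => ζ⁻¹ * ξ) ?_ ?_ ?_ ?_ ?_
    · intro ξ hξ; have := Polynomial.mul_mem_nthRootsFinset hζmem hξ; rwa [mul_one] at this
    · intro ξ hξ; have := Polynomial.mul_mem_nthRootsFinset hζinv hξ; rwa [mul_one] at this
    · intro ξ hξ
      rw [← mul_assoc, inv_mul_cancel₀ (Polynomial.ne_zero_of_mem_nthRootsFinset one_ne_zero hζmem), one_mul]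
    · intro ξ hξ
      rw [← mul_assoc, mul_inv_cancel₀ (Polynomial.ne_zero_of_mem_nthRootsFinset one_ne_zero hζmem), one_mul]
    · intro ξ hξ; rfl
  simp only [mul_pow] at key
  rw [← Finset.mul_sum] at key
  have hne : ζ ^ m ≠ 1 := h.pow_ne_one_of_pos_of_lt hm.ne' hma
  have := sub_eq_zero.2 key
  rw [← sub_one_mul] at this
  rcases mul_eq_zero.1 this with h' | h'
  · exact absurd (sub_eq_zero.1 h') hne
  · exact h'

lemma rootPairSum (a : ℕ) (ha : 0 < a) (k l : ℕ) (hk : k < a) (hl : l < a) :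
    ∑ ξ ∈ (Polynomial.nthRootsFinset a (1 : ℂ)).erase 1, ξ^k * (ξ⁻¹)^l
      = if k = l then (a:ℂ) - 1 else -1 := by
  obtain ⟨ζ, h⟩ : ∃ ζ : ℂ, IsPrimitiveRoot ζ a :=
    ⟨_, Complex.isPrimitiveRoot_exp a ha.ne'⟩
  have h1mem : (1:ℂ) ∈ Polynomial.nthRootsFinset a (1 : ℂ) := Polynomial.one_mem_nthRootsFinset ha
  rw [Finset.sum_erase_eq_sub h1mem]
  have hfull : ∑ ξ ∈ Polynomial.nthRootsFinset a (1 : ℂ), ξ^k * (ξ⁻¹)^l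
      = if k = l then (a:ℂ) else 0 := by
    rcases eq_or_ne k l with rfl | hne
    · rw [if_pos rfl]
      rw [Finset.sum_congr rfl (fun ξ hξ => ?_)]
      · rw [Finset.sum_const, h.card_nthRootsFinset, nsmul_eq_mul, mul_one]
      · have hξ0 : ξ ≠ 0 := Polynomial.ne_zero_of_mem_nthRootsFinset one_ne_zero hξ
        rw [← mul_pow, mul_inv_cancel₀ hξ0, one_pow]
    · rw [if_neg hne]
      rcases lt_or_gt_of_ne hne with hkl | hkl
      · -- k < l : term = (ξ⁻¹)^(l-k)
        have : ∀ ξ ∈ Polynomial.nthRootsFinset a (1 : ℂ), ξ^k * (ξ⁻¹)^l = (ξ⁻¹)^(l-k) := by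
          intro ξ hξ
          have hξ0 : ξ ≠ 0 := Polynomial.ne_zero_of_mem_nthRootsFinset one_ne_zero hξ
          have h2 : ξ⁻¹^l = ξ⁻¹^(l-k) * ξ⁻¹^k := by rw [← pow_add]; congr 1; omega
          rw [h2, mul_comm (ξ^k), mul_assoc, ← mul_pow, inv_mul_cancel₀ hξ0, one_pow, mul_one]
        rw [Finset.sum_congr rfl this, invSum a (fun x => x^(l-k))]
        exact rootSum a (l-k) (by omega) (by omega)
      · have : ∀ ξ ∈ Polynomial.nthRootsFinset a (1 : ℂ), ξ^k * (ξ⁻¹)^l = ξ^(k-l) := by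
          intro ξ hξ
          have hξ0 : ξ ≠ 0 := Polynomial.ne_zero_of_mem_nthRootsFinset one_ne_zero hξ
          have h2 : ξ^k = ξ^(k-l) * ξ^l := by rw [← pow_add]; congr 1; omega
          rw [h2, mul_assoc, ← mul_pow, mul_inv_cancel₀ hξ0, one_pow, mul_one]
        rw [Finset.sum_congr rfl this]
        exact rootSum a (k-l) (by omega) (by omega)
  rw [hfull]
  simp only [one_pow, inv_one, mul_one]
  split <;> ring

theorem sum_alexander_over_nontrivial_roots (Δ : Polynomial ℤ)
    (hΔ : AlternatingCoeffs Δ) (h1 : Δ.eval 1 = 1)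
    (a : ℕ) (ha : 0 < a) (hdeg : Δ.natDegree ≤ a) :
    ∑ ξ ∈ (Polynomial.nthRootsFinset a (1 : ℂ)).erase 1,
        (Polynomial.aeval ξ Δ) * (Polynomial.aeval ξ⁻¹ Δ) / ((1 - ξ) * (1 - ξ⁻¹))
      = ((a : ℂ) ^ 2 - 1) / 12 + ((Δ.derivative.eval 1 : ℤ) : ℂ)
        - ((Δ.derivative.eval 1 : ℤ) : ℂ) ^ 2
        + ((Δ.derivative.derivative.eval 1 : ℤ) : ℂ) := by
  classical
  have ha0 : (a:ℂ) ≠ 0 := Nat.cast_ne_zero.2 ha.ne'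
  set q : ℕ → ℤ := fun k => ∑ j ∈ Finset.Ioc k a, Δ.coeff j with hqdef
  -- q takes values in {0,1}
  have hq01 : ∀ k, q k = 0 ∨ q k = 1 := by
    intro k
    set t := Δ.support.filter (fun j => k < j) with ht
    have hsub : t ⊆ Finset.Ioc k a := by
      intro j hj
      obtain ⟨hjs, hkj⟩ := Finset.mem_filter.1 hj
      exact Finset.mem_Ioc.2 ⟨hkj, le_trans (Polynomial.le_natDegree_of_mem_supp j hjs) hdeg⟩
    have hqt : q k = ∑ j ∈ t, Δ.coeff j := by
      rw [hqdef]
      refine (Finset.sum_subset hsub ?_).symm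
      intro j hj hjt
      by_contra hc
      exact hjt (Finset.mem_filter.2 ⟨Polynomial.mem_support_iff.2 hc, (Finset.mem_Ioc.1 hj).1⟩)
    have hsign : ∀ j ∈ t, Δ.coeff j = (-1:ℤ)^((t.filter (fun x => j < x)).card) := by
      intro j hj
      obtain ⟨hjs, hkj⟩ := Finset.mem_filter.1 hj
      have h0 : Δ.coeff j ≠ 0 := Polynomial.mem_support_iff.1 hjs
      rw [(hΔ j).2 h0]
      congr 2
      ext x
      simp only [ht, Finset.mem_filter]
      constructor
      · rintro ⟨h1, h2⟩; exact ⟨⟨h1, lt_trans hkj h2⟩, h2⟩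
      · rintro ⟨⟨h1, _⟩, h2⟩; exact ⟨h1, h2⟩
    rw [hqt, Finset.sum_congr rfl hsign, signSum]
    split
    · left; rfl
    · right; rfl
  have hcoeffbound : ∀ j, a < j → Δ.coeff j = 0 := fun j hj =>
    Polynomial.coeff_eq_zero_of_natDegree_lt (lt_of_le_of_lt hdeg hj)
  have hdeglt : Δ.natDegree < a + 1 := Nat.lt_succ_of_le hdeg
  have hsum1 : ∑ j ∈ Finset.range (a+1), Δ.coeff j = 1 := by
    have := Polynomial.eval_eq_sum_range' hdeglt (1:ℤ)
    rw [h1] at this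
    simpa using this.symm
  -- the telescoping identity
  have hL3 : ∀ x : ℂ, Polynomial.aeval x Δ
      = 1 + (x - 1) * ∑ k ∈ Finset.range a, ((q k : ℤ) : ℂ) * x^k := by
    intro x
    have haev : Polynomial.aeval x Δ = ∑ j ∈ Finset.range (a+1), ((Δ.coeff j : ℤ):ℂ) * x^j := by
      rw [Polynomial.aeval_eq_sum_range' hdeglt]
      refine Finset.sum_congr rfl fun j _ => ?_
      rw [zsmul_eq_mul]
    have hsum1c : ∑ j ∈ Finset.range (a+1), ((Δ.coeff j : ℤ):ℂ) = 1 := by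
      have := congrArg (fun z : ℤ => (z : ℂ)) hsum1
      push_cast at this
      exact this
    have step : (x - 1) * ∑ k ∈ Finset.range a, ((q k : ℤ):ℂ) * x^k
        = (∑ j ∈ Finset.range (a+1), ((Δ.coeff j : ℤ):ℂ) * x^j)
          - ∑ j ∈ Finset.range (a+1), ((Δ.coeff j : ℤ):ℂ) := by
      have e1 : ∑ k ∈ Finset.range a, ((q k : ℤ):ℂ) * x^k
          = ∑ k ∈ Finset.range a, ∑ j ∈ Finset.Ioc k a, ((Δ.coeff j : ℤ):ℂ) * x^k := by
        refine Finset.sum_congr rfl fun k _ => ?_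
        rw [hqdef]
        push_cast
        rw [Finset.sum_mul]
      rw [e1, swapSum]
      rw [Finset.mul_sum]
      rw [← Finset.sum_sub_distrib]
      refine Finset.sum_congr rfl fun j _ => ?_
      have e2 : ∑ k ∈ Finset.range j, ((Δ.coeff j : ℤ):ℂ) * x^k
          = ((Δ.coeff j : ℤ):ℂ) * ∑ k ∈ Finset.range j, x^k := by
        rw [Finset.mul_sum]
      rw [e2]
      have e3 := geom_sum_mul x j
      calc (x - 1) * (((Δ.coeff j : ℤ):ℂ) * ∑ k ∈ Finset.range j, x^k)
          = ((Δ.coeff j : ℤ):ℂ) * ((∑ k ∈ Finset.range j, x^k) * (x - 1)) := by ring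
        _ = ((Δ.coeff j : ℤ):ℂ) * (x^j - 1) := by rw [e3]
        _ = ((Δ.coeff j : ℤ):ℂ) * x^j - ((Δ.coeff j : ℤ):ℂ) := by ring
    rw [haev, step, hsum1c]
    ring
  -- derivative values
  have hd1 : Δ.derivative.eval 1 = ∑ k ∈ Finset.range a, q k := by
    have hswap : ∑ k ∈ Finset.range a, q k
        = ∑ j ∈ Finset.range (a+1), (j:ℤ) * Δ.coeff j := by
      rw [hqdef]
      rw [swapSum a (fun k j => Δ.coeff j)]
      refine Finset.sum_congr rfl fun j _ => ?_
      rw [Finset.sum_const, Finset.card_range, nsmul_eq_mul]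
    have hlt : Δ.derivative.natDegree < a + 1 :=
      Nat.lt_succ_of_le (le_trans (Polynomial.natDegree_derivative_le Δ)
        (le_trans (Nat.sub_le _ _) hdeg))
    have hder : Δ.derivative.eval 1
        = ∑ i ∈ Finset.range (a+1), ((i:ℤ)+1) * Δ.coeff (i+1) := by
      rw [Polynomial.eval_eq_sum_range' hlt]
      refine Finset.sum_congr rfl fun i _ => ?_
      rw [Polynomial.coeff_derivative, one_pow, mul_one]
      push_cast
      ring
    have e1 : ∑ j ∈ Finset.range (a+2), (j:ℤ) * Δ.coeff j
        = ∑ j ∈ Finset.range (a+1), (j:ℤ) * Δ.coeff j := by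
      rw [Finset.sum_range_succ, hcoeffbound (a+1) (by omega), mul_zero, add_zero]
    have e2 : ∑ j ∈ Finset.range (a+2), (j:ℤ) * Δ.coeff j
        = ∑ i ∈ Finset.range (a+1), ((i:ℤ)+1) * Δ.coeff (i+1) := by
      rw [Finset.sum_range_succ']
      simp
    rw [hder, hswap, ← e1, e2]
  have hd2 : Δ.derivative.derivative.eval 1 = 2 * ∑ k ∈ Finset.range a, (k:ℤ) * q k := by
    have hswap2 : ∑ k ∈ Finset.range a, (k:ℤ) * q k
        = ∑ j ∈ Finset.range (a+1), (∑ k ∈ Finset.range j, (k:ℤ)) * Δ.coeff j := by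
      rw [hqdef]
      calc ∑ k ∈ Finset.range a, (k:ℤ) * ∑ j ∈ Finset.Ioc k a, Δ.coeff j
          = ∑ k ∈ Finset.range a, ∑ j ∈ Finset.Ioc k a, (k:ℤ) * Δ.coeff j := by
            exact Finset.sum_congr rfl fun k _ => Finset.mul_sum _ _ _
        _ = ∑ j ∈ Finset.range (a+1), ∑ k ∈ Finset.range j, (k:ℤ) * Δ.coeff j :=
            swapSum a _
        _ = ∑ j ∈ Finset.range (a+1), (∑ k ∈ Finset.range j, (k:ℤ)) * Δ.coeff j :=
            Finset.sum_congr rfl fun j _ => (Finset.sum_mul _ _ _).symm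
    have hstep : 2 * ∑ k ∈ Finset.range a, (k:ℤ) * q k
        = ∑ j ∈ Finset.range (a+1), ((j:ℤ)*((j:ℤ)-1)) * Δ.coeff j := by
      rw [hswap2, Finset.mul_sum]
      refine Finset.sum_congr rfl fun j _ => ?_
      have := sumIdMul2 (R := ℤ) j
      calc 2 * ((∑ k ∈ Finset.range j, (k:ℤ)) * Δ.coeff j)
          = ((∑ k ∈ Finset.range j, (k:ℤ)) * 2) * Δ.coeff j := by ring
        _ = ((j:ℤ)*((j:ℤ)-1)) * Δ.coeff j := by rw [this]
    have hlt2 : Δ.derivative.derivative.natDegree < a + 1 :=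
      Nat.lt_succ_of_le (le_trans (Polynomial.natDegree_derivative_le _)
        (le_trans (Nat.sub_le _ _) (le_trans (Polynomial.natDegree_derivative_le Δ)
          (le_trans (Nat.sub_le _ _) hdeg))))
    have hder2 : Δ.derivative.derivative.eval 1
        = ∑ i ∈ Finset.range (a+1), (((i:ℤ)+2)*((i:ℤ)+1)) * Δ.coeff (i+2) := by
      rw [Polynomial.eval_eq_sum_range' hlt2]
      refine Finset.sum_congr rfl fun i _ => ?_
      rw [Polynomial.coeff_derivative, Polynomial.coeff_derivative, one_pow, mul_one]
      push_cast
      ring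
    have f1 : ∑ j ∈ Finset.range (a+3), ((j:ℤ)*((j:ℤ)-1)) * Δ.coeff j
        = ∑ j ∈ Finset.range (a+1), ((j:ℤ)*((j:ℤ)-1)) * Δ.coeff j := by
      rw [Finset.sum_range_succ, Finset.sum_range_succ, hcoeffbound (a+2) (by omega),
        hcoeffbound (a+1) (by omega)]
      ring
    have f2 : ∑ j ∈ Finset.range (a+3), ((j:ℤ)*((j:ℤ)-1)) * Δ.coeff j
        = ∑ i ∈ Finset.range (a+1), (((i:ℤ)+2)*((i:ℤ)+1)) * Δ.coeff (i+2) := by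
      rw [Finset.sum_range_succ']
      rw [Finset.sum_range_succ']
      push_cast
      simp only [Nat.cast_zero, Nat.cast_one, zero_mul, mul_zero, add_zero, zero_add]
      refine ?_
      have : ∀ i ∈ Finset.range (a+1),
          ((i:ℤ)+1+1)*(((i:ℤ)+1+1)-1) * Δ.coeff (i+1+1)
            = (((i:ℤ)+2)*((i:ℤ)+1)) * Δ.coeff (i+2) := by
        intro i _
        have hidx : i+1+1 = i+2 := rfl
        rw [hidx]
        ring
      rw [Finset.sum_congr rfl this]
    rw [hder2, hstep, ← f1, f2]
  -- the master function
  set u : ℕ → ℂ := fun k => -((k:ℂ)/(a:ℂ)) - ((q k : ℤ):ℂ) with hu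
  have hkey : ∀ x : ℂ, x ≠ 1 → x^a = 1 →
      (∑ k ∈ Finset.range a, u k * x^k) * (1 - x) = Polynomial.aeval x Δ := by
    intro x hx1 hxa
    have hgeo : ∑ k ∈ Finset.range a, x^k = 0 := by
      have hg := geom_sum_mul x a
      rw [hxa, sub_self] at hg
      rcases mul_eq_zero.1 hg with h | h
      · exact h
      · exact absurd (sub_eq_zero.1 h) hx1
    have hsplit : ∑ k ∈ Finset.range a, u k * x^k
        = (-(1/(a:ℂ))) * (∑ k ∈ Finset.range a, (k:ℂ) * x^k)
          - ∑ k ∈ Finset.range a, ((q k : ℤ):ℂ) * x^k := by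
      rw [Finset.mul_sum, ← Finset.sum_sub_distrib]
      refine Finset.sum_congr rfl fun k _ => ?_
      rw [hu]
      ring
    rw [hsplit, sub_mul, mul_assoc, sumKPow, hgeo, hxa, hL3 x]
    field_simp
    ring
  -- pointwise identification of the summand
  have hpt : ∀ ξ ∈ (Polynomial.nthRootsFinset a (1 : ℂ)).erase 1,
      (Polynomial.aeval ξ Δ) * (Polynomial.aeval ξ⁻¹ Δ) / ((1 - ξ) * (1 - ξ⁻¹))
        = (∑ k ∈ Finset.range a, u k * ξ^k) * (∑ l ∈ Finset.range a, u l * (ξ⁻¹)^l) := by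
    intro ξ hξ
    obtain ⟨hξ1, hξm⟩ := Finset.mem_erase.1 hξ
    have hξa : ξ^a = 1 := (Polynomial.mem_nthRootsFinset ha (1 : ℂ)).1 hξm
    have hξ0 : ξ ≠ 0 := Polynomial.ne_zero_of_mem_nthRootsFinset one_ne_zero hξm
    have hinv1 : ξ⁻¹ ≠ 1 := by
      intro h
      exact hξ1 (by rw [← inv_inv ξ, h, inv_one])
    have hinva : (ξ⁻¹)^a = 1 := by rw [inv_pow, hξa, inv_one]
    have hk1 := hkey ξ hξ1 hξa
    have hk2 := hkey ξ⁻¹ hinv1 hinva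
    have h1ne : (1:ℂ) - ξ ≠ 0 := sub_ne_zero.2 (fun h => hξ1 h.symm)
    have h2ne : (1:ℂ) - ξ⁻¹ ≠ 0 := sub_ne_zero.2 (fun h => hinv1 h.symm)
    rw [← hk1, ← hk2, mul_mul_mul_comm, mul_div_assoc,
      div_self (mul_ne_zero h1ne h2ne), mul_one]
  rw [Finset.sum_congr rfl hpt]
  -- expand the product of sums and swap summation order
  have hexp : ∑ ξ ∈ (Polynomial.nthRootsFinset a (1 : ℂ)).erase 1,
      (∑ k ∈ Finset.range a, u k * ξ^k) * (∑ l ∈ Finset.range a, u l * (ξ⁻¹)^l)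
      = ∑ k ∈ Finset.range a, ∑ l ∈ Finset.range a, (u k * u l) *
          (∑ ξ ∈ (Polynomial.nthRootsFinset a (1 : ℂ)).erase 1, ξ^k * (ξ⁻¹)^l) := by
    calc ∑ ξ ∈ (Polynomial.nthRootsFinset a (1 : ℂ)).erase 1,
        (∑ k ∈ Finset.range a, u k * ξ^k) * (∑ l ∈ Finset.range a, u l * (ξ⁻¹)^l)
        = ∑ ξ ∈ (Polynomial.nthRootsFinset a (1 : ℂ)).erase 1, ∑ k ∈ Finset.range a,
            ∑ l ∈ Finset.range a, (u k * ξ^k) * (u l * (ξ⁻¹)^l) :=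
          Finset.sum_congr rfl fun ξ _ => Finset.sum_mul_sum _ _ _ _
      _ = ∑ k ∈ Finset.range a, ∑ ξ ∈ (Polynomial.nthRootsFinset a (1 : ℂ)).erase 1,
            ∑ l ∈ Finset.range a, (u k * ξ^k) * (u l * (ξ⁻¹)^l) := Finset.sum_comm
      _ = ∑ k ∈ Finset.range a, ∑ l ∈ Finset.range a,
            ∑ ξ ∈ (Polynomial.nthRootsFinset a (1 : ℂ)).erase 1, (u k * ξ^k) * (u l * (ξ⁻¹)^l) :=
          Finset.sum_congr rfl fun k _ => Finset.sum_comm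
      _ = ∑ k ∈ Finset.range a, ∑ l ∈ Finset.range a, (u k * u l) *
            (∑ ξ ∈ (Polynomial.nthRootsFinset a (1 : ℂ)).erase 1, ξ^k * (ξ⁻¹)^l) := by
          refine Finset.sum_congr rfl fun k _ => Finset.sum_congr rfl fun l _ => ?_
          rw [Finset.mul_sum]
          exact Finset.sum_congr rfl fun ξ _ => by ring
  rw [hexp]
  have hpair : ∀ k ∈ Finset.range a, ∀ l ∈ Finset.range a,
      (u k * u l) * (∑ ξ ∈ (Polynomial.nthRootsFinset a (1 : ℂ)).erase 1, ξ^k * (ξ⁻¹)^l)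
      = (u k * u l) * (if k = l then (a:ℂ) - 1 else -1) := by
    intro k hk l hl
    rw [rootPairSum a ha k l (Finset.mem_range.1 hk) (Finset.mem_range.1 hl)]
  rw [Finset.sum_congr rfl (fun k hk => Finset.sum_congr rfl (fun l hl => hpair k hk l hl))]
  -- reduce to a²Σu² - (Σu)²  form
  have hred : ∑ k ∈ Finset.range a, ∑ l ∈ Finset.range a,
      (u k * u l) * (if k = l then (a:ℂ) - 1 else -1)
      = (a:ℂ) * (∑ k ∈ Finset.range a, (u k)^2)
        - (∑ k ∈ Finset.range a, u k) * (∑ k ∈ Finset.range a, u k) := by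
    calc ∑ k ∈ Finset.range a, ∑ l ∈ Finset.range a,
        (u k * u l) * (if k = l then (a:ℂ) - 1 else -1)
        = ∑ k ∈ Finset.range a, ((∑ l ∈ Finset.range a, if k = l then u k * u l * (a:ℂ) else 0)
            - ∑ l ∈ Finset.range a, u k * u l) := by
          refine Finset.sum_congr rfl fun k _ => ?_
          rw [← Finset.sum_sub_distrib]
          refine Finset.sum_congr rfl fun l _ => ?_
          split <;> ring
      _ = ∑ k ∈ Finset.range a, (u k * u k * (a:ℂ) - u k * ∑ l ∈ Finset.range a, u l) := by
          refine Finset.sum_congr rfl fun k hk => ?_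
          rw [Finset.sum_ite_eq, if_pos hk, ← Finset.mul_sum]
      _ = (a:ℂ) * (∑ k ∈ Finset.range a, (u k)^2)
            - (∑ k ∈ Finset.range a, u k) * (∑ k ∈ Finset.range a, u k) := by
          rw [Finset.sum_sub_distrib]
          congr 1
          · rw [Finset.mul_sum]
            exact Finset.sum_congr rfl fun k _ => by ring
          · rw [← Finset.sum_mul]
  rw [hred]
  -- final arithmetic
  have hScast : ((Δ.derivative.eval 1 : ℤ):ℂ) = ∑ k ∈ Finset.range a, ((q k : ℤ):ℂ) := by
    rw [hd1]
    push_cast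
    rfl
  have hTcast : ((Δ.derivative.derivative.eval 1 : ℤ):ℂ)
      = 2 * ∑ k ∈ Finset.range a, (k:ℂ) * ((q k : ℤ):ℂ) := by
    rw [hd2]
    push_cast
    rfl
  rw [hScast, hTcast]
  have hSq : ∑ k ∈ Finset.range a, ((q k : ℤ):ℂ)^2 = ∑ k ∈ Finset.range a, ((q k : ℤ):ℂ) := by
    refine Finset.sum_congr rfl fun k _ => ?_
    rcases hq01 k with h | h <;> rw [h] <;> norm_num
  have hu1 : ∑ k ∈ Finset.range a, u k
      = -((∑ k ∈ Finset.range a, (k:ℂ))/(a:ℂ)) - ∑ k ∈ Finset.range a, ((q k : ℤ):ℂ) := by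
    have hptw : ∀ k ∈ Finset.range a, u k = -((k:ℂ)/(a:ℂ)) - ((q k : ℤ):ℂ) := fun k _ => rfl
    rw [Finset.sum_congr rfl hptw, Finset.sum_sub_distrib, Finset.sum_neg_distrib,
      Finset.sum_div]
  have hu2 : ∑ k ∈ Finset.range a, (u k)^2
      = (∑ k ∈ Finset.range a, (k:ℂ)^2)/(a:ℂ)^2
        + 2*((∑ k ∈ Finset.range a, (k:ℂ)*((q k : ℤ):ℂ))/(a:ℂ))
        + ∑ k ∈ Finset.range a, ((q k : ℤ):ℂ) := by
    have hptw : ∀ k ∈ Finset.range a, (u k)^2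
        = (k:ℂ)^2/(a:ℂ)^2 + 2*(((k:ℂ)*((q k : ℤ):ℂ))/(a:ℂ)) + ((q k : ℤ):ℂ)^2 := by
      intro k _
      rw [show u k = -((k:ℂ)/(a:ℂ)) - ((q k : ℤ):ℂ) from rfl]
      ring
    rw [Finset.sum_congr rfl hptw, Finset.sum_add_distrib, Finset.sum_add_distrib,
      ← Finset.sum_div, ← Finset.mul_sum, ← Finset.sum_div, hSq]
  have hP1 : ∑ k ∈ Finset.range a, (k:ℂ) = (a:ℂ)*((a:ℂ)-1)/2 := by
    rw [eq_div_iff (by norm_num : (2:ℂ) ≠ 0)]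
    exact sumIdMul2 a
  have hP2 : ∑ k ∈ Finset.range a, (k:ℂ)^2 = (a:ℂ)*((a:ℂ)-1)*(2*(a:ℂ)-1)/6 := by
    rw [eq_div_iff (by norm_num : (6:ℂ) ≠ 0)]
    exact sumSqMul6 a
  rw [hu1, hu2, hP1, hP2]
  field_simp
  have hinv : ((a:ℂ))⁻¹^5 * (a:ℂ)^5 = 1 := by
    rw [← mul_pow, inv_mul_cancel₀ ha0, one_pow]
  ring
end

section
/- For coprime integers p, a ≥ 2, the Alexander polynomial Δ(t) = (t^{pa}−1)(t−1)/((t^p−1)(t^a−1)) of the torus knot (p,a) satisfies: Δ(t) = 1 + Σ_{i: p∤r_i} Σ_{j=0}^{x_i−1} t^{r_i + ja}(t−1), where for each i ∈ {0,…,a−1}, pi = x_i a + r_i with 0 ≤ r_i < a. In particular, the coefficients of Δ(t) form an alternating set. -/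
open Polynomial

section TorusKnotAux

lemma tk_mod_inj (p a : ℕ) (hcop : Nat.Coprime p a) :
    ∀ i ∈ Finset.range a, ∀ j ∈ Finset.range a, p * i % a = p * j % a → i = j := by
  intro i hi j hj h
  simp only [Finset.mem_range] at hi hj
  have h2 : p * i ≡ p * j [MOD a] := h
  have : i ≡ j [MOD a] := h2.cancel_left_of_coprime hcop.symm
  rwa [Nat.ModEq, Nat.mod_eq_of_lt hi, Nat.mod_eq_of_lt hj] at this

lemma tk_mod_image (p a : ℕ) (ha : 0 < a) (hcop : Nat.Coprime p a) :
    (Finset.range a).image (fun i => p * i % a) = Finset.range a := by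
  apply Finset.eq_of_subset_of_card_le
  · intro k hk
    simp only [Finset.mem_image, Finset.mem_range] at hk ⊢
    obtain ⟨i, _, rfl⟩ := hk
    exact Nat.mod_lt _ ha
  · rw [Finset.card_image_of_injOn (fun i hi j hj h => tk_mod_inj p a hcop i hi j hj h)]

lemma tk_div_zero_of_dvd (p a : ℕ) (hp : 0 < p) (hcop : Nat.Coprime p a)
    (i : ℕ) (hi : i < a) (hd : p ∣ (p * i % a)) : p * i = p * i % a := by
  have hdm : a * (p * i / a) + p * i % a = p * i := Nat.div_add_mod (p * i) a
  have h1 : p ∣ a * (p * i / a) := by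
    have h2 := Nat.dvd_sub (Dvd.intro i rfl) hd
    rwa [show p * i - p * i % a = a * (p * i / a) by omega] at h2
  have hx : p ∣ (p * i / a) := Nat.Coprime.dvd_of_dvd_mul_left hcop h1
  rcases Nat.eq_zero_or_pos (p * i / a) with h0 | h0
  · rw [h0, Nat.mul_zero, Nat.zero_add] at hdm; exact hdm.symm
  · have hple : p ≤ p * i / a := Nat.le_of_dvd h0 hx
    have hchain : a * p < a * p :=
      calc a * p ≤ a * (p * i / a) := Nat.mul_le_mul le_rfl hple
        _ ≤ p * i := Nat.le.intro hdm
        _ < p * a := (Nat.mul_lt_mul_left hp).mpr hi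
        _ = a * p := mul_comm p a
    exact absurd hchain (lt_irrefl _)

lemma tk_inner_sum (a r x : ℕ) :
    (∑ j ∈ Finset.range x, (X:ℤ[X])^(r + j*a) * (X - 1)) * (X^a - 1)
      = (X - 1) * ((X:ℤ[X])^(r + x*a) - X^r) := by
  have h1 : ∀ j : ℕ, (X:ℤ[X])^(r + j*a) = X^r * (X^a)^j := by
    intro j; rw [pow_add, pow_mul']
  calc (∑ j ∈ Finset.range x, (X:ℤ[X])^(r + j*a) * (X - 1)) * (X^a - 1)
      = (X - 1) * (X^r * ((∑ j ∈ Finset.range x, ((X:ℤ[X])^a)^j) * (X^a - 1))) := by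
        rw [← Finset.sum_mul]
        simp only [h1]
        rw [← Finset.mul_sum]
        ring
    _ = (X - 1) * ((X:ℤ[X])^(r + x*a) - X^r) := by
        rw [geom_sum_mul, pow_add, pow_mul']
        ring

lemma tk_bracket (p a : ℕ) (hp : 0 < p) (ha : 0 < a) (hcop : Nat.Coprime p a) :
    (∑ k ∈ Finset.range a, (X:ℤ[X])^k)
      + ∑ i ∈ (Finset.range a).filter (fun i => ¬ p ∣ (p * i % a)),
          ((X:ℤ[X])^(p*i) - X^(p*i % a))
      = ∑ i ∈ Finset.range a, (X:ℤ[X])^(p*i) := by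
  have hsplit := Finset.sum_filter_add_sum_filter_not (Finset.range a)
    (fun i => ¬ p ∣ (p * i % a)) (fun i => (X:ℤ[X])^(p*i))
  have hsplit2 := Finset.sum_filter_add_sum_filter_not (Finset.range a)
    (fun i => ¬ p ∣ (p * i % a)) (fun i => (X:ℤ[X])^(p*i % a))
  have hmod : (∑ k ∈ Finset.range a, (X:ℤ[X])^k)
      = ∑ i ∈ Finset.range a, (X:ℤ[X])^(p*i % a) := by
    conv_lhs => rw [← tk_mod_image p a ha hcop]
    rw [Finset.sum_image (tk_mod_inj p a hcop)]
  have hfix : ∑ i ∈ (Finset.range a).filter (fun i => ¬ ¬ p ∣ (p * i % a)),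
        (X:ℤ[X])^(p*i % a)
      = ∑ i ∈ (Finset.range a).filter (fun i => ¬ ¬ p ∣ (p * i % a)), (X:ℤ[X])^(p*i) := by
    apply Finset.sum_congr rfl
    intro i hi
    simp only [Finset.mem_filter, Finset.mem_range, not_not] at hi
    rw [← tk_div_zero_of_dvd p a hp hcop i hi.1 hi.2]
  rw [Finset.sum_sub_distrib, hmod, ← hsplit, ← hsplit2, hfix]
  ring

lemma tk_identity (p a : ℕ) (hp : 0 < p) (ha : 0 < a) (hcop : Nat.Coprime p a) :
    (1 + ∑ i ∈ (Finset.range a).filter (fun i => ¬ p ∣ (p * i % a)),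
          ∑ j ∈ Finset.range (p * i / a), (X:ℤ[X]) ^ (p * i % a + j * a) * (X - 1))
        * ((X ^ p - 1) * (X ^ a - 1)) = ((X:ℤ[X]) ^ (p * a) - 1) * (X - 1) := by
  set S := (Finset.range a).filter (fun i => ¬ p ∣ (p * i % a)) with hS
  have stepA : (1 + ∑ i ∈ S,
          ∑ j ∈ Finset.range (p * i / a), (X:ℤ[X]) ^ (p * i % a + j * a) * (X - 1))
        * (X ^ a - 1) = (X - 1) * ∑ i ∈ Finset.range a, (X:ℤ[X])^(p*i) := by
    rw [add_mul, one_mul, Finset.sum_mul]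
    have hterm : ∀ i ∈ S,
        (∑ j ∈ Finset.range (p * i / a), (X:ℤ[X]) ^ (p * i % a + j * a) * (X - 1)) * (X^a - 1)
        = (X - 1) * ((X:ℤ[X])^(p*i) - X^(p*i % a)) := by
      intro i _
      rw [tk_inner_sum a (p*i % a) (p*i / a), Nat.mod_add_div' (p*i) a]
    rw [Finset.sum_congr rfl hterm, ← Finset.mul_sum]
    have hgeo : (X:ℤ[X])^a - 1 = (X - 1) * ∑ k ∈ Finset.range a, (X:ℤ[X])^k := by
      rw [mul_comm, geom_sum_mul]
    rw [hgeo, ← mul_add, tk_bracket p a hp ha hcop]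
  calc (1 + ∑ i ∈ S,
          ∑ j ∈ Finset.range (p * i / a), (X:ℤ[X]) ^ (p * i % a + j * a) * (X - 1))
        * ((X ^ p - 1) * (X ^ a - 1))
      = ((1 + ∑ i ∈ S,
          ∑ j ∈ Finset.range (p * i / a), (X:ℤ[X]) ^ (p * i % a + j * a) * (X - 1))
        * (X ^ a - 1)) * (X ^ p - 1) := by ring
    _ = (X - 1) * ((∑ i ∈ Finset.range a, ((X:ℤ[X])^p)^i) * (X ^ p - 1)) := by
        rw [stepA]
        have : ∀ i : ℕ, (X:ℤ[X])^(p*i) = ((X:ℤ[X])^p)^i := fun i => by rw [pow_mul]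
        simp only [this]
        ring
    _ = ((X:ℤ[X]) ^ (p * a) - 1) * (X - 1) := by
        rw [geom_sum_mul, ← pow_mul]
        ring

/-- The set of gaps of the numerical semigroup generated by `p` and `a`. -/
def tkE (p a : ℕ) : Finset ℕ :=
  ((Finset.range a).filter (fun i => ¬ p ∣ (p * i % a))).biUnion
    (fun i => (Finset.range (p * i / a)).image (fun j => p * i % a + j * a))

noncomputable def tkP (p a : ℕ) : ℤ[X] := 1 + ∑ e ∈ tkE p a, ((X:ℤ[X])^(e+1) - X^e)

lemma tk_sum_eq (p a : ℕ) (ha : 0 < a) (hcop : Nat.Coprime p a) :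
    ∑ i ∈ (Finset.range a).filter (fun i => ¬ p ∣ (p * i % a)),
        ∑ j ∈ Finset.range (p * i / a), (X:ℤ[X]) ^ (p * i % a + j * a) * (X - 1)
      = ∑ e ∈ tkE p a, ((X:ℤ[X])^(e+1) - X^e) := by
  rw [tkE, Finset.sum_biUnion]
  · apply Finset.sum_congr rfl
    intro i _
    rw [Finset.sum_image]
    · apply Finset.sum_congr rfl
      intro j _
      rw [pow_succ]; ring
    · intro x _ y _ h
      have : x * a = y * a := by simp only at h; omega
      exact Nat.eq_of_mul_eq_mul_right ha this
  · intro i hi i' hi' hne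
    simp only [Finset.coe_filter, Set.mem_setOf_eq, Finset.mem_range] at hi hi'
    apply Finset.disjoint_left.mpr
    intro e he he'
    simp only [Finset.mem_image, Finset.mem_range] at he he'
    obtain ⟨j, _, rfl⟩ := he
    obtain ⟨j', _, h'⟩ := he'
    apply hne
    have hmod : p * i % a = p * i' % a := by
      have h1 : (p * i % a + j * a) % a = p * i % a := by
        rw [Nat.add_mul_mod_self_right]; exact Nat.mod_mod_of_dvd _ dvd_rfl
      have h2 : (p * i' % a + j' * a) % a = p * i' % a := by
        rw [Nat.add_mul_mod_self_right]; exact Nat.mod_mod_of_dvd _ dvd_rfl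
      rw [← h1, ← h']; exact h2
    exact tk_mod_inj p a hcop i (Finset.mem_range.mpr hi.1) i' (Finset.mem_range.mpr hi'.1) hmod

lemma tk_zero_not_mem (p a : ℕ) : 0 ∉ tkE p a := by
  intro h
  simp only [tkE, Finset.mem_biUnion, Finset.mem_filter, Finset.mem_range,
    Finset.mem_image] at h
  obtain ⟨i, ⟨_, hnd⟩, j, _, hj⟩ := h
  have : p * i % a = 0 := by omega
  exact hnd (this ▸ dvd_zero p)

lemma tk_bound (p a : ℕ) (hp : 2 ≤ p) (e : ℕ) (he : e ∈ tkE p a) : e + 1 < p * a := by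
  simp only [tkE, Finset.mem_biUnion, Finset.mem_filter, Finset.mem_range,
    Finset.mem_image] at he
  obtain ⟨i, ⟨hia, _⟩, j, hj, rfl⟩ := he
  have hdm : a * (p * i / a) + p * i % a = p * i := Nat.div_add_mod (p * i) a
  have h1 : p * i % a + j * a < p * i := by nlinarith
  have h2 : p * i + p ≤ p * a := by nlinarith
  omega

lemma tk_coeff (p a k : ℕ) :
    (tkP p a).coeff k = (if k ∈ tkE p a then 0 else 1)
      - (if k = 0 then 0 else (if k - 1 ∈ tkE p a then 0 else 1)) := by
  have hs : (∑ e ∈ tkE p a, ((X:ℤ[X])^(e+1) - X^e)).coeff k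
      = ∑ e ∈ tkE p a, ((if k = e + 1 then (1:ℤ) else 0) - (if k = e then 1 else 0)) := by
    rw [finset_sum_coeff]
    apply Finset.sum_congr rfl
    intro e _
    rw [coeff_sub, coeff_X_pow, coeff_X_pow]
  have h2 : ∀ m : ℕ, ∑ e ∈ tkE p a, (if m = e then (1:ℤ) else 0)
      = if m ∈ tkE p a then 1 else 0 := fun m => Finset.sum_ite_eq _ _ _
  rcases k with _ | n
  · have h1 : ∀ e : ℕ, (if 0 = e + 1 then (1:ℤ) else 0) = 0 := fun e => by simp
    rw [tkP, coeff_add, hs, Finset.sum_sub_distrib, h2]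
    simp only [h1, Finset.sum_const_zero, coeff_one]
    by_cases h : 0 ∈ tkE p a <;> simp [h]
  · have h1 : ∀ e : ℕ, (if n + 1 = e + 1 then (1:ℤ) else 0) = (if n = e then 1 else 0) :=
      fun e => by simp
    rw [tkP, coeff_add, hs, Finset.sum_sub_distrib, h2]
    simp only [h1, h2, coeff_one]
    by_cases hn : n ∈ tkE p a <;> by_cases hn1 : n + 1 ∈ tkE p a <;>
      simp [hn, hn1]

lemma tk_coeff_large (p a : ℕ) (hp : 2 ≤ p) (ha : 2 ≤ a) (k : ℕ) (hk : p * a ≤ k) :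
    (tkP p a).coeff k = 0 := by
  rw [tk_coeff]
  have h1 : k ∉ tkE p a := fun h => by have := tk_bound p a hp k h; omega
  have h2 : k - 1 ∉ tkE p a := fun h => by have := tk_bound p a hp _ h; omega
  have h3 : k ≠ 0 := by nlinarith
  simp [h1, h2, h3]

lemma tk_card_step (s : Finset ℕ) (k : ℕ) :
    (s.filter (fun j => k < j)).card
      = (s.filter (fun j => k + 1 < j)).card + (if k + 1 ∈ s then 1 else 0) := by
  have hsplit : s.filter (fun j => k < j)
      = s.filter (fun j => k + 1 < j) ∪ s.filter (fun j => j = k + 1) := by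
    ext x
    simp only [Finset.mem_filter, Finset.mem_union, ← and_or_left]
    exact and_congr_right fun _ => by omega
  rw [hsplit, Finset.card_union_of_disjoint, Finset.filter_eq']
  · split <;> simp
  · apply Finset.disjoint_left.mpr
    intro x hx hx'
    simp only [Finset.mem_filter] at hx hx'
    omega

lemma tk_sign (p a : ℕ) (hp : 2 ≤ p) (ha : 2 ≤ a) :
    ∀ d k, p * a ≤ k + d →
      ((-1:ℤ) ^ (((tkP p a).support.filter (fun j => k < j)).card)
        = if k ∈ tkE p a then -1 else 1) := by
  intro d
  induction d with
  | zero =>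
    intro k hk
    simp only [Nat.add_zero] at hk
    have hE : k ∉ tkE p a := fun h => by have := tk_bound p a hp k h; omega
    have hfe : (tkP p a).support.filter (fun j => k < j) = ∅ := by
      apply Finset.filter_eq_empty_iff.mpr
      intro j hj
      have : (tkP p a).coeff j ≠ 0 := mem_support_iff.mp hj
      have hjlt : j < p * a := by
        by_contra h
        exact this (tk_coeff_large p a hp ha j (by omega))
      omega
    rw [hfe]
    simp [hE]
  | succ d ih =>
    intro k hk
    by_cases h : p * a ≤ k + d
    · exact ih k h
    · have hk1 : p * a ≤ (k + 1) + d := by omega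
      rw [tk_card_step, pow_add, ih (k + 1) hk1]
      have hc : (tkP p a).coeff (k + 1) = (if k + 1 ∈ tkE p a then 0 else 1)
          - (if k ∈ tkE p a then 0 else 1) := by
        rw [tk_coeff]; simp
      by_cases hE1 : k + 1 ∈ tkE p a <;> by_cases hE0 : k ∈ tkE p a <;>
        simp [mem_support_iff, hc, hE1, hE0]

end TorusKnotAux

/-- The Alexander polynomial of the `(p,a)` torus knot in semigroup form; in particular
its coefficients form an alternating set. Here `p*i = x_i * a + r_i` with
`r_i = p*i % a` and `x_i = p*i / a`. -/
theorem torus_knot_alexander_alternating (p a : ℕ) (hp : 2 ≤ p) (ha : 2 ≤ a)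
    (hcop : Nat.Coprime p a) (Δ : Polynomial ℤ)
    (hΔ : Δ * ((X ^ p - 1) * (X ^ a - 1)) = (X ^ (p * a) - 1) * (X - 1)) :
    Δ = 1 + ∑ i ∈ (Finset.range a).filter (fun i => ¬ p ∣ (p * i % a)),
          ∑ j ∈ Finset.range (p * i / a), X ^ (p * i % a + j * a) * (X - 1)
    ∧ AlternatingCoeffs Δ := by
  have hp0 : 0 < p := by omega
  have ha0 : 0 < a := by omega
  have hM : ((X:ℤ[X]) ^ p - 1) * ((X:ℤ[X]) ^ a - 1) ≠ 0 := by
    apply mul_ne_zero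
    · have := X_pow_sub_C_ne_zero (R := ℤ) hp0 1
      rwa [Polynomial.C_1] at this
    · have := X_pow_sub_C_ne_zero (R := ℤ) ha0 1
      rwa [Polynomial.C_1] at this
  have hEq : Δ = 1 + ∑ i ∈ (Finset.range a).filter (fun i => ¬ p ∣ (p * i % a)),
      ∑ j ∈ Finset.range (p * i / a), (X:ℤ[X]) ^ (p * i % a + j * a) * (X - 1) :=
    mul_right_cancel₀ hM (hΔ.trans (tk_identity p a hp0 ha0 hcop).symm)
  have hEqP : Δ = tkP p a := by
    rw [hEq, tkP, tk_sum_eq p a ha0 hcop]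
  refine ⟨hEq, ?_⟩
  rw [hEqP]
  intro i
  have hc := tk_coeff p a i
  constructor
  · rw [hc]
    rcases i with _ | n
    · by_cases h : 0 ∈ tkE p a <;> simp [h]
    · by_cases h1 : n + 1 ∈ tkE p a <;> by_cases h0 : n ∈ tkE p a <;>
        simp [h1, h0]
  · intro hne
    have hsgn := tk_sign p a hp ha (p * a) i (by omega)
    rw [hsgn, hc]
    rw [hc] at hne
    rcases i with _ | n
    · simp [tk_zero_not_mem p a]
    · by_cases h1 : n + 1 ∈ tkE p a <;> by_cases h0 : n ∈ tkE p a <;>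
        simp [h1, h0] at hne ⊢
end

section
/- Let f have Newton pairs {(p_k,q_k)}_{k=1}^s with p_k, q_k ≥ 2, gcd(p_k,q_k)=1, and define a_1 = q_1, a_{k+1} = q_{k+1} + p_{k+1} p_k a_k. Then for every l with 2 ≤ l ≤ s, a_l > p_l · deg Δ(f_{(l-1)}), where deg Δ(f_{(l)}) = (p_l−1)(a_l−1) + p_l · deg Δ(f_{(l-1)}) with deg Δ(f_{(0)}) = 0. -/
/-- For the Newton pairs `(p_k, q_k)` of an irreducible plane curve singularity,
with `a_1 = q_1`, `a_{k+1} = q_{k+1} + p_{k+1} p_k a_k`, and `μ_l = deg Δ(f_{(l)})`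
given recursively by `μ_0 = 0`, `μ_l = (p_l-1)(a_l-1) + p_l μ_{l-1}`, one has
`a_l > p_l · μ_{l-1}` for all `2 ≤ l ≤ s`. -/
theorem a_gt_p_mul_deg (s : ℕ) (p q a μ : ℕ → ℕ)
    (hp : ∀ k, 1 ≤ k → k ≤ s → 2 ≤ p k)
    (hq : ∀ k, 1 ≤ k → k ≤ s → 2 ≤ q k)
    (hcop : ∀ k, 1 ≤ k → k ≤ s → Nat.Coprime (p k) (q k))
    (ha1 : a 1 = q 1)
    (harec : ∀ k, 1 ≤ k → k + 1 ≤ s → a (k + 1) = q (k + 1) + p (k + 1) * p k * a k)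
    (hμ0 : μ 0 = 0)
    (hμ : ∀ l, 1 ≤ l → l ≤ s → μ l = (p l - 1) * (a l - 1) + p l * μ (l - 1)) :
    ∀ l, 2 ≤ l → l ≤ s → p l * μ (l - 1) < a l := by
  have key : ∀ k, 1 ≤ k → k ≤ s → μ k < p k * a k := by
    intro k
    induction k with
    | zero => omega
    | succ n ih =>
      intro _ hks
      rcases Nat.eq_zero_or_pos n with h0 | hn
      · subst h0
        have hp1 := hp 1 le_rfl hks
        have hq1 := hq 1 le_rfl hks
        rw [hμ 1 le_rfl hks, hμ0, ha1]
        simp only [Nat.sub_self, Nat.mul_zero, Nat.add_zero]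
        calc (p 1 - 1) * (q 1 - 1) ≤ (p 1 - 1) * q 1 :=
              Nat.mul_le_mul_left _ (Nat.sub_le _ _)
          _ < p 1 * q 1 := Nat.mul_lt_mul_of_lt_of_le (by omega) le_rfl (by omega)
      · have hns : n ≤ s := by omega
        have ihn := ih hn hns
        have hA := harec n hn hks
        have hpn1 := hp (n+1) (by omega) hks
        have hqn1 := hq (n+1) (by omega) hks
        rw [hμ (n+1) (by omega) hks]
        simp only [Nat.add_sub_cancel]
        have h1 : p (n+1) * μ n < p (n+1) * (p n * a n) :=
          Nat.mul_lt_mul_of_pos_left ihn (by omega)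
        have h2 : p (n+1) * (p n * a n) + q (n+1) = a (n+1) := by
          rw [hA]; ring
        -- now a (n+1) ≥ 2 so write a (n+1) = B + 1
        obtain ⟨B, hB⟩ : ∃ B, a (n+1) = B + 1 := ⟨a (n+1) - 1, by omega⟩
        obtain ⟨P, hP⟩ : ∃ P, p (n+1) = P + 2 := ⟨p (n+1) - 2, by omega⟩
        rw [hP] at h1 h2 ⊢
        rw [hB] at h2 ⊢
        simp only [Nat.add_sub_cancel]
        -- goal: (P+2-1) * B + (P+2) * μ n < (P+2) * (B+1)
        have h3 : (P + 2 - 1) = P + 1 := rfl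
        rw [h3]
        have hx : (P + 2) * μ n + 2 ≤ B := by linarith
        nlinarith [hx]
  intro l hl hls
  have hl1 : 1 ≤ l - 1 := by omega
  have hl1s : l - 1 ≤ s := by omega
  have hk := key (l-1) hl1 hl1s
  have hA := harec (l-1) hl1 (by omega)
  have hpl := hp l (by omega) hls
  have hql := hq l (by omega) hls
  have h1 : p l * μ (l-1) < p l * (p (l-1) * a (l-1)) :=
    Nat.mul_lt_mul_of_pos_left hk (by omega)
  have h2 : (l - 1) + 1 = l := by omega
  rw [h2] at hA
  calc p l * μ (l-1) < p l * (p (l-1) * a (l-1)) := h1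
    _ ≤ q l + p l * p (l-1) * a (l-1) := by rw [Nat.mul_assoc]; omega
    _ = a l := hA.symm
end

section
/- Define the characteristic polynomials recursively by Δ_1(t) = (t^{p_1 a_1}−1)(t−1)/((t^{p_1}−1)(t^{a_1}−1)) and Δ_l(t) = [(t^{p_l a_l}−1)(t−1)/((t^{p_l}−1)(t^{a_l}−1))] · Δ_{l-1}(t^{p_l}) for l ≥ 2, where p_k ≥ 2, a_k satisfy gcd(p_k,a_k) = 1 and a_{k+1} > p_{k+1} p_k a_k. Then for each l, the coefficients of Δ_l(t) form an alternating set; moreover Δ_l(t) = 1 + Σ_{i=1}^t Σ_{j=0}^{n_i} t^{r_i + j a_l}(t−1) for suitable residues 0 < r_1,…,r_t < a_l and nonnegative integers n_i. -/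
open Polynomial

namespace CPA
open scoped Classical

noncomputable def ind (S : Set ℕ) : PowerSeries ℤ :=
  PowerSeries.mk fun n => if n ∈ S then 1 else 0

lemma coeff_ind (S : Set ℕ) (n : ℕ) :
    PowerSeries.coeff n (ind S) = if n ∈ S then 1 else 0 := PowerSeries.coeff_mk _ _

def gen (p a : ℕ) (S : Set ℕ) : Set ℕ := {n | ∃ s ∈ S, ∃ x, n = p * s + x * a}

def pull (p : ℕ) (S : Set ℕ) : Set ℕ := {n | p ∣ n ∧ n / p ∈ S}

lemma gen_zero_mem {p a : ℕ} {S : Set ℕ} (h0 : 0 ∈ S) : 0 ∈ gen p a S :=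
  ⟨0, h0, 0, by ring⟩

lemma gen_add_mem {p a : ℕ} {S : Set ℕ} (hadd : ∀ x ∈ S, ∀ y ∈ S, x + y ∈ S) :
    ∀ x ∈ gen p a S, ∀ y ∈ gen p a S, x + y ∈ gen p a S := by
  rintro _ ⟨s, hs, x, rfl⟩ _ ⟨t, ht, y, rfl⟩
  exact ⟨s + t, hadd s hs t ht, x + y, by ring⟩

lemma a_mem_gen {p a : ℕ} {S : Set ℕ} (h0 : 0 ∈ S) : a ∈ gen p a S :=
  ⟨0, h0, 1, by ring⟩

lemma add_mul_a_mem {a : ℕ} {S : Set ℕ} (hadd : ∀ x ∈ S, ∀ y ∈ S, x + y ∈ S)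
    (haS : a ∈ S) : ∀ m, ∀ s ∈ S, s + m * a ∈ S := by
  intro m
  induction m with
  | zero => simpa using fun s hs => hs
  | succ m ih =>
    intro s hs
    have := hadd _ (ih s hs) a haS
    have e : s + m * a + a = s + (m+1) * a := by ring
    rwa [e] at this

/-- The central combinatorial count. -/
lemma key_count (p a : ℕ) (hp : 2 ≤ p) (hcop : Nat.Coprime p a) (S : Set ℕ)
    (h0 : 0 ∈ S) (hadd : ∀ x ∈ S, ∀ y ∈ S, x + y ∈ S) (haS : a ∈ S) (n : ℕ) :
    ((if n ∈ gen p a S then (1:ℤ) else 0) - if a ≤ n ∧ n - a ∈ gen p a S then 1 else 0)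
    = (if n ∈ pull p S then 1 else 0) - if p*a ≤ n ∧ n - p*a ∈ pull p S then 1 else 0 := by
  have hp0 : 0 < p := by omega
  set T := gen p a S with hT
  have hBiff : (a ≤ n ∧ n - a ∈ T) ↔ ∃ m ∈ T, n = m + a := by
    constructor
    · rintro ⟨h1, h2⟩; exact ⟨n - a, h2, (Nat.sub_add_cancel h1).symm⟩
    · rintro ⟨m, hm, rfl⟩; exact ⟨Nat.le_add_left _ _, by simpa using hm⟩
  have hCiff : n ∈ pull p S ↔ ∃ v ∈ S, n = p * v := by
    constructor
    · rintro ⟨⟨v, rfl⟩, h2⟩; exact ⟨v, by simpa [Nat.mul_div_cancel_left _ hp0] using h2, rfl⟩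
    · rintro ⟨v, hv, rfl⟩; exact ⟨⟨v, rfl⟩, by simpa [Nat.mul_div_cancel_left _ hp0] using hv⟩
  have hDiff : (p*a ≤ n ∧ n - p*a ∈ pull p S) ↔ ∃ u ∈ S, n = p * u + p * a := by
    constructor
    · rintro ⟨h1, ⟨u, hu⟩, h2⟩
      refine ⟨u, ?_, ?_⟩
      · rwa [hu, Nat.mul_div_cancel_left _ hp0] at h2
      · omega
    · rintro ⟨u, hu, rfl⟩
      refine ⟨Nat.le_add_left _ _, ⟨u, by omega⟩, ?_⟩
      have : p * u + p * a - p * a = p * u := by omega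
      rw [this, Nat.mul_div_cancel_left _ hp0]; exact hu
  -- implications
  have hBA : (a ≤ n ∧ n - a ∈ T) → n ∈ T := by
    rw [hBiff]; rintro ⟨m, hm, rfl⟩
    rcases hm with ⟨s, hs, x, rfl⟩
    exact ⟨s, hs, x + 1, by ring⟩
  have hDC : (p*a ≤ n ∧ n - p*a ∈ pull p S) → n ∈ pull p S := by
    rw [hDiff, hCiff]; rintro ⟨u, hu, rfl⟩
    exact ⟨u + a, hadd u hu a haS, by ring⟩
  have hCA : n ∈ pull p S → n ∈ T := by
    rw [hCiff]; rintro ⟨v, hv, rfl⟩; exact ⟨v, hv, 0, by ring⟩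
  -- C ∧ ¬D → ¬B
  have hCnDnB : n ∈ pull p S → ¬(p*a ≤ n ∧ n - p*a ∈ pull p S) → ¬(a ≤ n ∧ n - a ∈ T) := by
    rw [hCiff, hDiff, hBiff]
    rintro ⟨v, hv, rfl⟩ hnD ⟨m, ⟨s, hs, x, rfl⟩, hE⟩
    -- p * v = p * s + x * a + a = p * s + (x+1) * a
    have he : p * v = p * s + (x + 1) * a := by rw [add_mul, one_mul]; omega
    have hdvd : p ∣ (x + 1) * a := by
      have h1 : p ∣ p * s + (x+1) * a := by rw [← he]; exact ⟨v, rfl⟩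
      exact (Nat.dvd_add_right (Dvd.intro s rfl)).mp h1
    have hpx : p ∣ x + 1 := (Nat.Coprime.dvd_of_dvd_mul_right hcop hdvd)
    obtain ⟨c, hc⟩ := hpx
    have hc0 : c ≠ 0 := by rintro rfl; simp at hc
    obtain ⟨c', rfl⟩ : ∃ c', c = c' + 1 := ⟨c - 1, by omega⟩
    have hv' : v = s + (c' + 1) * a := by
      have : p * v = p * (s + (c' + 1) * a) := by rw [he, hc]; ring
      exact Nat.eq_of_mul_eq_mul_left hp0 this
    apply hnD
    refine ⟨s + c' * a, add_mul_a_mem hadd haS c' s hs, ?_⟩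
    rw [hv']; ring
  have hAnBC : n ∈ T → ¬(a ≤ n ∧ n - a ∈ T) → n ∈ pull p S := by
    rw [hBiff, hCiff]
    rintro ⟨s, hs, x, rfl⟩ hnB
    rcases Nat.eq_zero_or_pos x with rfl | hx
    · exact ⟨s, hs, by ring⟩
    · exfalso; apply hnB
      obtain ⟨x', rfl⟩ : ∃ x', x = x' + 1 := ⟨x - 1, by omega⟩
      refine ⟨p * s + x' * a, ⟨s, hs, x', rfl⟩, by ring⟩
  have hAnBnD : n ∈ T → ¬(a ≤ n ∧ n - a ∈ T) → ¬(p*a ≤ n ∧ n - p*a ∈ pull p S) := by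
    intro hA hnB hD
    rw [hDiff] at hD; rcases hD with ⟨u, hu, hn⟩
    apply hnB
    rw [hBiff]
    obtain ⟨p', hpp⟩ : ∃ p', p = p' + 1 := ⟨p - 1, by omega⟩
    refine ⟨p * u + p' * a, ⟨u, hu, p', rfl⟩, by rw [hn, hpp]; ring⟩
  -- final case analysis
  by_cases hB : a ≤ n ∧ n - a ∈ T
  · have hA := hBA hB
    by_cases hD : p*a ≤ n ∧ n - p*a ∈ pull p S
    · have hC := hDC hD
      simp [hA, hB, hC, hD]
    · have hnC : ¬ n ∈ pull p S := fun hC => (hCnDnB hC hD) hB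
      simp [hA, hB, hnC, hD]
  · by_cases hA : n ∈ T
    · have hC := hAnBC hA hB
      have hnD := hAnBnD hA hB
      simp [hA, hB, hC, hnD]
    · have hnC : ¬ n ∈ pull p S := fun hC => hA (hCA hC)
      have hnD : ¬(p*a ≤ n ∧ n - p*a ∈ pull p S) := fun hD => hnC (hDC hD)
      simp [hA, hB, hnC, hnD]


lemma coeff_mul_one_sub_pow (f : PowerSeries ℤ) (a n : ℕ) :
    PowerSeries.coeff n (f * (1 - PowerSeries.X ^ a))
      = PowerSeries.coeff n f - if a ≤ n then PowerSeries.coeff (n - a) f else 0 := by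
  rw [mul_sub, mul_one, map_sub, PowerSeries.coeff_mul_X_pow']

lemma coeff_one_sub_pow_mul (f : PowerSeries ℤ) (a n : ℕ) :
    PowerSeries.coeff n ((1 - PowerSeries.X ^ a) * f)
      = PowerSeries.coeff n f - if a ≤ n then PowerSeries.coeff (n - a) f else 0 := by
  rw [mul_comm, coeff_mul_one_sub_pow]

/-- The key power series identity. -/
lemma key_ps (p a : ℕ) (hp : 2 ≤ p) (hcop : Nat.Coprime p a) (S : Set ℕ)
    (h0 : 0 ∈ S) (hadd : ∀ x ∈ S, ∀ y ∈ S, x + y ∈ S) (haS : a ∈ S) :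
    ind (gen p a S) * (1 - PowerSeries.X ^ a)
      = (1 - PowerSeries.X ^ (p * a)) * ind (pull p S) := by
  ext n
  rw [coeff_mul_one_sub_pow, coeff_one_sub_pow_mul]
  simp only [coeff_ind]
  have h := key_count p a hp hcop S h0 hadd haS n
  by_cases hB : a ≤ n
  · by_cases hD : p * a ≤ n
    · simpa [hB, hD] using h
    · have : ¬ (p * a ≤ n ∧ n - p*a ∈ pull p S) := by tauto
      simp only [hB, if_true, hD, if_false, sub_zero]
      simpa [hB, hD, this] using h
  · have h1 : ¬ (a ≤ n ∧ n - a ∈ gen p a S) := by tauto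
    have h2 : ¬ (p * a ≤ n) := by nlinarith
    have h3 : ¬ (p * a ≤ n ∧ n - p*a ∈ pull p S) := by tauto
    simp only [hB, if_false, sub_zero, h2]
    simpa [h1, h3] using h

lemma ind_univ_mul : ((1 : PowerSeries ℤ) - PowerSeries.X) * ind Set.univ = 1 := by
  have : ((1 : PowerSeries ℤ) - PowerSeries.X) = 1 - PowerSeries.X ^ 1 := by rw [pow_one]
  rw [this]
  ext n
  rw [coeff_one_sub_pow_mul]
  simp only [coeff_ind, Set.mem_univ, if_true]
  rcases n with _ | n
  · simp
  · simp [PowerSeries.coeff_one, Nat.succ_ne_zero]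

/-- Expanding a polynomial of the form `(1-X)·ind S` by `X ↦ X^p`. -/
lemma coe_comp_pow (f : Polynomial ℤ) (p : ℕ) (hp : 0 < p) (S : Set ℕ)
    (hf : (f : PowerSeries ℤ) = (1 - PowerSeries.X) * ind S) :
    ((f.comp (X ^ p) : Polynomial ℤ) : PowerSeries ℤ)
      = (1 - PowerSeries.X ^ p) * ind (pull p S) := by
  ext n
  rw [Polynomial.coeff_coe, ← Polynomial.expand_eq_comp_X_pow, Polynomial.coeff_expand hp,
    coeff_one_sub_pow_mul, coeff_ind]
  have hcf : ∀ m : ℕ, f.coeff m = (if m ∈ S then (1:ℤ) else 0) - if 1 ≤ m then (if m - 1 ∈ S then (1:ℤ) else 0) else 0 := by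
    intro m
    have := congrArg (PowerSeries.coeff m) hf
    rw [Polynomial.coeff_coe] at this
    rw [this]
    have e : ((1 : PowerSeries ℤ) - PowerSeries.X) = 1 - PowerSeries.X ^ 1 := by rw [pow_one]
    rw [e, coeff_one_sub_pow_mul]
    simp [coeff_ind]
  simp only [coeff_ind]
  by_cases hd : p ∣ n
  · obtain ⟨m, rfl⟩ := hd
    rw [if_pos ⟨m, rfl⟩, Nat.mul_div_cancel_left _ hp, hcf]
    have hmem : (p * m ∈ pull p S) = (m ∈ S) := by
      simp [pull, Nat.mul_div_cancel_left _ hp]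
    rw [hmem]
    by_cases hm : 1 ≤ m
    · have h1 : p ≤ p * m := by nlinarith
      have h2 : p * m - p = p * (m - 1) := by
        rw [Nat.mul_sub_one]
      have h3 : (p * m - p ∈ pull p S) = (m - 1 ∈ S) := by
        rw [h2]; simp [pull, Nat.mul_div_cancel_left _ hp]
      rw [if_pos h1, h3, if_pos hm]
    · have hm0 : m = 0 := by omega
      subst hm0
      simp [hp.ne']
  · rw [if_neg hd]
    have h1 : ¬ (n ∈ pull p S) := fun h => hd h.1
    have h2 : p ≤ n → ¬ (n - p ∈ pull p S) := by
      intro hpn h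
      apply hd
      have : n = (n - p) + p := by omega
      rw [this]
      exact Nat.dvd_add h.1 dvd_rfl
    rw [if_neg h1]
    by_cases hpn : p ≤ n
    · rw [if_pos hpn, if_neg (h2 hpn)]; ring
    · rw [if_neg hpn]; ring


/-- The tower of semigroups. -/
def chain (p a : ℕ → ℕ) : ℕ → Set ℕ
  | 0 => Set.univ
  | l+1 => gen (p (l+1)) (a (l+1)) (chain p a l)

lemma chain_zero_mem (p a : ℕ → ℕ) : ∀ l, 0 ∈ chain p a l
  | 0 => Set.mem_univ 0
  | l+1 => gen_zero_mem (chain_zero_mem p a l)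

lemma chain_add_mem (p a : ℕ → ℕ) :
    ∀ l, ∀ x ∈ chain p a l, ∀ y ∈ chain p a l, x + y ∈ chain p a l
  | 0 => fun x _ y _ => Set.mem_univ _
  | l+1 => gen_add_mem (chain_add_mem p a l)

/-- conductor bound for one `gen` step -/
lemma gen_conductor (p a c : ℕ) (hp : 2 ≤ p) (hcop : Nat.Coprime p a) (S : Set ℕ)
    (hS : ∀ n, c ≤ n → n ∈ S) (hca : p * c ≤ a) :
    ∀ n, p * a ≤ n → n ∈ gen p a S := by
  intro n hn
  have hp1 : 1 < p := hp
  obtain ⟨b, -, hb⟩ := Nat.exists_mul_mod_eq_one_of_coprime hcop.symm hp1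
  set y := (n * b) % p with hy
  have hyp : y < p := Nat.mod_lt _ (by omega)
  have hya : y * a % p = n % p := by
    have h1 : y * a % p = (n * b) * a % p := Nat.mod_mul_mod _ _ _
    have h2 : n * b * a = n * (a * b) := by ring
    have h3 : (n * (a * b)) % p = ((n % p) * ((a * b) % p)) % p := Nat.mul_mod _ _ _
    rw [h1, h2, h3, hb, mul_one, Nat.mod_mod_of_dvd _ dvd_rfl]
  have hyan : y * a ≤ n := by
    calc y * a ≤ (p-1) * a := Nat.mul_le_mul_right a (by omega)
    _ ≤ p * a := Nat.mul_le_mul_right a (by omega)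
    _ ≤ n := hn
  have hdvd : p ∣ n - y * a := (Nat.modEq_iff_dvd' hyan).mp hya
  obtain ⟨m, hm⟩ := hdvd
  have han : a ≤ n - y * a := by
    have hap : a ≤ p * a := Nat.le_mul_of_pos_left a (by omega)
    have h4 : (p-1) * a + a = p * a := by rw [Nat.sub_one_mul]; omega
    have h5 : y * a ≤ (p-1) * a := Nat.mul_le_mul_right a (by omega)
    omega
  have hcm : c ≤ m := by
    by_contra hcm
    push_neg at hcm
    have : p * m < p * c := Nat.mul_lt_mul_of_pos_left hcm (by omega)
    omega
  exact ⟨m, hS m hcm, y, by omega⟩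

lemma coe_cast_aux (p : ℕ) : (((X:Polynomial ℤ)^p - 1 : Polynomial ℤ) : PowerSeries ℤ) = PowerSeries.X^p - 1 := by
  push_cast
  ring

lemma step (p a : ℕ) (hp : 2 ≤ p) (hcop : Nat.Coprime p a) (S : Set ℕ)
    (h0 : 0 ∈ S) (hadd : ∀ x ∈ S, ∀ y ∈ S, x + y ∈ S) (haS : a ∈ S)
    (D D' : Polynomial ℤ)
    (hD' : (D' : PowerSeries ℤ) = (1 - PowerSeries.X) * ind S)
    (heq : D * ((X^p - 1)*(X^a - 1)) = (X^(p*a) - 1)*(X-1)*(D'.comp (X^p))) :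
    (D : PowerSeries ℤ) = (1 - PowerSeries.X) * ind (gen p a S) := by
  have hp0 : 0 < p := by omega
  have hcomp := coe_comp_pow D' p hp0 S hD'
  have hc : (D : PowerSeries ℤ) * ((PowerSeries.X^p - 1)*(PowerSeries.X^a - 1))
      = (PowerSeries.X^(p*a) - 1)*(PowerSeries.X - 1)*((1 - PowerSeries.X^p) * ind (pull p S)) := by
    rw [← hcomp]
    have h := congrArg (fun q : Polynomial ℤ => (q : PowerSeries ℤ)) heq
    simp only [Polynomial.coe_mul] at h
    rw [coe_cast_aux p, coe_cast_aux a, coe_cast_aux (p*a)] at h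
    have h1 : (((X : Polynomial ℤ) - 1 : Polynomial ℤ) : PowerSeries ℤ) = PowerSeries.X - 1 := by
      have := coe_cast_aux 1
      simpa using this
    rw [h1] at h
    exact h
  have hkey := key_ps p a hp hcop S h0 hadd haS
  have hkey' : ind (gen p a S) * (PowerSeries.X^a - 1)
      = (PowerSeries.X^(p*a) - 1) * ind (pull p S) := by
    linear_combination (-1 : PowerSeries ℤ) * hkey
  have h2 : ((1-PowerSeries.X) * ind (gen p a S)) * ((PowerSeries.X^p - 1)*(PowerSeries.X^a - 1))
      = (PowerSeries.X^(p*a) - 1)*(PowerSeries.X - 1)*((1 - PowerSeries.X^p) * ind (pull p S)) := by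
    linear_combination ((1-PowerSeries.X)*(PowerSeries.X^p-1)) * hkey'
  have hA : ((PowerSeries.X^p - 1)*(PowerSeries.X^a - 1) : PowerSeries ℤ) ≠ 0 := by
    rw [← coe_cast_aux p, ← coe_cast_aux a, ← Polynomial.coe_mul]
    rw [Ne, Polynomial.coe_eq_zero_iff]
    apply mul_ne_zero
    · have := Polynomial.monic_X_pow_sub_C (1 : ℤ) (by omega : p ≠ 0)
      simpa using this.ne_zero
    · have ha0 : a ≠ 0 := fun h => by simp [h] at hcop; omega
      have := Polynomial.monic_X_pow_sub_C (1 : ℤ) ha0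
      simpa using this.ne_zero
  exact mul_right_cancel₀ hA (hc.trans h2.symm)

lemma gaps_decomp {M : Type*} [AddCommMonoid M] (a : ℕ) (ha : 2 ≤ a) (G : Finset ℕ) (F : ℕ → M)
    (hnd : ∀ g ∈ G, ¬ a ∣ g)
    (hdown : ∀ g ∈ G, a ≤ g → g - a ∈ G) :
    ∃ (m : ℕ) (r n : ℕ → ℕ),
      (∀ i < m, 0 < r i ∧ r i < a) ∧
      (∀ i < m, ∀ j < m, i ≠ j → r i ≠ r j) ∧
      ∑ g ∈ G, F g = ∑ i ∈ Finset.range m, ∑ j ∈ Finset.range (n i + 1), F (r i + j * a) := by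
  have ha0 : 0 < a := by omega
  have hmod : ∀ g ∈ G, g % a ∈ G := by
    intro g
    induction g using Nat.strong_induction_on with
    | _ g ih =>
      intro hg
      by_cases hga : a ≤ g
      · have h1 : g - a ∈ G := hdown g hg hga
        have h2 : g - a < g := by omega
        have h3 := ih (g-a) h2 h1
        rwa [Nat.mod_eq_sub_mod hga]
      · rwa [Nat.mod_eq_of_lt (by omega)]
  have hstepdown : ∀ d j r', r' + (j + d) * a ∈ G → r' + j * a ∈ G := by
    intro d
    induction d with
    | zero => simpa using fun j r' h => h
    | succ d ih =>
      intro j r' hg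
      have h1 : a ≤ r' + (j + (d+1)) * a := by
        have : a ≤ (j + (d+1)) * a := Nat.le_mul_of_pos_left a (by omega)
        omega
      have h2 := hdown _ hg h1
      have h3 : r' + (j + (d+1)) * a - a = r' + (j + d) * a := by
        have : (j + (d+1)) * a = (j + d) * a + a := by ring
        omega
      rw [h3] at h2
      exact ih j r' h2
  classical
  set R := G.image (· % a) with hR
  set m := R.card with hm
  set N : ℕ → ℕ := fun r => (G.filter (fun g => g % a = r)).sup (fun g => g / a) with hN
  have hclass : ∀ r ∈ R, G.filter (fun g => g % a = r)
      = (Finset.range (N r + 1)).image (fun j => r + j * a) := by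
    intro r hr
    obtain ⟨g0, hg0, hg0r⟩ := Finset.mem_image.mp hr
    have hrG : r ∈ G := hg0r ▸ hmod g0 hg0
    have hra : r < a := by rw [← hg0r]; exact Nat.mod_lt _ ha0
    have hrmod : r % a = r := Nat.mod_eq_of_lt hra
    have hne : (G.filter (fun g => g % a = r)).Nonempty :=
      ⟨r, Finset.mem_filter.mpr ⟨hrG, hrmod⟩⟩
    obtain ⟨gm, hgm, hgmax⟩ := Finset.exists_mem_eq_sup _ hne (fun g => g / a)
    have hgmf := Finset.mem_filter.mp hgm
    have hgmrep : gm = r + (gm / a) * a := by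
      have h := Nat.div_add_mod gm a
      rw [hgmf.2, Nat.mul_comm a (gm / a)] at h
      omega
    apply Finset.ext
    intro g
    simp only [Finset.mem_filter, Finset.mem_image, Finset.mem_range]
    constructor
    · rintro ⟨hgG, hgr⟩
      refine ⟨g / a, ?_, ?_⟩
      · have : g / a ≤ N r := Finset.le_sup (f := fun g => g / a) (Finset.mem_filter.mpr ⟨hgG, hgr⟩)
        omega
      · have h := Nat.div_add_mod g a
        rw [hgr, Nat.mul_comm a (g / a)] at h
        omega
    · rintro ⟨j, hj, rfl⟩
      constructor
      · have hNr : N r = gm / a := by rw [hN]; exact hgmax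
        have hmem : r + (j + (N r - j)) * a ∈ G := by
          have h5 : j + (N r - j) = N r := by omega
          rw [h5, hNr, ← hgmrep]
          exact hgmf.1
        exact hstepdown (N r - j) j r hmem
      · simp [Nat.add_mul_mod_self_right, hrmod]
  have hsum1 : ∑ g ∈ G, F g = ∑ r ∈ R, ∑ g ∈ G.filter (fun g => g % a = r), F g :=
    (Finset.sum_fiberwise_of_maps_to (fun g hg => Finset.mem_image_of_mem _ hg) F).symm
  have hsum2 : ∀ r ∈ R, ∑ g ∈ G.filter (fun g => g % a = r), F g
      = ∑ j ∈ Finset.range (N r + 1), F (r + j * a) := by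
    intro r hr
    rw [hclass r hr]
    apply Finset.sum_image
    intro x _ y _ hxy
    have : x * a = y * a := by simp only at hxy; omega
    exact Nat.eq_of_mul_eq_mul_right ha0 this
  -- enumerate R
  have hcard : R.card = m := rfl
  set e := R.orderIsoOfFin hcard with he
  refine ⟨m, fun i => if h : i < m then (e ⟨i, h⟩ : ℕ) else 0,
    fun i => if h : i < m then N (e ⟨i, h⟩ : ℕ) else 0, ?_, ?_, ?_⟩
  · intro i hi
    simp only [dif_pos hi]
    have hmem : ((e ⟨i, hi⟩ : ℕ)) ∈ R := (e ⟨i, hi⟩).2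
    obtain ⟨g, hg, hgr⟩ := Finset.mem_image.mp hmem
    constructor
    · rcases Nat.eq_zero_or_pos (e ⟨i, hi⟩ : ℕ) with h | h
      swap
      · exact h
      · exfalso
        exact hnd g hg (Nat.dvd_of_mod_eq_zero (by omega))
    · rw [← hgr]; exact Nat.mod_lt _ ha0
  · intro i hi j hj hij
    simp only [dif_pos hi, dif_pos hj]
    intro hcon
    apply hij
    have := Subtype.coe_injective hcon
    have := e.injective this
    simpa using congrArg Fin.val this
  · rw [hsum1, Finset.sum_congr rfl hsum2]
    have h1 : ∑ r ∈ R, ∑ j ∈ Finset.range (N r + 1), F (r + j * a)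
        = ∑ i : Fin m, ∑ j ∈ Finset.range (N (e i : ℕ) + 1), F ((e i : ℕ) + j * a) := by
      rw [← Finset.sum_coe_sort R (fun r => ∑ j ∈ Finset.range (N r + 1), F (r + j * a))]
      exact (Equiv.sum_comp e.toEquiv (fun x => ∑ j ∈ Finset.range (N (x:ℕ) + 1), F ((x:ℕ) + j * a))).symm
    rw [h1, ← Fin.sum_univ_eq_sum_range]
    apply Finset.sum_congr rfl
    intro i _
    have hi : (i : ℕ) < m := i.2
    simp only [dif_pos hi]

lemma alternating_of_form (E : Finset ℕ) (hE : ∀ g ∈ E, 0 < g) (D : Polynomial ℤ)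
    (hD : D = 1 + ∑ g ∈ E, X ^ g * (X - 1)) : AlternatingCoeffs D := by
  classical
  set h : ℕ → ℤ := fun k => if k ∈ E then 0 else 1 with hh
  have hval : ∀ i, h i = 0 ∨ h i = 1 := by
    intro i; rw [hh]; dsimp only; split <;> simp
  have hterm : ∀ g i : ℕ, (X^g*(X-1) : Polynomial ℤ).coeff i
      = (if i = g + 1 then 1 else 0) - (if i = g then 1 else 0) := by
    intro g i
    have e : (X^g*(X-1) : Polynomial ℤ) = X^(g+1) - X^g := by ring
    rw [e, Polynomial.coeff_sub, Polynomial.coeff_X_pow, Polynomial.coeff_X_pow]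
  have hc0 : D.coeff 0 = 1 := by
    rw [hD, Polynomial.coeff_add, Polynomial.finset_sum_coeff]
    have : ∀ g ∈ E, (X^g*(X-1) : Polynomial ℤ).coeff 0 = 0 := by
      intro g hg
      rw [hterm]
      have := hE g hg
      rw [if_neg (by omega), if_neg (by omega)]
      ring
    rw [Finset.sum_congr rfl this]
    simp
  have h0E : 0 ∉ E := fun h => by have := hE 0 h; omega
  have hc0' : D.coeff 0 = h 0 := by rw [hc0, hh]; simp [h0E]
  have hcS : ∀ k : ℕ, D.coeff (k+1) = h (k+1) - h k := by
    intro k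
    rw [hD, Polynomial.coeff_add, Polynomial.finset_sum_coeff]
    have e1 : ∀ g ∈ E, (X^g*(X-1) : Polynomial ℤ).coeff (k+1)
        = (if g = k then 1 else 0) - (if g = k+1 then 1 else 0) := by
      intro g hg
      rw [hterm]
      congr 1
      · by_cases h : g = k
        · rw [if_pos h, if_pos (by omega)]
        · rw [if_neg h, if_neg (by omega)]
      · by_cases h : g = k + 1
        · rw [if_pos h, if_pos (by omega)]
        · rw [if_neg h, if_neg (by omega)]
    rw [Finset.sum_congr rfl e1, Finset.sum_sub_distrib,
      Finset.sum_ite_eq' E k (fun _ => (1:ℤ)), Finset.sum_ite_eq' E (k+1) (fun _ => (1:ℤ))]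
    have : (1 : Polynomial ℤ).coeff (k+1) = 0 := by
      rw [Polynomial.coeff_one, if_neg (by omega)]
    rw [this, hh]
    dsimp only
    by_cases h1 : k ∈ E <;> by_cases h2 : k + 1 ∈ E <;> simp [h1, h2]
  set F : ℕ → ℕ := fun i => (D.support.filter (fun j => i < j)).card with hF
  have hFrel : ∀ i, F i = F (i+1) + (if D.coeff (i+1) ≠ 0 then 1 else 0) := by
    intro i
    have hset : D.support.filter (fun j => i < j)
        = D.support.filter (fun j => i+1 < j) ∪ D.support.filter (fun j => j = i+1) := by
      rw [← Finset.filter_or]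
      apply Finset.filter_congr
      intro j _
      constructor
      · intro hj; omega
      · intro hj; omega
    have hdisj : Disjoint (D.support.filter (fun j => i+1 < j)) (D.support.filter (fun j => j = i+1)) := by
      rw [Finset.disjoint_left]
      intro j h1 h2
      rw [Finset.mem_filter] at h1 h2
      omega
    rw [hF]
    dsimp only
    rw [hset, Finset.card_union_of_disjoint hdisj, Finset.filter_eq']
    congr 1
    by_cases hmem : i + 1 ∈ D.support
    · rw [if_pos hmem, if_pos]
      · simp
      · rwa [Polynomial.mem_support_iff] at hmem
    · rw [if_neg hmem, if_neg]
      · simp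
      · rw [Polynomial.mem_support_iff] at hmem; simpa using hmem
  set B := (E.sup id) + D.natDegree + 1 with hB
  have hbase : ∀ i, B ≤ i → (h i = 1 ↔ Even (F i)) := by
    intro i hi
    have hiE : i ∉ E := by
      intro hmem
      have := Finset.le_sup (f := id) hmem
      simp only [id] at this
      omega
    have hF0 : F i = 0 := by
      rw [hF]
      dsimp only
      rw [Finset.card_eq_zero, Finset.filter_eq_empty_iff]
      intro j hj
      have := Polynomial.le_natDegree_of_ne_zero (Polynomial.mem_support_iff.mp hj)
      omega
    rw [hF0, hh]
    simp [hiE]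
  have hstepd : ∀ i, (h (i+1) = 1 ↔ Even (F (i+1))) → (h i = 1 ↔ Even (F i)) := by
    intro i given
    by_cases hcz : D.coeff (i+1) = 0
    · have h1 : h (i+1) = h i := by have := hcS i; omega
      have h2 : F i = F (i+1) := by rw [hFrel i]; simp [hcz]
      rw [← h1, h2]; exact given
    · have h1 : F i = F (i+1) + 1 := by rw [hFrel i]; simp [hcz]
      have h2 := hcS i
      rcases hval i with hi0 | hi1 <;> rcases hval (i+1) with hj0 | hj1
      · exfalso; apply hcz; omega
      · have hev : Even (F (i+1)) := given.mp hj1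
        rw [hi0, h1]
        simp [Nat.even_add_one, hev]
      · have hne : ¬ Even (F (i+1)) := fun hev => by have := given.mpr hev; omega
        rw [hi1, h1]
        simp [Nat.even_add_one, hne]
      · exfalso; apply hcz; omega
  have hQ : ∀ j i, B ≤ i + j → (h i = 1 ↔ Even (F i)) := by
    intro j
    induction j with
    | zero => intro i hi; exact hbase i (by omega)
    | succ j ih => intro i hi; exact hstepd i (ih (i+1) (by omega))
  have hkey : ∀ i, h i = 1 ↔ Even (F i) := fun i => hQ B i (by omega)
  intro i
  constructor
  · rcases i with _ | k
    · rw [hc0]; simp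
    · have := hcS k
      rcases hval k with h1 | h1 <;> rcases hval (k+1) with h2 | h2 <;>
        simp only [Set.mem_insert_iff, Set.mem_singleton_iff] <;> omega
  · intro hnz
    rcases i with _ | k
    · rw [hc0]
      have hh0 : h 0 = 1 := by rw [hh]; simp [h0E]
      have := (hkey 0).mp hh0
      exact ((this).neg_one_pow).symm
    · have hcs := hcS k
      rcases hval k with h1 | h1 <;> rcases hval (k+1) with h2 | h2
      · exfalso; apply hnz; omega
      · have hev : Even (F (k+1)) := (hkey (k+1)).mp h2
        have he : D.coeff (k+1) = 1 := by omega
        rw [he]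
        exact (hev.neg_one_pow).symm
      · have hne : ¬ Even (F (k+1)) := fun hev => by have := (hkey (k+1)).mpr hev; omega
        have hodd : Odd (F (k+1)) := Nat.not_even_iff_odd.mp hne
        have he : D.coeff (k+1) = -1 := by omega
        rw [he]
        exact (hodd.neg_one_pow).symm
      · exfalso; apply hnz; omega

lemma chain_succ (p a : ℕ → ℕ) (l : ℕ) :
    chain p a (l+1) = gen (p (l+1)) (a (l+1)) (chain p a l) := rfl

lemma coeff_form (G : Finset ℕ) (hG : ∀ g ∈ G, 0 < g) :
    ((1 + ∑ g ∈ G, X^g*(X-1) : Polynomial ℤ)).coeff 0 = 1 ∧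
    ∀ k, ((1 + ∑ g ∈ G, X^g*(X-1) : Polynomial ℤ)).coeff (k+1)
      = (if k ∈ G then 1 else 0) - (if k+1 ∈ G then 1 else 0) := by
  classical
  have hterm : ∀ g i : ℕ, (X^g*(X-1) : Polynomial ℤ).coeff i
      = (if i = g + 1 then 1 else 0) - (if i = g then 1 else 0) := by
    intro g i
    have e : (X^g*(X-1) : Polynomial ℤ) = X^(g+1) - X^g := by ring
    rw [e, Polynomial.coeff_sub, Polynomial.coeff_X_pow, Polynomial.coeff_X_pow]
  constructor
  · rw [Polynomial.coeff_add, Polynomial.finset_sum_coeff]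
    have : ∀ g ∈ G, (X^g*(X-1) : Polynomial ℤ).coeff 0 = 0 := by
      intro g hg
      rw [hterm]
      have := hG g hg
      rw [if_neg (by omega), if_neg (by omega)]
      ring
    rw [Finset.sum_congr rfl this]
    simp
  · intro k
    rw [Polynomial.coeff_add, Polynomial.finset_sum_coeff]
    have e1 : ∀ g ∈ G, (X^g*(X-1) : Polynomial ℤ).coeff (k+1)
        = (if g = k then 1 else 0) - (if g = k+1 then 1 else 0) := by
      intro g hg
      rw [hterm]
      congr 1
      · by_cases h : g = k
        · rw [if_pos h, if_pos (by omega)]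
        · rw [if_neg h, if_neg (by omega)]
      · by_cases h : g = k + 1
        · rw [if_pos h, if_pos (by omega)]
        · rw [if_neg h, if_neg (by omega)]
    rw [Finset.sum_congr rfl e1, Finset.sum_sub_distrib,
      Finset.sum_ite_eq' G k (fun _ => (1:ℤ)), Finset.sum_ite_eq' G (k+1) (fun _ => (1:ℤ))]
    have h1 : (1 : Polynomial ℤ).coeff (k+1) = 0 := by
      rw [Polynomial.coeff_one, if_neg (by omega)]
    rw [h1, zero_add]

lemma poly_form (S : Set ℕ) (c : ℕ) (h0S : 0 ∈ S) (hS : ∀ n, c ≤ n → n ∈ S)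
    (D : Polynomial ℤ) (hD : (D : PowerSeries ℤ) = (1 - PowerSeries.X) * ind S) :
    ∃ G : Finset ℕ, (∀ g, g ∈ G ↔ g ∉ S) ∧ D = 1 + ∑ g ∈ G, X ^ g * (X - 1) := by
  classical
  have hfin : {n | ¬ n ∈ S}.Finite := by
    apply Set.Finite.subset (Set.finite_Iio c)
    intro n hn
    simp only [Set.mem_setOf_eq] at hn
    by_contra h
    simp only [Set.mem_Iio, not_lt] at h
    exact hn (hS n h)
  refine ⟨hfin.toFinset, fun g => by simp, ?_⟩
  have hGmem : ∀ g, g ∈ hfin.toFinset ↔ g ∉ S := fun g => by simp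
  have hGpos : ∀ g ∈ hfin.toFinset, 0 < g := by
    intro g hg
    rcases Nat.eq_zero_or_pos g with rfl | h
    · exact absurd h0S ((hGmem 0).mp hg)
    · exact h
  obtain ⟨hc0, hcS⟩ := coeff_form hfin.toFinset hGpos
  rw [← Polynomial.coe_inj]
  ext n
  rw [hD]
  have e : ((1 : PowerSeries ℤ) - PowerSeries.X) = 1 - PowerSeries.X ^ 1 := by rw [pow_one]
  rw [e, coeff_one_sub_pow_mul, Polynomial.coeff_coe]
  simp only [coeff_ind]
  rcases n with _ | k
  · rw [hc0]
    simp [h0S]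
  · rw [hcS k]
    have hk1 : 1 ≤ k + 1 := by omega
    rw [if_pos hk1]
    have h2 : k + 1 - 1 = k := by omega
    rw [h2]
    by_cases hA : k ∈ S <;> by_cases hB : k + 1 ∈ S <;>
      simp [hA, hB, (hGmem k), (hGmem (k+1))]

end CPA

/-- The characteristic polynomials `Δ_l` of an irreducible plane curve singularity,
defined recursively by `Δ_1 = (t^{p_1 a_1}-1)(t-1)/((t^{p_1}-1)(t^{a_1}-1))` and
`Δ_l(t) = (t^{p_l a_l}-1)(t-1)/((t^{p_l}-1)(t^{a_l}-1)) · Δ_{l-1}(t^{p_l})`,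
have alternating coefficients, and admit the semigroup form
`Δ_l = 1 + Σ_i Σ_{j=0}^{n_i} t^{r_i + j a_l}(t-1)` with distinct residues
`0 < r_i < a_l`. -/
theorem characteristic_poly_alternating (s : ℕ) (p a : ℕ → ℕ) (Δ : ℕ → Polynomial ℤ)
    (hp : ∀ k, 1 ≤ k → k ≤ s → 2 ≤ p k)
    (ha : ∀ k, 1 ≤ k → k ≤ s → 2 ≤ a k)
    (hcop : ∀ k, 1 ≤ k → k ≤ s → Nat.Coprime (p k) (a k))
    (harec : ∀ k, 1 ≤ k → k + 1 ≤ s → ∃ q, 2 ≤ q ∧ Nat.Coprime q (p (k + 1)) ∧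
        a (k + 1) = q + p (k + 1) * p k * a k)
    (hΔ1 : Δ 1 * ((X ^ p 1 - 1) * (X ^ a 1 - 1)) = (X ^ (p 1 * a 1) - 1) * (X - 1))
    (hΔrec : ∀ l, 2 ≤ l → l ≤ s →
      Δ l * ((X ^ p l - 1) * (X ^ a l - 1))
        = (X ^ (p l * a l) - 1) * (X - 1) * ((Δ (l - 1)).comp (X ^ p l))) :
    ∀ l, 1 ≤ l → l ≤ s → AlternatingCoeffs (Δ l) ∧
      ∃ (m : ℕ) (r n : ℕ → ℕ),
        (∀ i < m, 0 < r i ∧ r i < a l) ∧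
        (∀ i < m, ∀ j < m, i ≠ j → r i ≠ r j) ∧
        Δ l = 1 + ∑ i ∈ Finset.range m, ∑ j ∈ Finset.range (n i + 1),
          X ^ (r i + j * a l) * (X - 1) := by
  -- conductor bounds for the chain of semigroups
  have hcond : ∀ l, l ≤ s → ∀ n, (if l = 0 then 0 else p l * a l) ≤ n →
      n ∈ CPA.chain p a l := by
    intro l
    induction l with
    | zero => intro _ n _; exact Set.mem_univ n
    | succ l ih =>
      intro hls n hn
      simp only [Nat.succ_ne_zero, if_false] at hn
      rw [CPA.chain_succ]
      refine CPA.gen_conductor (p (l+1)) (a (l+1)) (if l = 0 then 0 else p l * a l)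
        (hp (l+1) (by omega) hls) (hcop (l+1) (by omega) hls) _ (ih (by omega)) ?_ n hn
      rcases Nat.eq_zero_or_pos l with rfl | hl
      · simp
      · obtain ⟨q, hq2, _, hqe⟩ := harec l (by omega) hls
        rw [if_neg (by omega)]
        have he : p (l+1) * (p l * a l) = p (l+1) * p l * a l := by ring
        omega
  -- a (l+1) belongs to chain l
  have haT : ∀ l, l + 1 ≤ s → a (l + 1) ∈ CPA.chain p a l := by
    intro l hls
    rcases Nat.eq_zero_or_pos l with rfl | hl
    · exact Set.mem_univ _
    · obtain ⟨q, hq2, _, hqe⟩ := harec l (by omega) hls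
      refine hcond l (by omega) _ ?_
      rw [if_neg (by omega)]
      have h1 : p l * a l ≤ p (l+1) * (p l * a l) :=
        Nat.le_mul_of_pos_left _ (by have := hp (l+1) (by omega) hls; omega)
      have he : p (l+1) * (p l * a l) = p (l+1) * p l * a l := by ring
      omega
  -- main power series identity
  have main : ∀ l, 1 ≤ l → l ≤ s →
      (Δ l : PowerSeries ℤ) = (1 - PowerSeries.X) * CPA.ind (CPA.chain p a l) := by
    intro l
    induction l with
    | zero => omega
    | succ l ih =>
      intro _ hls
      rw [CPA.chain_succ]
      rcases Nat.eq_zero_or_pos l with rfl | hl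
      · -- base case l + 1 = 1
        refine CPA.step (p 1) (a 1) (hp 1 le_rfl hls) (hcop 1 le_rfl hls) Set.univ
          trivial (fun _ _ _ _ => trivial) trivial (Δ 1) 1 ?_ ?_
        · rw [Polynomial.coe_one]
          exact CPA.ind_univ_mul.symm
        · rw [Polynomial.one_comp, mul_one]
          exact hΔ1
      · -- inductive step
        have hrec := hΔrec (l+1) (by omega) hls
        simp only [Nat.add_sub_cancel] at hrec
        exact CPA.step (p (l+1)) (a (l+1)) (hp (l+1) (by omega) hls)
          (hcop (l+1) (by omega) hls) (CPA.chain p a l)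
          (CPA.chain_zero_mem p a l) (CPA.chain_add_mem p a l) (haT l hls)
          (Δ (l+1)) (Δ l) (ih (by omega) (by omega)) hrec
  -- conclude
  intro l hl1 hls
  obtain ⟨G, hGmem, hform⟩ := CPA.poly_form (CPA.chain p a l) (if l = 0 then 0 else p l * a l)
    (CPA.chain_zero_mem p a l) (hcond l hls) (Δ l) (main l hl1 hls)
  obtain ⟨l', rfl⟩ : ∃ l', l = l' + 1 := ⟨l - 1, by omega⟩
  have hal : 2 ≤ a (l'+1) := ha (l'+1) (by omega) hls
  have hamem : a (l'+1) ∈ CPA.chain p a (l'+1) := by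
    rw [CPA.chain_succ]
    exact CPA.a_mem_gen (CPA.chain_zero_mem p a l')
  have hmul : ∀ m : ℕ, m * a (l'+1) ∈ CPA.chain p a (l'+1) := by
    intro m
    have := CPA.add_mul_a_mem (CPA.chain_add_mem p a (l'+1)) hamem m 0
      (CPA.chain_zero_mem p a (l'+1))
    simpa using this
  have hGpos : ∀ g ∈ G, 0 < g := by
    intro g hg
    rcases Nat.eq_zero_or_pos g with rfl | h
    · exact absurd (CPA.chain_zero_mem p a (l'+1)) ((hGmem 0).mp hg)
    · exact h
  have hGnd : ∀ g ∈ G, ¬ a (l'+1) ∣ g := by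
    rintro g hg ⟨m, rfl⟩
    have : a (l'+1) * m ∈ CPA.chain p a (l'+1) := by
      have := hmul m
      rwa [Nat.mul_comm] at this
    exact (hGmem _).mp hg this
  have hGdown : ∀ g ∈ G, a (l'+1) ≤ g → g - a (l'+1) ∈ G := by
    intro g hg hle
    rw [hGmem]
    intro hmem
    apply (hGmem g).mp hg
    have := CPA.chain_add_mem p a (l'+1) _ hmem _ hamem
    have he : g - a (l'+1) + a (l'+1) = g := by omega
    rwa [he] at this
  constructor
  · exact CPA.alternating_of_form G hGpos (Δ (l'+1)) hform
  · obtain ⟨m, r, n, hr1, hr2, hsum⟩ := CPA.gaps_decomp (a (l'+1)) hal G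
      (fun g => (X ^ g * (X - 1) : Polynomial ℤ)) hGnd hGdown
    exact ⟨m, r, n, hr1, hr2, by rw [hform, hsum]⟩
end

section
/- Let gcd(p,a) = 1 and let h = gcd(p, m), h̃ = gcd(a, m) for a positive integer m, with (h−1)(h̃−1) = 0. Define Δ♮(t) = (1/(a^{h-1} p^{h̃-1})) · t^{−(a−1)(p−1)/2} · (t^{pa/(hh̃)}−1)^{hh̃}(t−1) / ((t^{p/h}−1)^h (t^{a/h̃}−1)^{h̃}). Then (Δ♮)''(1) = (1/12)(a²/h̃ − 1)(p²/h − 1). -/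
open Polynomial

lemma sumId' (n : ℕ) : ∑ i ∈ Finset.range n, (i:ℂ) = n*(n-1)/2 := by
  induction n with
  | zero => simp
  | succ m ih => rw [Finset.sum_range_succ, ih]; push_cast; ring

lemma sumSq' (n : ℕ) : ∑ i ∈ Finset.range n, (i:ℂ)^2 = n*(n-1)*(2*n-1)/6 := by
  induction n with
  | zero => simp
  | succ m ih => rw [Finset.sum_range_succ, ih]; push_cast; ring

lemma ev0 (b r : ℕ) : eval (1:ℂ) (∑ i ∈ Finset.range b, X^(r*i)) = b := by
  simp [eval_finset_sum]

lemma ev1 (b r : ℕ) :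
    eval (1:ℂ) (derivative (∑ i ∈ Finset.range b, X^(r*i)))
      = (r:ℂ) * ((b:ℂ)*((b:ℂ)-1)/2) := by
  rw [derivative_sum]
  simp only [derivative_X_pow, eval_finset_sum, eval_mul, eval_C, eval_pow, eval_X, one_pow,
    mul_one]
  rw [show (∑ i ∈ Finset.range b, ((r*i:ℕ):ℂ)) = ∑ i ∈ Finset.range b, (r:ℂ)*(i:ℂ) by
    push_cast; rfl]
  rw [← Finset.mul_sum, sumId']

lemma ev2 (b r : ℕ) :
    eval (1:ℂ) (derivative (derivative (∑ i ∈ Finset.range b, X^(r*i))))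
      = (r:ℂ)^2 * ((b:ℂ)*((b:ℂ)-1)*(2*(b:ℂ)-1)/6) - (r:ℂ) * ((b:ℂ)*((b:ℂ)-1)/2) := by
  rw [derivative_sum]
  simp only [derivative_X_pow, derivative_sum, derivative_C_mul, eval_finset_sum, eval_mul,
    eval_C, eval_pow, eval_X, one_pow, mul_one]
  have : ∀ i ∈ Finset.range b, ((r*i:ℕ):ℂ) * ((r*i-1:ℕ):ℂ)
      = (r:ℂ)^2*(i:ℂ)^2 - (r:ℂ)*(i:ℂ) := by
    intro i _
    rcases Nat.eq_zero_or_pos (r*i) with h | h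
    · rw [h]; push_cast [h]
      rcases Nat.mul_eq_zero.mp h with h' | h' <;> simp [h']
    · rw [Nat.cast_sub h]; push_cast; ring
  rw [Finset.sum_congr rfl this, Finset.sum_sub_distrib]
  rw [show (∑ i ∈ Finset.range b, (r:ℂ)^2*(i:ℂ)^2) = (r:ℂ)^2 * ∑ i ∈ Finset.range b, (i:ℂ)^2 from
    (Finset.mul_sum _ _ _).symm]
  rw [show (∑ i ∈ Finset.range b, (r:ℂ)*(i:ℂ)) = (r:ℂ) * ∑ i ∈ Finset.range b, (i:ℂ) from
    (Finset.mul_sum _ _ _).symm]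
  rw [sumId', sumSq']

noncomputable def Dop (Q : Polynomial ℂ) (N : ℕ) : Polynomial ℂ :=
  derivative Q * X - C (N:ℂ) * Q

lemma hasDerivAt_aux (Q : Polynomial ℂ) (N : ℕ) {t : ℂ} (ht : t ≠ 0) :
    HasDerivAt (fun s : ℂ => Q.eval s / s ^ N) (eval t (Dop Q N) / t ^ (N+1)) t := by
  have h1 : HasDerivAt (fun s : ℂ => Q.eval s) (eval t (derivative Q)) t := Q.hasDerivAt t
  have h2 := hasDerivAt_zpow (-(N:ℤ)) t (Or.inl ht)
  have h3 := h1.mul h2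
  have he : (fun s : ℂ => Q.eval s / s ^ N) = fun s : ℂ => Q.eval s * s ^ (-(N:ℤ)) := by
    funext s
    rw [zpow_neg, zpow_natCast, div_eq_mul_inv]
  rw [he]
  refine h3.congr_deriv ?_
  have e1 : t ^ (-(N:ℤ)) = (t ^ N)⁻¹ := by rw [zpow_neg, zpow_natCast]
  have e2 : t ^ (-(N:ℤ) - 1) = (t ^ (N+1))⁻¹ := by
    rw [show (-(N:ℤ) - 1) = -((N+1:ℕ):ℤ) by push_cast; ring, zpow_neg, zpow_natCast]
  rw [e1, e2]
  simp only [Dop, eval_sub, eval_mul, eval_X, eval_C]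
  push_cast
  field_simp
  ring



lemma iterDeriv2 (Q : Polynomial ℂ) (N : ℕ) :
    iteratedDeriv 2 (fun t : ℂ => Q.eval t / t ^ N) 1
      = eval 1 (derivative (derivative Q)) - 2*(N:ℂ)*eval 1 (derivative Q)
        + (N:ℂ)*((N:ℂ)+1)*eval 1 Q := by
  have hev : deriv (fun t : ℂ => Q.eval t / t ^ N)
      =ᶠ[nhds 1] (fun t : ℂ => eval t (Dop Q N) / t ^ (N+1)) := by
    filter_upwards [isOpen_ne.mem_nhds (by norm_num : (1:ℂ) ≠ 0)] with t ht
    exact (hasDerivAt_aux Q N ht).deriv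
  rw [show (2:ℕ) = 1 + 1 from rfl, iteratedDeriv_succ, iteratedDeriv_one]
  rw [hev.deriv_eq]
  rw [(hasDerivAt_aux (Dop Q N) (N+1) one_ne_zero).deriv]
  simp only [Dop, derivative_sub, derivative_mul, derivative_X, derivative_C_mul, derivative_C, eval_sub,
    eval_add, eval_mul, eval_X, eval_C, mul_one, one_pow, div_one, zero_mul, sub_zero, eval_zero]
  push_cast
  ring

lemma ev0' (b : ℕ) : eval (1:ℂ) (∑ i ∈ Finset.range b, X^i) = b := by
  simpa using ev0 b 1

lemma ev1' (b : ℕ) : eval (1:ℂ) (derivative (∑ i ∈ Finset.range b, X^i))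
    = (b:ℂ)*((b:ℂ)-1)/2 := by
  simpa using ev1 b 1

lemma ev2' (b : ℕ) : eval (1:ℂ) (derivative (derivative (∑ i ∈ Finset.range b, X^i)))
    = (b:ℂ)*((b:ℂ)-1)*(2*(b:ℂ)-1)/6 - (b:ℂ)*((b:ℂ)-1)/2 := by
  simpa using ev2 b 1

lemma helper (b k r : ℕ) (hb : 2 ≤ b) (hk : 1 ≤ k) (hr : 1 ≤ r)
    (heven : 2 ∣ (b-1)*(k*r-1)) (P : Polynomial ℂ)
    (hid : C ((b:ℂ)^(k-1)) * (P * ∑ i ∈ Finset.range b, X^i)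
        = (∑ i ∈ Finset.range b, X^(r*i))^k) :
    iteratedDeriv 2 (fun t : ℂ => P.eval t / t ^ ((b-1)*(k*r-1)/2)) 1
      = (1/12 : ℂ) * ((b:ℂ)^2 - 1) * ((k:ℂ)*(r:ℂ)^2 - 1) := by
  have hb0 : (b:ℂ) ≠ 0 := Nat.cast_ne_zero.mpr (by omega)
  have hc : ((b:ℂ))^(k-1) ≠ 0 := pow_ne_zero _ hb0
  have e0 := congrArg (eval 1) hid
  have e1 := congrArg (fun q => eval 1 (derivative q)) hid
  have e2 := congrArg (fun q => eval 1 (derivative (derivative q))) hid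
  simp only [eval_mul, eval_C, eval_pow, ev0, ev0'] at e0
  simp only [derivative_C_mul, derivative_mul, derivative_pow, derivative_C, eval_mul, eval_add,
    eval_C, eval_pow, ev0, ev0', ev1, ev1', zero_mul, mul_zero, zero_add, add_zero, eval_zero,
    Nat.cast_one, one_mul, one_pow] at e1
  simp only [derivative_C_mul, derivative_mul, derivative_pow, derivative_add, derivative_C,
    eval_mul, eval_add, eval_C, eval_pow, ev0, ev0', ev1, ev1', ev2, ev2', zero_mul, mul_zero,
    zero_add, add_zero, eval_zero, Nat.cast_one, one_mul, one_pow] at e2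
  -- P(1) = 1
  have hP0 : eval 1 P = 1 := by
    have hbk : (b:ℂ)^k = (b:ℂ)^(k-1) * b := by
      rw [← pow_succ, Nat.sub_add_cancel hk]
    rw [hbk] at e0
    have h' := mul_left_cancel₀ hc e0
    apply mul_right_cancel₀ hb0
    linear_combination h'
  rw [hP0] at e1 e2
  -- power relation
  have hcd : ((k-1:ℕ):ℂ) * (b:ℂ)^(k-1-1) * (b:ℂ) = ((k:ℂ)-1) * (b:ℂ)^(k-1) := by
    match k, hk with
    | 1, _ => norm_num
    | (m+2), _ =>
      push_cast
      rw [pow_succ]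
      ring
  have c1 : eval 1 (derivative P) * (b:ℂ) + (b:ℂ)*((b:ℂ)-1)/2
      = (k:ℂ)*((r:ℂ)*((b:ℂ)*((b:ℂ)-1)/2)) := by
    apply mul_left_cancel₀ hc
    linear_combination e1
  have c2 : (eval 1 (derivative (derivative P))*(b:ℂ)
        + 2*(eval 1 (derivative P))*((b:ℂ)*((b:ℂ)-1)/2)
        + ((b:ℂ)*((b:ℂ)-1)*(2*(b:ℂ)-1)/6 - (b:ℂ)*((b:ℂ)-1)/2))*(b:ℂ)
      = (k:ℂ)*(((k:ℂ)-1)*((r:ℂ)*((b:ℂ)*((b:ℂ)-1)/2))^2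
        + ((r:ℂ)^2*((b:ℂ)*((b:ℂ)-1)*(2*(b:ℂ)-1)/6) - (r:ℂ)*((b:ℂ)*((b:ℂ)-1)/2))*(b:ℂ)) := by
    apply mul_left_cancel₀ hc
    linear_combination (b:ℂ) * e2 + (k:ℂ)*((r:ℂ)*((b:ℂ)*((b:ℂ)-1)/2))^2 * hcd
  have hA : eval 1 (derivative P) = ((b:ℂ)-1)*((k:ℂ)*(r:ℂ)-1)/2 := by
    apply mul_right_cancel₀ hb0
    linear_combination c1
  have hb2 : (b:ℂ)*(b:ℂ) ≠ 0 := mul_ne_zero hb0 hb0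
  rw [hA] at c2
  have hB : eval 1 (derivative (derivative P))
      = ((k:ℂ)*(((k:ℂ)-1)*((r:ℂ)*((b:ℂ)*((b:ℂ)-1)/2))^2
        + ((r:ℂ)^2*((b:ℂ)*((b:ℂ)-1)*(2*(b:ℂ)-1)/6) - (r:ℂ)*((b:ℂ)*((b:ℂ)-1)/2))*(b:ℂ))
        - (2*(((b:ℂ)-1)*((k:ℂ)*(r:ℂ)-1)/2)*((b:ℂ)*((b:ℂ)-1)/2)
          + ((b:ℂ)*((b:ℂ)-1)*(2*(b:ℂ)-1)/6 - (b:ℂ)*((b:ℂ)-1)/2))*(b:ℂ)) / ((b:ℂ)*(b:ℂ)) := by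
    rw [eq_div_iff hb2]
    linear_combination c2
  have hN : ((((b-1)*(k*r-1)/2 : ℕ)):ℂ) = ((b:ℂ)-1)*((k:ℂ)*(r:ℂ)-1)/2 := by
    rw [Nat.cast_div heven (by norm_num)]
    rw [Nat.cast_mul, Nat.cast_sub (by omega), Nat.cast_sub (by nlinarith), Nat.cast_mul]
    norm_num
  rw [iterDeriv2, hN, hP0, hA, hB]
  field_simp
  ring

lemma Xpow_sub_one_ne (r : ℕ) (hr : 1 ≤ r) : ((X:Polynomial ℂ)^r - 1) ≠ 0 := by
  intro h
  have := congrArg (eval 0) h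
  simp [zero_pow (by omega : r ≠ 0)] at this

lemma main_case (b k r : ℕ) (hb : 2 ≤ b) (hk : 1 ≤ k) (hr : 1 ≤ r)
    (heven : 2 ∣ (b-1)*(k*r-1)) (P : Polynomial ℂ)
    (hP : C ((b:ℂ)^(k-1)) * (P * ((X^r - 1)^k * (X^b - 1))) = (X^(r*b) - 1)^k * (X - 1)) :
    iteratedDeriv 2 (fun t : ℂ => P.eval t / t ^ ((b-1)*(k*r-1)/2)) 1
      = (1/12 : ℂ) * ((b:ℂ)^2 - 1) * ((k:ℂ)*(r:ℂ)^2 - 1) := by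
  apply helper b k r hb hk hr heven
  have hM : ((X:Polynomial ℂ)^r - 1)^k * (X - 1) ≠ 0 :=
    mul_ne_zero (pow_ne_zero _ (Xpow_sub_one_ne r hr)) (by simpa using Xpow_sub_one_ne 1 le_rfl)
  apply mul_right_cancel₀ hM
  have g1 : (∑ i ∈ Finset.range b, (X:Polynomial ℂ)^i) * (X - 1) = X^b - 1 := geom_sum_mul X b
  have g2 : (∑ i ∈ Finset.range b, (X:Polynomial ℂ)^(r*i)) * (X^r - 1) = X^(r*b) - 1 := by
    have h := geom_sum_mul ((X:Polynomial ℂ)^r) b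
    simpa [← pow_mul] using h
  calc C ((b:ℂ)^(k-1)) * (P * ∑ i ∈ Finset.range b, X^i) * ((X^r - 1)^k * (X - 1))
      = C ((b:ℂ)^(k-1)) * (P * ((X^r - 1)^k
          * ((∑ i ∈ Finset.range b, (X:Polynomial ℂ)^i) * (X - 1)))) := by ring
    _ = C ((b:ℂ)^(k-1)) * (P * ((X^r - 1)^k * (X^b - 1))) := by rw [g1]
    _ = (X^(r*b) - 1)^k * (X - 1) := hP
    _ = ((∑ i ∈ Finset.range b, (X:Polynomial ℂ)^(r*i)) * (X^r - 1))^k * (X - 1) := by rw [g2]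
    _ = (∑ i ∈ Finset.range b, X^(r*i))^k * ((X^r - 1)^k * (X - 1)) := by rw [mul_pow]; ring

lemma even_aux (p a : ℕ) (hp : 2 ≤ p) (ha : 2 ≤ a) (hcop : Nat.Coprime p a) :
    2 ∣ (a-1)*(p-1) := by
  have hnot : ¬ (2 ∣ p ∧ 2 ∣ a) := by
    rintro ⟨x, y⟩
    have := Nat.dvd_gcd x y
    rw [hcop] at this
    omega
  have h2 : 2 ∣ (a-1) ∨ 2 ∣ (p-1) := by omega
  rcases h2 with h | h
  · exact h.mul_right _
  · exact h.mul_left _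

/-- Second derivative at 1 of the normalized Alexander polynomial
`Δ♮(t) = (1/(a^{h-1} p^{h̃-1})) t^{-(a-1)(p-1)/2} (t^{pa/(hh̃)}-1)^{hh̃}(t-1) /
((t^{p/h}-1)^h (t^{a/h̃}-1)^{h̃})` of the link of `x^p + y^a + z^m`.
Here `P` is the polynomial `t^{(a-1)(p-1)/2} Δ♮(t)`, characterized by the stated
polynomial identity, and `(Δ♮)''(1) = (1/12)(a²/h̃ − 1)(p²/h − 1)`. -/
theorem brieskorn_normalized_alexander_second_deriv (p a m h ht : ℕ)
    (hp : 2 ≤ p) (ha : 2 ≤ a) (hcop : Nat.Coprime p a) (hm : 0 < m)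
    (hh : h = Nat.gcd p m) (hht : ht = Nat.gcd a m)
    (hone : (h - 1) * (ht - 1) = 0)
    (P : Polynomial ℂ)
    (hP : C ((a : ℂ) ^ (h - 1) * (p : ℂ) ^ (ht - 1)) *
        (P * ((X ^ (p / h) - 1) ^ h * (X ^ (a / ht) - 1) ^ ht))
        = (X ^ (p * a / (h * ht)) - 1) ^ (h * ht) * (X - 1)) :
    iteratedDeriv 2 (fun t : ℂ => P.eval t / t ^ ((a - 1) * (p - 1) / 2)) 1
      = (1 / 12 : ℂ) * ((a : ℂ) ^ 2 / (ht : ℂ) - 1) * ((p : ℂ) ^ 2 / (h : ℂ) - 1) := by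
  have hhpos : 0 < h := hh ▸ Nat.gcd_pos_of_pos_left m (by omega)
  have htpos : 0 < ht := hht ▸ Nat.gcd_pos_of_pos_left m (by omega)
  rcases Nat.mul_eq_zero.mp hone with h1 | h1
  · -- h = 1 case
    have heq : h = 1 := by omega
    subst heq
    have hdvd : ht ∣ a := hht ▸ Nat.gcd_dvd_left a m
    set r := a / ht with hrdef
    have hra : ht * r = a := Nat.mul_div_cancel' hdvd
    have hr1 : 1 ≤ r := by
      rcases Nat.eq_zero_or_pos r with h0 | h0
      · rw [h0, Nat.mul_zero] at hra; omega
      · exact h0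
    have hexp : p * a / (1 * ht) = r * p := by
      rw [one_mul, show p * a = ht * (r * p) by rw [← hra]; ring,
        Nat.mul_div_cancel_left _ htpos]
    rw [hexp] at hP
    simp only [Nat.sub_self, pow_zero, one_mul, Nat.div_one, pow_one] at hP
    have hP' : C ((p:ℂ)^(ht-1)) * (P * ((X^r - 1)^ht * (X^p - 1)))
        = (X^(r*p) - 1)^ht * (X - 1) := by
      linear_combination hP
    have heven : 2 ∣ (p-1)*(ht*r-1) := by
      rw [hra, Nat.mul_comm]
      exact even_aux p a hp ha hcop
    have key := main_case p ht r hp htpos hr1 heven P hP'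
    rw [show (p-1)*(ht*r-1)/2 = (a-1)*(p-1)/2 by rw [hra, Nat.mul_comm]] at key
    rw [key]
    have hac : (a:ℂ) = (ht:ℂ) * (r:ℂ) := by exact_mod_cast hra.symm
    have htc : (ht:ℂ) ≠ 0 := Nat.cast_ne_zero.mpr (by omega)
    rw [hac]
    push_cast
    field_simp
  · -- ht = 1 case
    have heq : ht = 1 := by omega
    subst heq
    have hdvd : h ∣ p := hh ▸ Nat.gcd_dvd_left p m
    set r := p / h with hrdef
    have hra : h * r = p := Nat.mul_div_cancel' hdvd
    have hr1 : 1 ≤ r := by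
      rcases Nat.eq_zero_or_pos r with h0 | h0
      · rw [h0, Nat.mul_zero] at hra; omega
      · exact h0
    have hexp : p * a / (h * 1) = r * a := by
      rw [mul_one, show p * a = h * (r * a) by rw [← hra]; ring,
        Nat.mul_div_cancel_left _ hhpos]
    rw [hexp] at hP
    simp only [Nat.sub_self, pow_zero, mul_one, Nat.div_one, pow_one] at hP
    have hP' : C ((a:ℂ)^(h-1)) * (P * ((X^r - 1)^h * (X^a - 1)))
        = (X^(r*a) - 1)^h * (X - 1) := by
      linear_combination hP
    have heven : 2 ∣ (a-1)*(h*r-1) := by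
      rw [hra]
      exact even_aux p a hp ha hcop
    have key := main_case a h r ha hhpos hr1 heven P hP'
    rw [show (a-1)*(h*r-1)/2 = (a-1)*(p-1)/2 by rw [hra]] at key
    rw [key]
    have hac : (p:ℂ) = (h:ℂ) * (r:ℂ) := by exact_mod_cast hra.symm
    have htc : (h:ℂ) ≠ 0 := Nat.cast_ne_zero.mpr (by omega)
    rw [hac]
    push_cast
    field_simp
end

section
/- Suppose Laurent polynomials satisfy Δ_l♮(t) = B_l♮(t) · [Δ_{l-1}♮(t^{p_l/h_l})]^{h_l} where each factor takes value 1 at t=1 and has vanishing first derivative at t=1, and (B_l♮)''(1) = (1/12)(a_l²/h̃_l − 1)(p_l²/h_l − 1). Then (Δ_l♮)''(1) = (1/12)(a_l²/h̃_l − 1)(p_l²/h_l − 1) + (p_l²/h_l)·(Δ_{l-1}♮)''(1), and consequently (Δ_s♮)''(1) = Σ_{k=1}^s (1/12)(a_k²/h̃_k − 1)(p_k²/h_k − 1) · (p_{k+1}⋯p_s)²/(h_{k+1}⋯h_s). -/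
lemma key_second_deriv (F G : ℂ → ℂ) (q h : ℕ) (hF : ContDiff ℂ ⊤ F) (hG : ContDiff ℂ ⊤ G)
    (hF1 : F 1 = 1) (hG1 : G 1 = 1) (hF' : deriv F 1 = 0) (hG' : deriv G 1 = 0) :
    iteratedDeriv 2 (fun t => F t * (G (t ^ q)) ^ h) 1
      = iteratedDeriv 2 F 1 + (h : ℂ) * (q : ℂ) ^ 2 * iteratedDeriv 2 G 1 := by
  have hFd : Differentiable ℂ F := hF.differentiable (by simp)
  have hGd : Differentiable ℂ G := hG.differentiable (by simp)
  have hF2 : Differentiable ℂ (deriv F) :=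
    ((hF.of_le le_top : ContDiff ℂ (⊤ : ℕ∞) F).iterate_deriv 1).differentiable (by simp)
  have hG2 : Differentiable ℂ (deriv G) :=
    ((hG.of_le le_top : ContDiff ℂ (⊤ : ℕ∞) G).iterate_deriv 1).differentiable (by simp)
  have hφ : ∀ t : ℂ, HasDerivAt (fun t => G (t ^ q)) (deriv G (t ^ q) * ((q : ℂ) * t ^ (q - 1))) t :=
    fun t => (hGd (t ^ q)).hasDerivAt.comp t (hasDerivAt_pow q t)
  have hψ : ∀ t : ℂ, HasDerivAt (fun t => deriv G (t ^ q))
      (deriv (deriv G) (t ^ q) * ((q : ℂ) * t ^ (q - 1))) t :=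
    fun t => (hG2 (t ^ q)).hasDerivAt.comp t (hasDerivAt_pow q t)
  have hH : ∀ t : ℂ, HasDerivAt (fun t => F t * (G (t ^ q)) ^ h)
      (deriv F t * (G (t ^ q)) ^ h
        + F t * ((h : ℂ) * (G (t ^ q)) ^ (h - 1) * (deriv G (t ^ q) * ((q : ℂ) * t ^ (q - 1))))) t :=
    fun t => (hFd t).hasDerivAt.mul ((hφ t).pow h)
  have hderivH : deriv (fun t => F t * (G (t ^ q)) ^ h)
      = fun t => deriv F t * (G (t ^ q)) ^ h
        + F t * ((h : ℂ) * (G (t ^ q)) ^ (h - 1) * (deriv G (t ^ q) * ((q : ℂ) * t ^ (q - 1)))) :=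
    funext fun t => (hH t).deriv
  -- second derivative at 1
  have hA : HasDerivAt (fun t : ℂ => (h : ℂ) * (G (t ^ q)) ^ (h - 1))
      ((h : ℂ) * (((h - 1 : ℕ) : ℂ) * (G ((1:ℂ) ^ q)) ^ (h - 1 - 1)
        * (deriv G ((1:ℂ) ^ q) * ((q : ℂ) * (1:ℂ) ^ (q - 1))))) 1 :=
    ((hφ 1).pow (h - 1)).const_mul _
  have hB : HasDerivAt (fun t : ℂ => deriv G (t ^ q) * ((q : ℂ) * t ^ (q - 1)))
      (deriv (deriv G) ((1:ℂ) ^ q) * ((q : ℂ) * (1:ℂ) ^ (q - 1)) * ((q : ℂ) * (1:ℂ) ^ (q - 1))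
        + deriv G ((1:ℂ) ^ q) * ((q : ℂ) * (((q - 1 : ℕ) : ℂ) * (1:ℂ) ^ (q - 1 - 1)))) 1 :=
    (hψ 1).mul ((hasDerivAt_pow (q - 1) (1:ℂ)).const_mul _)
  have hT1 : HasDerivAt (fun t : ℂ => deriv F t * (G (t ^ q)) ^ h)
      (deriv (deriv F) 1 * (G ((1:ℂ) ^ q)) ^ h
        + deriv F 1 * ((h : ℂ) * (G ((1:ℂ) ^ q)) ^ (h - 1)
          * (deriv G ((1:ℂ) ^ q) * ((q : ℂ) * (1:ℂ) ^ (q - 1))))) 1 :=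
    (hF2 1).hasDerivAt.mul ((hφ 1).pow h)
  have hT2 := ((hFd 1).hasDerivAt.mul (hA.mul hB))
  have hE := (hT1.add hT2).deriv
  have h2 : ∀ f : ℂ → ℂ, iteratedDeriv 2 f = deriv (deriv f) := fun f => by
    rw [show (2:ℕ) = 1 + 1 from rfl, iteratedDeriv_succ, iteratedDeriv_succ, iteratedDeriv_zero]
  rw [h2, h2, h2, hderivH]
  rw [show (fun t : ℂ => deriv F t * (G (t ^ q)) ^ h
        + F t * ((h : ℂ) * (G (t ^ q)) ^ (h - 1) * (deriv G (t ^ q) * ((q : ℂ) * t ^ (q - 1)))))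
      = (fun t : ℂ => deriv F t * (G (t ^ q)) ^ h)
        + (fun t : ℂ => F t * (((h : ℂ) * (G (t ^ q)) ^ (h - 1))
            * (deriv G (t ^ q) * ((q : ℂ) * t ^ (q - 1))))) from rfl] at *
  refine hE.trans ?_
  simp only [one_pow, hF1, hG1, hF', hG']
  ring

/-- Inductive formula for the second derivative at 1 of the normalized Alexander
polynomials `Δ_l♮(t) = B_l♮(t) · [Δ_{l-1}♮(t^{p_l/h_l})]^{h_l}`, and the resulting
closed formula for `(Δ_s♮)''(1)`. -/
theorem normalized_alexander_second_deriv_recursion (s : ℕ) (p a h ht : ℕ → ℕ)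
    (hpos : ∀ k, 0 < p k ∧ 0 < a k ∧ 0 < h k ∧ 0 < ht k)
    (hdvd : ∀ k, h k ∣ p k ∧ ht k ∣ a k)
    (D B : ℕ → ℂ → ℂ)
    (hD0 : ∀ t, D 0 t = 1)
    (hsmooth : ∀ l, ContDiff ℂ ⊤ (D l) ∧ ContDiff ℂ ⊤ (B l))
    (hrec : ∀ l, 1 ≤ l → l ≤ s → ∀ t, D l t = B l t * (D (l - 1) (t ^ (p l / h l))) ^ (h l))
    (hval : ∀ l, 1 ≤ l → l ≤ s →
      D l 1 = 1 ∧ B l 1 = 1 ∧ deriv (D l) 1 = 0 ∧ deriv (B l) 1 = 0)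
    (hB2 : ∀ l, 1 ≤ l → l ≤ s →
      iteratedDeriv 2 (B l) 1
        = (1 / 12 : ℂ) * ((a l : ℂ) ^ 2 / (ht l : ℂ) - 1) * ((p l : ℂ) ^ 2 / (h l : ℂ) - 1)) :
    (∀ l, 1 ≤ l → l ≤ s →
      iteratedDeriv 2 (D l) 1
        = (1 / 12 : ℂ) * ((a l : ℂ) ^ 2 / (ht l : ℂ) - 1) * ((p l : ℂ) ^ 2 / (h l : ℂ) - 1)
          + ((p l : ℂ) ^ 2 / (h l : ℂ)) * iteratedDeriv 2 (D (l - 1)) 1) ∧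
    iteratedDeriv 2 (D s) 1
      = ∑ k ∈ Finset.Icc 1 s,
          (1 / 12 : ℂ) * ((a k : ℂ) ^ 2 / (ht k : ℂ) - 1) * ((p k : ℂ) ^ 2 / (h k : ℂ) - 1)
            * (∏ j ∈ Finset.Icc (k + 1) s, (p j : ℂ)) ^ 2
            / (∏ j ∈ Finset.Icc (k + 1) s, (h j : ℂ)) := by
  have hD0fun : D 0 = fun _ => (1 : ℂ) := funext hD0
  have hD0deriv : deriv (D 0) 1 = 0 := by rw [hD0fun]; simp
  have hD0iter : iteratedDeriv 2 (D 0) 1 = 0 := by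
    rw [hD0fun, show (2:ℕ) = 1 + 1 from rfl, iteratedDeriv_succ, iteratedDeriv_succ,
      iteratedDeriv_zero]
    simp
  have main : ∀ l, 1 ≤ l → l ≤ s →
      iteratedDeriv 2 (D l) 1
        = (1 / 12 : ℂ) * ((a l : ℂ) ^ 2 / (ht l : ℂ) - 1) * ((p l : ℂ) ^ 2 / (h l : ℂ) - 1)
          + ((p l : ℂ) ^ 2 / (h l : ℂ)) * iteratedDeriv 2 (D (l - 1)) 1 := by
    intro l hl1 hls
    have hDeq : D l = fun t => B l t * (D (l - 1) (t ^ (p l / h l))) ^ (h l) :=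
      funext (hrec l hl1 hls)
    have hprev1 : D (l - 1) 1 = 1 := by
      rcases Nat.eq_or_lt_of_le hl1 with h1 | h1
      · rw [← h1]; simp [hD0]
      · exact (hval (l - 1) (by omega) (by omega)).1
    have hprev' : deriv (D (l - 1)) 1 = 0 := by
      rcases Nat.eq_or_lt_of_le hl1 with h1 | h1
      · rw [← h1]; simpa using hD0deriv
      · exact (hval (l - 1) (by omega) (by omega)).2.2.1
    obtain ⟨_, hB1, _, hB'⟩ := hval l hl1 hls
    have hk := key_second_deriv (B l) (D (l - 1)) (p l / h l) (h l)
      (hsmooth l).2 (hsmooth (l - 1)).1 hB1 hprev1 hB' hprev'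
    rw [hDeq, hk, hB2 l hl1 hls]
    have hpq : h l * (p l / h l) = p l := Nat.mul_div_cancel' (hdvd l).1
    have hh0 : ((h l : ℂ)) ≠ 0 := Nat.cast_ne_zero.mpr (hpos l).2.2.1.ne'
    have hcast : ((p l : ℂ)) = (h l : ℂ) * ((p l / h l : ℕ) : ℂ) := by
      exact_mod_cast congrArg (Nat.cast (R := ℂ)) hpq.symm
    rw [hcast]
    field_simp
  refine ⟨main, ?_⟩
  have closed : ∀ n, n ≤ s →
      iteratedDeriv 2 (D n) 1
        = ∑ k ∈ Finset.Icc 1 n,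
            (1 / 12 : ℂ) * ((a k : ℂ) ^ 2 / (ht k : ℂ) - 1) * ((p k : ℂ) ^ 2 / (h k : ℂ) - 1)
              * (∏ j ∈ Finset.Icc (k + 1) n, (p j : ℂ)) ^ 2
              / (∏ j ∈ Finset.Icc (k + 1) n, (h j : ℂ)) := by
    intro n
    induction n with
    | zero => intro _; simp [hD0iter]
    | succ n ih =>
      intro hns
      have hn : n ≤ s := le_trans (Nat.le_succ n) hns
      rw [main (n + 1) (by omega) hns]
      simp only [Nat.add_sub_cancel]
      rw [ih hn, Finset.sum_Icc_succ_top (by omega : 1 ≤ n + 1)]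
      have hlast : Finset.Icc (n + 1 + 1) (n + 1) = ∅ := Finset.Icc_eq_empty (by omega)
      rw [hlast]
      simp only [Finset.prod_empty, one_pow, mul_one, div_one]
      rw [Finset.mul_sum]
      rw [add_comm]
      congr 1
      apply Finset.sum_congr rfl
      intro k hk
      have hk' : k + 1 ≤ n + 1 := by
        have := (Finset.mem_Icc.mp hk).2; omega
      rw [Finset.prod_Icc_succ_top hk', Finset.prod_Icc_succ_top hk']
      have hh0 : ((h (n + 1) : ℂ)) ≠ 0 := Nat.cast_ne_zero.mpr (hpos (n + 1)).2.2.1.ne'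
      have hH0 : (∏ j ∈ Finset.Icc (k + 1) n, (h j : ℂ)) ≠ 0 :=
        Finset.prod_ne_zero_iff.mpr fun j _ => Nat.cast_ne_zero.mpr (hpos j).2.2.1.ne'
      field_simp
  exact closed s le_rfl
end

section
/- For any positive integers with h_k | p_k, h̃_k | a_k, (h_k−1)(h̃_k−1)=0 for all k, defining S_l = Σ_{k=1}^l (1/12)(a_k²/h̃_k −1)(p_k²/h_k −1)·(p_{k+1}⋯p_l)²/(h_{k+1}⋯h_l), T_l = Σ_{k=1}^l (1/12)(a_k²−1)(p_k²−1)·(p_{k+1}⋯p_l)², and A_k = (h_k(h_k−1)/a_k²)·[(a_k²−1)/12 + T_{k-1}] + (h̃_k(h̃_k−1)/p_k²)·(p_k²−1)/12, one has the identity S_l = T_l − Σ_{k=1}^l (a_k² p_k²/(h̃_k² h_k²)) · (p_{k+1}²⋯p_l²/(h_{k+1}⋯h_l)) · A_k for every l ≥ 1. -/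
open Finset

/-- `T_l = Σ_{k=1}^l (1/12)(a_k²−1)(p_k²−1)(p_{k+1}⋯p_l)²`,
the second derivative at 1 of `Δ(f_{(l)})♮`. -/
def Tq (p a : ℕ → ℕ) (l : ℕ) : ℚ :=
  ∑ k ∈ Icc 1 l, (1 / 12 : ℚ) * ((a k : ℚ) ^ 2 - 1) * ((p k : ℚ) ^ 2 - 1)
    * (∏ j ∈ Icc (k + 1) l, (p j : ℚ)) ^ 2

/-- `S_l = Σ_{k=1}^l (1/12)(a_k²/h̃_k−1)(p_k²/h_k−1)(p_{k+1}⋯p_l)²/(h_{k+1}⋯h_l)`,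
the second derivative at 1 of `Δ♮_{M_{(l)}}`. -/
def Sq (p a h ht : ℕ → ℕ) (l : ℕ) : ℚ :=
  ∑ k ∈ Icc 1 l, (1 / 12 : ℚ) * ((a k : ℚ) ^ 2 / (ht k : ℚ) - 1)
    * ((p k : ℚ) ^ 2 / (h k : ℚ) - 1)
    * (∏ j ∈ Icc (k + 1) l, (p j : ℚ)) ^ 2 / (∏ j ∈ Icc (k + 1) l, (h j : ℚ))

/-- The correction term `A_k`. -/
def Aq (p a h ht : ℕ → ℕ) (k : ℕ) : ℚ :=
  ((h k : ℚ) * ((h k : ℚ) - 1) / (a k : ℚ) ^ 2)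
      * (((a k : ℚ) ^ 2 - 1) / 12 + Tq p a (k - 1))
    + ((ht k : ℚ) * ((ht k : ℚ) - 1) / (p k : ℚ) ^ 2) * (((p k : ℚ) ^ 2 - 1) / 12)

lemma div_step (s P H pl hl : ℚ) (hH : H ≠ 0) (hhl : hl ≠ 0) :
    s * (P * pl) ^ 2 / (H * hl) = s * P ^ 2 / H * (pl ^ 2 / hl) := by
  field_simp

lemma div_step' (c P H A pl hl : ℚ) (hH : H ≠ 0) (hhl : hl ≠ 0) :
    c * ((P * pl) ^ 2 / (H * hl)) * A = c * (P ^ 2 / H) * A * (pl ^ 2 / hl) := by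
  field_simp

lemma Tq_succ (p a : ℕ → ℕ) (n : ℕ) :
    Tq p a (n + 1) = Tq p a n * (p (n + 1) : ℚ) ^ 2
      + (1 / 12 : ℚ) * ((a (n + 1) : ℚ) ^ 2 - 1) * ((p (n + 1) : ℚ) ^ 2 - 1) := by
  unfold Tq
  rw [Finset.sum_Icc_succ_top (by omega : 1 ≤ n + 1), Finset.sum_mul]
  congr 1
  · apply Finset.sum_congr rfl
    intro k hk
    have hk' : k ≤ n := (Finset.mem_Icc.mp hk).2
    rw [Finset.prod_Icc_succ_top (by omega : k + 1 ≤ n + 1)]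
    ring
  · rw [Icc_eq_empty (by omega)]
    simp

lemma Sq_succ (p a h ht : ℕ → ℕ) (hh : ∀ k, (h k : ℚ) ≠ 0) (n : ℕ) :
    Sq p a h ht (n + 1) = Sq p a h ht n * ((p (n + 1) : ℚ) ^ 2 / (h (n + 1) : ℚ))
      + (1 / 12 : ℚ) * ((a (n + 1) : ℚ) ^ 2 / (ht (n + 1) : ℚ) - 1)
        * ((p (n + 1) : ℚ) ^ 2 / (h (n + 1) : ℚ) - 1) := by
  unfold Sq
  rw [Finset.sum_Icc_succ_top (by omega : 1 ≤ n + 1), Finset.sum_mul]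
  congr 1
  · apply Finset.sum_congr rfl
    intro k hk
    have hk' : k ≤ n := (Finset.mem_Icc.mp hk).2
    rw [Finset.prod_Icc_succ_top (by omega : k + 1 ≤ n + 1),
      Finset.prod_Icc_succ_top (by omega : k + 1 ≤ n + 1)]
    exact div_step _ _ _ _ _ (Finset.prod_ne_zero_iff.mpr fun j _ => hh j) (hh (n + 1))
  · rw [Icc_eq_empty (by omega)]
    simp

lemma Csum_succ (p a h ht : ℕ → ℕ) (hh : ∀ k, (h k : ℚ) ≠ 0) (n : ℕ) :
    (∑ k ∈ Icc 1 (n + 1),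
        ((a k : ℚ) ^ 2 * (p k : ℚ) ^ 2 / ((ht k : ℚ) ^ 2 * (h k : ℚ) ^ 2))
          * ((∏ j ∈ Icc (k + 1) (n + 1), (p j : ℚ)) ^ 2
            / (∏ j ∈ Icc (k + 1) (n + 1), (h j : ℚ)))
          * Aq p a h ht k)
      = (∑ k ∈ Icc 1 n,
          ((a k : ℚ) ^ 2 * (p k : ℚ) ^ 2 / ((ht k : ℚ) ^ 2 * (h k : ℚ) ^ 2))
            * ((∏ j ∈ Icc (k + 1) n, (p j : ℚ)) ^ 2
              / (∏ j ∈ Icc (k + 1) n, (h j : ℚ)))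
            * Aq p a h ht k) * ((p (n + 1) : ℚ) ^ 2 / (h (n + 1) : ℚ))
        + ((a (n + 1) : ℚ) ^ 2 * (p (n + 1) : ℚ) ^ 2
            / ((ht (n + 1) : ℚ) ^ 2 * (h (n + 1) : ℚ) ^ 2)) * Aq p a h ht (n + 1) := by
  rw [Finset.sum_Icc_succ_top (by omega : 1 ≤ n + 1), Finset.sum_mul]
  congr 1
  · apply Finset.sum_congr rfl
    intro k hk
    have hk' : k ≤ n := (Finset.mem_Icc.mp hk).2
    rw [Finset.prod_Icc_succ_top (by omega : k + 1 ≤ n + 1),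
      Finset.prod_Icc_succ_top (by omega : k + 1 ≤ n + 1)]
    exact div_step' _ _ _ _ _ _ (Finset.prod_ne_zero_iff.mpr fun j _ => hh j) (hh (n + 1))
  · rw [Icc_eq_empty (by omega)]
    simp

lemma final_step (al pl hl htl t X : ℚ) (hal : al ≠ 0) (hpl : pl ≠ 0)
    (hhl : hl ≠ 0) (hhtl : htl ≠ 0) (hc : hl = 1 ∨ htl = 1) :
    (t - X) * (pl ^ 2 / hl)
        + 1 / 12 * (al ^ 2 / htl - 1) * (pl ^ 2 / hl - 1)
      = t * pl ^ 2 + 1 / 12 * (al ^ 2 - 1) * (pl ^ 2 - 1)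
        - (X * (pl ^ 2 / hl)
          + al ^ 2 * pl ^ 2 / (htl ^ 2 * hl ^ 2)
            * (hl * (hl - 1) / al ^ 2 * ((al ^ 2 - 1) / 12 + t)
              + htl * (htl - 1) / pl ^ 2 * ((pl ^ 2 - 1) / 12))) := by
  rcases hc with hc | hc <;> subst hc <;> field_simp <;> ring

/-- Identity 6.2(k): `S_l = T_l − Σ_{k=1}^l (a_k²p_k²/(h̃_k²h_k²))·
(p_{k+1}²⋯p_l²/(h_{k+1}⋯h_l))·A_k`. -/
theorem S_eq_T_sub_correction (p a h ht : ℕ → ℕ)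
    (hp : ∀ k, 0 < p k) (ha : ∀ k, 0 < a k) (hh : ∀ k, 0 < h k) (hht : ∀ k, 0 < ht k)
    (hdvd : ∀ k, h k ∣ p k) (hdvd' : ∀ k, ht k ∣ a k)
    (hone : ∀ k, (h k - 1) * (ht k - 1) = 0) :
    ∀ l : ℕ, 1 ≤ l →
      Sq p a h ht l
        = Tq p a l - ∑ k ∈ Icc 1 l,
            ((a k : ℚ) ^ 2 * (p k : ℚ) ^ 2 / ((ht k : ℚ) ^ 2 * (h k : ℚ) ^ 2))
              * ((∏ j ∈ Icc (k + 1) l, (p j : ℚ)) ^ 2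
                / (∏ j ∈ Icc (k + 1) l, (h j : ℚ)))
              * Aq p a h ht k := by
  have hpQ : ∀ k, (p k : ℚ) ≠ 0 := fun k => Nat.cast_ne_zero.mpr (hp k).ne'
  have haQ : ∀ k, (a k : ℚ) ≠ 0 := fun k => Nat.cast_ne_zero.mpr (ha k).ne'
  have hhQ : ∀ k, (h k : ℚ) ≠ 0 := fun k => Nat.cast_ne_zero.mpr (hh k).ne'
  have hhtQ : ∀ k, (ht k : ℚ) ≠ 0 := fun k => Nat.cast_ne_zero.mpr (hht k).ne'
  have key : ∀ l : ℕ,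
      Sq p a h ht l
        = Tq p a l - ∑ k ∈ Icc 1 l,
            ((a k : ℚ) ^ 2 * (p k : ℚ) ^ 2 / ((ht k : ℚ) ^ 2 * (h k : ℚ) ^ 2))
              * ((∏ j ∈ Icc (k + 1) l, (p j : ℚ)) ^ 2
                / (∏ j ∈ Icc (k + 1) l, (h j : ℚ)))
              * Aq p a h ht k := by
    intro l
    induction l with
    | zero => simp [Sq, Tq]
    | succ n ih =>
      have hA : Aq p a h ht (n + 1)
          = ((h (n + 1) : ℚ) * ((h (n + 1) : ℚ) - 1) / (a (n + 1) : ℚ) ^ 2)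
              * (((a (n + 1) : ℚ) ^ 2 - 1) / 12 + Tq p a n)
            + ((ht (n + 1) : ℚ) * ((ht (n + 1) : ℚ) - 1) / (p (n + 1) : ℚ) ^ 2)
              * (((p (n + 1) : ℚ) ^ 2 - 1) / 12) := by
        unfold Aq; norm_num
      have hcase : (h (n + 1) : ℚ) = 1 ∨ (ht (n + 1) : ℚ) = 1 := by
        have h0 := hone (n + 1)
        have h1 := hh (n + 1); have h2 := hht (n + 1)
        rcases Nat.mul_eq_zero.mp h0 with h' | h'
        · left; have : h (n + 1) = 1 := by omega
          rw [this]; norm_num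
        · right; have : ht (n + 1) = 1 := by omega
          rw [this]; norm_num
      rw [Sq_succ p a h ht hhQ n, Tq_succ p a n, Csum_succ p a h ht hhQ n, ih, hA]
      exact final_step _ _ _ _ _ _ (haQ (n + 1)) (hpQ (n + 1)) (hhQ (n + 1))
        (hhtQ (n + 1)) hcase
  intro l _
  exact key l
end
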